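/- arXiv:1311.6024 — 7 statements merged into one kernel-verified Lean document; each statement's English description precedes it below -/
import Mathlib

section
/- Let R > 0 and α ≥ 0, and let P_1, …, P_k be rooted paths with total regret Σ_{i=1}^k c^reg(P_i) ≤ α·k·R. Then there exist at most (α+1)·k rooted paths, each of regret at most R, whose union covers every node covered by some P_i. -/
/-- Total cost of traversing the list of nodes in order. -/
def pathCost {α : Type*} (c : α → α → ℝ) : List α → ℝ
  | [] => 0
  | [_] => 0
  | a :: b :: l => c a b + pathCost c (b :: l)

/-- A rooted path: a list of distinct nodes starting at the root `r`. -/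
def IsRootedPath {α : Type*} (r : α) (w : List α) : Prop :=
  w.head? = some r ∧ w.Nodup

/-- The regret of a rooted path: its cost minus the distance from `r` to its last node. -/
def pathRegret {α : Type*} (c : α → α → ℝ) (r : α) (w : List α) : ℝ :=
  pathCost c w - c r (w.getLastD r)

private lemma pathCost_append' {α : Type*} (c : α → α → ℝ) :
    ∀ (xs : List α) (y : α) (ys : List α),
      pathCost c (xs ++ y :: ys) = pathCost c (xs ++ [y]) + pathCost c (y :: ys)
  | [], y, ys => by simp [pathCost]
  | [a], y, ys => by simp [pathCost]
  | a :: b :: xs, y, ys => by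
      have h := pathCost_append' c (b :: xs) y ys
      simp only [List.cons_append] at h
      show c a b + pathCost c (b :: (xs ++ y :: ys))
        = c a b + pathCost c (b :: (xs ++ [y])) + pathCost c (y :: ys)
      rw [h]; ring

private lemma getLastD_append' {α : Type*} :
    ∀ (xs : List α) (y : α) (ys : List α) (d : α),
      (xs ++ y :: ys).getLastD d = (y :: ys).getLastD d
  | [], y, ys, d => rfl
  | a :: xs, y, ys, d => by
      rw [List.cons_append, List.getLastD_cons, getLastD_append' xs y ys a,
        List.getLastD_cons, List.getLastD_cons]

private lemma le_pathCost' {α : Type*} (c : α → α → ℝ)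
    (htri : ∀ u v w, c u v ≤ c u w + c w v) (hrefl : ∀ u, c u u = 0) :
    ∀ (l : List α) (u : α), c u (l.getLastD u) ≤ pathCost c (u :: l)
  | [], u => by simp [pathCost, hrefl]
  | v :: l, u => by
      have h := le_pathCost' c htri hrefl l v
      have h2 : c u ((v :: l).getLastD u) ≤ c u v + c v (l.getLastD v) := by
        rw [List.getLastD_cons]; exact htri _ _ _
      have : pathCost c (u :: v :: l) = c u v + pathCost c (v :: l) := rfl
      rw [this]; linarith

private lemma regret_nonneg' {α : Type*} (c : α → α → ℝ) (r : α)
    (htri : ∀ u v w, c u v ≤ c u w + c w v) (hrefl : ∀ u, c u u = 0) (l : List α) :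
    0 ≤ pathRegret c r (r :: l) := by
  have h := le_pathCost' c htri hrefl l r
  unfold pathRegret
  rw [List.getLastD_cons]
  linarith

private lemma split_lemma' {α : Type*} (c : α → α → ℝ) (r : α)
    (htri : ∀ u v w, c u v ≤ c u w + c w v) (hrefl : ∀ u, c u u = 0)
    (R : ℝ) (hR : 0 < R) :
    ∀ (N : ℕ) (l : List α), l.length ≤ N → (r :: l).Nodup →
      ∃ Qs : List (List α),
        (Qs.length : ℝ) ≤ pathRegret c r (r :: l) / R + 1 ∧
        (∀ q ∈ Qs, IsRootedPath r q ∧ pathRegret c r q ≤ R) ∧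
        (∀ v ∈ l, ∃ q ∈ Qs, v ∈ q.tail) := by
  intro N
  induction N with
  | zero =>
    intro l hl _
    have : l = [] := List.eq_nil_of_length_eq_zero (Nat.le_zero.mp hl)
    subst this
    refine ⟨[], ?_, by simp, by simp⟩
    have h0 : pathRegret c r [r] = 0 := by simp [pathRegret, pathCost, hrefl]
    rw [List.length_nil]
    rw [show (r :: ([] : List α)) = [r] from rfl, h0]
    norm_num
  | succ N IH =>
    intro l hl hnd
    have hρ0 : 0 ≤ pathRegret c r (r :: l) := regret_nonneg' c r htri hrefl l
    rcases eq_or_ne l [] with rfl | hnil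
    · refine ⟨[], ?_, by simp, by simp⟩
      simp only [List.length_nil, Nat.cast_zero]
      positivity
    by_cases hle : pathRegret c r (r :: l) ≤ R
    · refine ⟨[r :: l], ?_, ?_, ?_⟩
      · have : (0:ℝ) ≤ pathRegret c r (r :: l) / R := div_nonneg hρ0 hR.le
        simp only [List.length_cons, List.length_nil]
        push_cast; linarith
      · intro q hq
        simp only [List.mem_singleton] at hq
        subst hq
        exact ⟨⟨rfl, hnd⟩, hle⟩
      · intro v hv
        exact ⟨r :: l, List.mem_singleton.mpr rfl, hv⟩
    push_neg at hle
    set p : ℕ → Prop := fun m => pathRegret c r (r :: l.take m) ≤ R with hp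
    haveI : DecidablePred p := fun _ => Classical.dec _
    set m := Nat.findGreatest p l.length with hm
    have hlen1 : 1 ≤ l.length := List.length_pos_iff.mpr hnil
    have hp1 : p 1 := by
      obtain ⟨v, l', rfl⟩ : ∃ v l', l = v :: l' := by
        cases l with
        | nil => exact absurd rfl hnil
        | cons v l' => exact ⟨v, l', rfl⟩
      show pathRegret c r (r :: [v]) ≤ R
      simp [pathRegret, pathCost, hR.le]
    have hm1 : 1 ≤ m := Nat.le_findGreatest hlen1 hp1
    have hpm : p m := Nat.findGreatest_spec hlen1 hp1
    have hmle : m ≤ l.length := Nat.findGreatest_le _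
    have hmlt : m < l.length := by
      rcases lt_or_eq_of_le hmle with h | h
      · exact h
      · exfalso
        have := hpm
        rw [hp] at this
        simp only [h, List.take_length] at this
        exact absurd this (not_le.mpr hle)
    have hpm1 : ¬ p (m + 1) := Nat.findGreatest_is_greatest (Nat.lt_succ_self m) hmlt
    have hdrop : l.drop m = l[m] :: l.drop (m + 1) := List.drop_eq_getElem_cons hmlt
    have htk : l.take (m + 1) = l.take m ++ [l[m]] := by
      rw [List.take_succ, List.getElem?_eq_getElem hmlt]
      rfl
    have hsplit : l = l.take m ++ l[m] :: l.drop (m + 1) := by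
      rw [← hdrop, List.take_append_drop]
    -- key regret arithmetic
    have e1 : pathCost c (r :: l)
        = pathCost c ((r :: l.take m) ++ [l[m]]) + pathCost c (l[m] :: l.drop (m + 1)) := by
      conv_lhs => rw [hsplit]
      exact pathCost_append' c (r :: l.take m) l[m] (l.drop (m + 1))
    have e2 : l.getLastD r = (l[m] :: l.drop (m + 1)).getLastD r := by
      conv_lhs => rw [hsplit]
      exact getLastD_append' _ _ _ _
    have e3 : pathRegret c r (r :: l.take (m + 1))
        = pathCost c ((r :: l.take m) ++ [l[m]]) - c r l[m] := by
      unfold pathRegret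
      rw [htk]
      have hgl : (r :: (l.take m ++ [l[m]])).getLastD r = l[m] := by
        rw [List.getLastD_cons, getLastD_append' (l.take m) l[m] [] r]
        rfl
      rw [hgl]
      rfl
    have key : R < pathRegret c r (r :: l) - pathRegret c r (r :: l.drop m) := by
      have hkey1 : R < pathRegret c r (r :: l.take (m + 1)) := not_le.mp hpm1
      have hA : pathRegret c r (r :: l)
          = pathCost c ((r :: l.take m) ++ [l[m]]) + pathCost c (l[m] :: l.drop (m + 1))
            - c r ((l[m] :: l.drop (m + 1)).getLastD r) := by
        unfold pathRegret
        rw [List.getLastD_cons, e1, e2]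
      have hB : pathRegret c r (r :: l.drop m)
          = c r l[m] + pathCost c (l[m] :: l.drop (m + 1))
            - c r ((l[m] :: l.drop (m + 1)).getLastD r) := by
        unfold pathRegret
        rw [hdrop, List.getLastD_cons]
        rfl
      rw [e3] at hkey1
      rw [hA, hB]
      linarith
    -- recurse
    have hlen2 : (l.drop m).length ≤ N := by
      rw [List.length_drop]
      omega
    have hnd2 : (r :: l.drop m).Nodup :=
      List.Sublist.nodup (List.Sublist.cons₂ r (List.drop_sublist m l)) hnd
    obtain ⟨Qs₂, h2len, h2good, h2cov⟩ := IH (l.drop m) hlen2 hnd2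
    refine ⟨(r :: l.take m) :: Qs₂, ?_, ?_, ?_⟩
    · have hdiv : pathRegret c r (r :: l.drop m) / R ≤ pathRegret c r (r :: l) / R - 1 := by
        rw [div_le_iff₀ hR, sub_mul, div_mul_cancel₀ _ hR.ne', one_mul]
        linarith
      simp only [List.length_cons]
      push_cast
      linarith
    · intro q hq
      rcases List.mem_cons.mp hq with rfl | hq2
      · refine ⟨⟨rfl, ?_⟩, hpm⟩
        exact List.Sublist.nodup (List.Sublist.cons₂ r (List.take_sublist m l)) hnd
      · exact h2good q hq2
    · intro v hv
      conv at hv => rw [hsplit]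
      rcases List.mem_append.mp hv with h | h
      · exact ⟨r :: l.take m, List.mem_cons_self, h⟩
      · rw [← hdrop] at h
        obtain ⟨q, hq, hvq⟩ := h2cov v h
        exact ⟨q, List.mem_cons_of_mem _ hq, hvq⟩

/-- given rooted paths `P_1, …, P_k` with total regret at most `α·k·R` (with
`R > 0`, `α ≥ 0`), there exist at most `(α+1)·k` rooted paths, each of regret at most `R`,
whose union covers every node covered by some `P_i`. -/
theorem average_regret_to_max_regret {α : Type*} [Fintype α] (c : α → α → ℝ) (r : α)
    (hsymm : ∀ u v, c u v = c v u) (hnn : ∀ u v, 0 ≤ c u v)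
    (htri : ∀ u v w, c u v ≤ c u w + c w v) (hrefl : ∀ u, c u u = 0)
    (hpos : ∀ u v, u ≠ v → 0 < c u v)
    (R : ℝ) (hR : 0 < R) (a : ℝ) (ha : 0 ≤ a) (k : ℕ) (hk : 0 < k)
    (P : Fin k → List α) (hP : ∀ i, IsRootedPath r (P i))
    (hreg : ∑ i, pathRegret c r (P i) ≤ a * k * R) :
    ∃ (n : ℕ) (Q : Fin n → List α),
      (n : ℝ) ≤ (a + 1) * k ∧
      (∀ j, IsRootedPath r (Q j) ∧ pathRegret c r (Q j) ≤ R) ∧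
      (∀ (i : Fin k), ∀ v ∈ (P i).tail, ∃ j, v ∈ (Q j).tail) := by
  classical
  have hPi : ∀ i, P i = r :: (P i).tail := by
    intro i
    cases h : P i with
    | nil =>
      have h1 := (hP i).1
      rw [h] at h1
      simp at h1
    | cons x t =>
      have h1 := (hP i).1
      rw [h] at h1
      simp only [List.head?_cons, Option.some.injEq] at h1
      subst h1
      rfl
  have hnod : ∀ i, (r :: (P i).tail).Nodup := fun i => by
    rw [← hPi i]; exact (hP i).2
  have H : ∀ i, ∃ Qs : List (List α),
      (Qs.length : ℝ) ≤ pathRegret c r (r :: (P i).tail) / R + 1 ∧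
      (∀ q ∈ Qs, IsRootedPath r q ∧ pathRegret c r q ≤ R) ∧
      (∀ v ∈ (P i).tail, ∃ q ∈ Qs, v ∈ q.tail) :=
    fun i => split_lemma' c r htri hrefl R hR ((P i).tail.length) _ le_rfl (hnod i)
  choose Qf h1 h2 h3 using H
  set Qs : List (List α) := (List.ofFn Qf).flatten with hQs
  refine ⟨Qs.length, fun j => Qs.get j, ?_, ?_, ?_⟩
  · have hlen : Qs.length = ∑ i, (Qf i).length := by
      rw [hQs, List.length_flatten, List.map_ofFn, List.sum_ofFn]
      rfl
    rw [hlen]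
    push_cast
    have step1 : ∑ i, ((Qf i).length : ℝ)
        ≤ ∑ i, (pathRegret c r (r :: (P i).tail) / R + 1) :=
      Finset.sum_le_sum fun i _ => h1 i
    have step2 : ∑ i, (pathRegret c r (r :: (P i).tail) / R + 1)
        = (∑ i, pathRegret c r (P i)) / R + k := by
      rw [Finset.sum_add_distrib, ← Finset.sum_div]
      simp only [← hPi, Finset.sum_const, Finset.card_univ, Fintype.card_fin, nsmul_eq_mul,
        mul_one]
    have step3 : (∑ i, pathRegret c r (P i)) / R ≤ a * k :=
      (div_le_iff₀ hR).mpr hreg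
    calc (∑ i, ((Qf i).length : ℝ)) ≤ (∑ i, pathRegret c r (P i)) / R + k := by
          rw [← step2]; exact step1
      _ ≤ a * k + k := by linarith
      _ = (a + 1) * k := by ring
  · intro j
    have hmem : Qs.get j ∈ Qs := Qs.get_mem _
    obtain ⟨lq, hlq, hqlq⟩ := List.mem_flatten.mp hmem
    obtain ⟨i, rfl⟩ := Set.mem_range.mp (List.mem_ofFn.mp hlq)
    exact h2 i _ hqlq
  · intro i v hv
    obtain ⟨q, hq, hvq⟩ := h3 i v hv
    have hqmem : q ∈ Qs := List.mem_flatten.mpr ⟨Qf i, List.mem_ofFn.mpr ⟨i, rfl⟩, hq⟩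
    obtain ⟨j, hj⟩ := List.get_of_mem hqmem
    exact ⟨j, by show v ∈ (Qs.get j).tail; rw [hj]; exact hvq⟩
end

section
/- For any rooted path P, the total cost of the red edges of P is at most 3/2 times the regret of P: Σ_{e red on P} c_e ≤ (3/2)·c^reg(P). -/
/-- The `i`-th edge `(w_{i−1}, w_i)` of the path `w` (for `1 ≤ i < w.length`) is red if
there exist indices `j ≤ i−1` and `l ≥ i` with `D_{w_j} ≥ D_{w_l}`. -/
def redEdge {α : Type*} (c : α → α → ℝ) (r : α) (w : List α) (i : ℕ) : Prop :=
  ∃ j l, j < i ∧ i ≤ l ∧ l < w.length ∧ c r (w.getD l r) ≤ c r (w.getD j r)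

open MeasureTheory

lemma sum_Ioc_zero_eq {M : Type*} [AddCommMonoid M] (g : ℕ → M) (n : ℕ) :
    ∑ i ∈ Finset.Ioc 0 n, g i = ∑ i ∈ Finset.range n, g (i + 1) := by
  induction n with
  | zero => simp
  | succ n ih => rw [Finset.sum_Ioc_succ_top (Nat.zero_le _), ih, Finset.sum_range_succ]

lemma telescope_Ioc (f : ℕ → ℝ) (a b : ℕ) (hab : a ≤ b) :
    ∑ i ∈ Finset.Ioc a b, (f i - f (i - 1)) = f b - f a := by
  induction b, hab using Nat.le_induction with
  | base => simp
  | succ b hb ih =>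
      rw [Finset.sum_Ioc_succ_top (by omega), ih]
      have : b + 1 - 1 = b := rfl
      rw [this]; ring

/-- Core lemma: if below every cut of `(a,b]` the future min is at most the past max,
then the total descent is at least `f b - f a`. -/
lemma down_lemma (f : ℕ → ℝ) (a b : ℕ) (hab : a ≤ b)
    (hwit : ∀ i, a < i → i ≤ b → ∃ j l, a ≤ j ∧ j < i ∧ i ≤ l ∧ l ≤ b ∧ f l ≤ f j) :
    f b - f a ≤ ∑ i ∈ Finset.Ioc a b, max (f (i - 1) - f i) 0 := by
  have hnn : (0:ℝ) ≤ ∑ i ∈ Finset.Ioc a b, max (f (i - 1) - f i) 0 :=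
    Finset.sum_nonneg fun i _ => le_max_right _ _
  rcases le_or_gt (f b) (f a) with h | h
  · linarith
  · have hsub : Set.Ioo (f a) (f b) ⊆
        ⋃ i ∈ (Finset.Ioc a b : Finset ℕ), Set.Ioc (f i) (f (i - 1)) := by
      intro x hx
      obtain ⟨hx1, hx2⟩ := hx
      classical
      set S : Finset ℕ := (Finset.Icc a b).filter (fun i => f i < x) with hS
      have haS : a ∈ S := by simp [hS, hab, hx1]
      have hSne : S.Nonempty := ⟨a, haS⟩
      set i0 := S.max' hSne with hi0def
      have hi0S : i0 ∈ S := S.max'_mem hSne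
      have hi0mem : i0 ∈ Finset.Icc a b ∧ f i0 < x := by
        simpa [hS] using hi0S
      have hi0a : a ≤ i0 := (Finset.mem_Icc.mp hi0mem.1).1
      have hi0b' : i0 ≤ b := (Finset.mem_Icc.mp hi0mem.1).2
      have hfi0 : f i0 < x := hi0mem.2
      have hi0b : i0 < b := by
        rcases lt_or_eq_of_le hi0b' with h' | h'
        · exact h'
        · exfalso; rw [h'] at hfi0; linarith
      obtain ⟨j, l, hja, hji, hil, hlb, hfl⟩ := hwit (i0 + 1) (by omega) (by omega)
      have hxl : x ≤ f l := by
        by_contra hc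
        push_neg at hc
        have hlS : l ∈ S := by
          simp only [hS, Finset.mem_filter, Finset.mem_Icc]
          exact ⟨⟨by omega, hlb⟩, hc⟩
        have := S.le_max' l hlS
        omega
      have hxj : x ≤ f j := le_trans hxl hfl
      have hji0 : j < i0 := by
        have hj' : j ≤ i0 := by omega
        rcases lt_or_eq_of_le hj' with h' | h'
        · exact h'
        · exfalso; rw [h'] at hxj; linarith
      set T : Finset ℕ := (Finset.Ioc j i0).filter (fun k => f k < x) with hT
      have hi0T : i0 ∈ T := by
        simp only [hT, Finset.mem_filter, Finset.mem_Ioc]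
        exact ⟨⟨hji0, le_refl _⟩, hfi0⟩
      have hTne : T.Nonempty := ⟨i0, hi0T⟩
      set k0 := T.min' hTne with hk0def
      have hk0T : k0 ∈ T := T.min'_mem hTne
      have hk0mem : (j < k0 ∧ k0 ≤ i0) ∧ f k0 < x := by
        simpa [hT, Finset.mem_Ioc] using hk0T
      have hk0j : j < k0 := hk0mem.1.1
      have hk0i0 : k0 ≤ i0 := hk0mem.1.2
      have hfk0 : f k0 < x := hk0mem.2
      have hk1 : x ≤ f (k0 - 1) := by
        rcases Nat.eq_or_lt_of_le (Nat.succ_le_of_lt hk0j) with h' | h'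
        · have : k0 - 1 = j := by omega
          rw [this]; exact hxj
        · by_contra hc
          push_neg at hc
          have hmem : k0 - 1 ∈ T := by
            simp only [hT, Finset.mem_filter, Finset.mem_Ioc]
            exact ⟨⟨by omega, by omega⟩, hc⟩
          have := T.min'_le _ hmem
          omega
      refine Set.mem_iUnion₂.mpr ⟨k0, ?_, hfk0, hk1⟩
      exact Finset.mem_Ioc.mpr ⟨by omega, by omega⟩
    have hmeas := MeasureTheory.measure_mono (μ := (volume : Measure ℝ)) hsub
    have hle1 : volume (Set.Ioo (f a) (f b)) ≤
        ∑ i ∈ Finset.Ioc a b, volume (Set.Ioc (f i) (f (i - 1))) :=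
      le_trans hmeas (measure_biUnion_finset_le _ _)
    have hle2 : ∑ i ∈ Finset.Ioc a b, volume (Set.Ioc (f i) (f (i - 1))) ≤
        ∑ i ∈ Finset.Ioc a b, ENNReal.ofReal (max (f (i - 1) - f i) 0) := by
      apply Finset.sum_le_sum
      intro i _
      rw [Real.volume_Ioc]
      exact ENNReal.ofReal_le_ofReal (le_max_left _ _)
    have hle3 : ENNReal.ofReal (f b - f a) ≤
        ENNReal.ofReal (∑ i ∈ Finset.Ioc a b, max (f (i - 1) - f i) 0) := by
      rw [ENNReal.ofReal_sum_of_nonneg (fun i _ => le_max_right _ _)]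
      calc ENNReal.ofReal (f b - f a) = volume (Set.Ioo (f a) (f b)) := (Real.volume_Ioo).symm
        _ ≤ _ := le_trans hle1 hle2
    exact (ENNReal.ofReal_le_ofReal_iff hnn).mp hle3

/-- Per-block lemma: cost of a block is at most 3/2 times its regret increase. -/
lemma block_lemma (f e : ℕ → ℝ) (a b : ℕ) (hab : a ≤ b)
    (htri : ∀ i, a < i → i ≤ b → max (f i - f (i - 1)) (f (i - 1) - f i) ≤ e i)
    (hwit : ∀ i, a < i → i ≤ b → ∃ j l, a ≤ j ∧ j < i ∧ i ≤ l ∧ l ≤ b ∧ f l ≤ f j) :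
    ∑ i ∈ Finset.Ioc a b, e i ≤ (3 / 2) * ((∑ i ∈ Finset.Ioc a b, e i) - (f b - f a)) := by
  have hdown := down_lemma f a b hab hwit
  have htel := telescope_Ioc f a b hab
  have h1 : ∀ i ∈ Finset.Ioc a b,
      (f i - f (i - 1)) + 2 * max (f (i - 1) - f i) 0 ≤ e i := by
    intro i hi
    obtain ⟨hi1, hi2⟩ := Finset.mem_Ioc.mp hi
    have h := htri i hi1 hi2
    rcases le_total (f (i - 1)) (f i) with h' | h'
    · rw [max_eq_right (by linarith)]
      have := le_trans (le_max_left _ _) h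
      linarith
    · rw [max_eq_left (by linarith)]
      have := le_trans (le_max_right _ _) h
      linarith
  have hsum : (∑ i ∈ Finset.Ioc a b, (f i - f (i - 1))) +
      2 * (∑ i ∈ Finset.Ioc a b, max (f (i - 1) - f i) 0) ≤ ∑ i ∈ Finset.Ioc a b, e i := by
    have := Finset.sum_le_sum h1
    rw [Finset.sum_add_distrib, ← Finset.mul_sum] at this
    exact this
  rw [htel] at hsum
  linarith

/-- Main abstract lemma on sequences. -/
lemma main_lemma (f e : ℕ → ℝ) (n : ℕ) (red : ℕ → Prop) [DecidablePred red]
    (hf0 : f 0 = 0) (he : ∀ i, 0 ≤ e i)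
    (htri : ∀ i, 1 ≤ i → i ≤ n → max (f i - f (i - 1)) (f (i - 1) - f i) ≤ e i)
    (hred : ∀ i, 1 ≤ i → i ≤ n → red i → ∃ j l, j < i ∧ i ≤ l ∧ l ≤ n ∧ f l ≤ f j)
    (hblue : ∀ i, 1 ≤ i → i ≤ n → ¬ red i → ∀ j l, j < i → i ≤ l → l ≤ n → f j < f l) :
    ∑ i ∈ Finset.Ioc 0 n, (if red i then e i else 0) ≤
      (3 / 2) * ((∑ i ∈ Finset.Ioc 0 n, e i) - f n) := by
  classical
  suffices H : ∀ b, b ≤ n → (∀ j l, j ≤ b → b < l → l ≤ n → f j < f l) →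
      ∑ i ∈ Finset.Ioc 0 b, (if red i then e i else 0) ≤
        (3 / 2) * ((∑ i ∈ Finset.Ioc 0 b, e i) - f b) by
    exact H n le_rfl (fun j l _ hl hln => by omega)
  intro b
  induction b using Nat.strong_induction_on with
  | _ b IH =>
    intro hbn hgood
    by_cases hall : ∀ i, 1 ≤ i → i ≤ b → red i
    · -- single block [0, b]
      have hblk := block_lemma f e 0 b (Nat.zero_le b)
        (fun i hi1 hi2 => htri i hi1 (le_trans hi2 hbn))
        (by
          intro i hi1 hi2
          obtain ⟨j, l, hji, hil, hln, hfl⟩ :=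
            hred i hi1 (le_trans hi2 hbn) (hall i hi1 hi2)
          refine ⟨j, l, Nat.zero_le j, hji, hil, ?_, hfl⟩
          by_contra hc
          push_neg at hc
          have := hgood j l (by omega) hc hln
          linarith)
      have hfilter : ∑ i ∈ Finset.Ioc 0 b, (if red i then e i else 0) ≤
          ∑ i ∈ Finset.Ioc 0 b, e i := by
        apply Finset.sum_le_sum
        intro i _
        split
        · exact le_rfl
        · exact he i
      rw [hf0] at hblk
      calc ∑ i ∈ Finset.Ioc 0 b, (if red i then e i else 0) ≤ ∑ i ∈ Finset.Ioc 0 b, e i :=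
            hfilter
        _ ≤ _ := by convert hblk using 3; ring
    · push_neg at hall
      obtain ⟨i1, hi11, hi1b, hi1red⟩ := hall
      set B : Finset ℕ := (Finset.Ioc 0 b).filter (fun i => ¬ red i) with hB
      have hi1B : i1 ∈ B := by
        simp only [hB, Finset.mem_filter, Finset.mem_Ioc]
        exact ⟨⟨by omega, hi1b⟩, hi1red⟩
      have hBne : B.Nonempty := ⟨i1, hi1B⟩
      set i0 := B.max' hBne with hi0def
      have hi0B : i0 ∈ B := B.max'_mem hBne
      have hi0mem : (0 < i0 ∧ i0 ≤ b) ∧ ¬ red i0 := by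
        simpa [hB, Finset.mem_Ioc] using hi0B
      have hi01 : 1 ≤ i0 := hi0mem.1.1
      have hi0b : i0 ≤ b := hi0mem.1.2
      have hi0red : ¬ red i0 := hi0mem.2
      have hi0n : i0 ≤ n := le_trans hi0b hbn
      have hblue0 := hblue i0 hi01 hi0n hi0red
      -- barrier at i0 - 1
      have hgood' : ∀ j l, j ≤ i0 - 1 → i0 - 1 < l → l ≤ n → f j < f l := by
        intro j l hj hl hln
        exact hblue0 j l (by omega) (by omega) hln
      have hIH := IH (i0 - 1) (by omega) (by omega) hgood'
      -- edges in (i0, b] are red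
      have hmax : ∀ i, i0 < i → i ≤ b → red i := by
        intro i h1 h2
        by_contra hc
        have : i ∈ B := by
          simp only [hB, Finset.mem_filter, Finset.mem_Ioc]
          exact ⟨⟨by omega, h2⟩, hc⟩
        have := B.le_max' i this
        omega
      have hblk := block_lemma f e i0 b hi0b
        (fun i hi1 hi2 => htri i (by omega) (le_trans hi2 hbn))
        (by
          intro i hi1 hi2
          obtain ⟨j, l, hji, hil, hln, hfl⟩ :=
            hred i (by omega) (le_trans hi2 hbn) (hmax i hi1 hi2)
          have hlb : l ≤ b := by
            by_contra hc
            push_neg at hc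
            have := hgood j l (by omega) hc hln
            linarith
          have hja : i0 ≤ j := by
            by_contra hc
            push_neg at hc
            have := hblue0 j l (by omega) (by omega) hln
            linarith
          exact ⟨j, l, hja, hji, hil, hlb, hfl⟩)
      obtain ⟨m, hm⟩ : ∃ m, i0 = m + 1 := ⟨i0 - 1, by omega⟩
      have hm1 : m + 1 - 1 = m := rfl
      rw [hm] at hIH hblk hi0b hi0red hi0n
      rw [hm1] at hIH
      -- splitting sums
      have hsplit_g : ∑ i ∈ Finset.Ioc 0 b, (if red i then e i else 0) =
          (∑ i ∈ Finset.Ioc 0 m, (if red i then e i else 0)) +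
            (if red (m + 1) then e (m + 1) else 0) +
            ∑ i ∈ Finset.Ioc (m + 1) b, (if red i then e i else 0) := by
        rw [← Finset.sum_Ioc_consecutive _ (Nat.zero_le (m + 1)) hi0b,
          Finset.sum_Ioc_succ_top (Nat.zero_le m)]
      have hsplit_e : ∑ i ∈ Finset.Ioc 0 b, e i =
          (∑ i ∈ Finset.Ioc 0 m, e i) + e (m + 1) + ∑ i ∈ Finset.Ioc (m + 1) b, e i := by
        rw [← Finset.sum_Ioc_consecutive _ (Nat.zero_le (m + 1)) hi0b,
          Finset.sum_Ioc_succ_top (Nat.zero_le m)]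
      have hg0 : (if red (m + 1) then e (m + 1) else 0) = 0 := by
        simp [hi0red]
      have hCg : ∑ i ∈ Finset.Ioc (m + 1) b, (if red i then e i else 0) ≤
          ∑ i ∈ Finset.Ioc (m + 1) b, e i := by
        apply Finset.sum_le_sum
        intro i _
        split
        · exact le_rfl
        · exact he i
      have htri0 : f (m + 1) - f m ≤ e (m + 1) := by
        have h := htri (m + 1) (by omega) hi0n
        have := le_trans (le_max_left _ _) h
        simpa using this
      rw [hsplit_g, hsplit_e, hg0]
      linarith [hIH, hblk, hCg]

lemma pathCost_eq_sum {α : Type*} (c : α → α → ℝ) (d : α) (w : List α) :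
    pathCost c w = ∑ i ∈ Finset.range (w.length - 1), c (w.getD i d) (w.getD (i + 1) d) := by
  induction w with
  | nil => simp [pathCost]
  | cons a t ih =>
    cases t with
    | nil => simp [pathCost]
    | cons b l =>
      show c a b + pathCost c (b :: l) = _
      rw [ih]
      have hlen : (a :: b :: l).length - 1 = ((b :: l).length - 1) + 1 := by
        simp
      rw [hlen, Finset.sum_range_succ']
      simp [List.getD_cons_succ]
      ring

lemma getLastD_eq_getD {α : Type*} (w : List α) (d : α) :
    w.getLastD d = w.getD (w.length - 1) d := by
  induction w generalizing d with
  | nil => simp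
  | cons a t ih =>
    rw [List.getLastD_cons]
    cases t with
    | nil => simp
    | cons b l =>
      rw [ih a]
      have h1 : (a :: b :: l).length - 1 = ((b :: l).length - 1) + 1 := by simp
      rw [h1, List.getD_cons_succ]
      have h2 : (b :: l).length - 1 < (b :: l).length := by simp
      rw [List.getD_eq_getElem (b :: l) a h2, List.getD_eq_getElem (b :: l) d h2]

open scoped Classical in
/-- for any rooted path `P`, the total cost of the red edges of `P` is at most
`3/2` times the regret of `P`. -/
theorem red_cost_le_regret {α : Type*} [Fintype α] (c : α → α → ℝ) (r : α)
    (hsymm : ∀ u v, c u v = c v u) (hnn : ∀ u v, 0 ≤ c u v)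
    (htri : ∀ u v w, c u v ≤ c u w + c w v) (hrefl : ∀ u, c u u = 0)
    (hpos : ∀ u v, u ≠ v → 0 < c u v)
    (w : List α) (hw : IsRootedPath r w) :
    ∑ i ∈ Finset.Ico 1 w.length,
        (if redEdge c r w i then c (w.getD (i-1) r) (w.getD i r) else 0)
      ≤ (3/2) * pathRegret c r w := by
  obtain ⟨hhead, -⟩ := hw
  obtain ⟨t, rfl⟩ : ∃ t, w = r :: t := by
    cases w with
    | nil => simp at hhead
    | cons a t =>
      simp only [List.head?_cons, Option.some.injEq] at hhead
      exact ⟨t, by rw [hhead]⟩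
  have hlen : (r :: t).length = t.length + 1 := by simp
  have hmain := main_lemma (fun i => c r ((r :: t).getD i r))
    (fun i => c ((r :: t).getD (i - 1) r) ((r :: t).getD i r)) t.length
    (redEdge c r (r :: t))
    (by simp [hrefl])
    (fun i => hnn _ _)
    (fun i h1 h2 => by
      apply max_le
      · have h3 := htri r ((r :: t).getD i r) ((r :: t).getD (i - 1) r)
        linarith
      · have h3 := htri r ((r :: t).getD (i - 1) r) ((r :: t).getD i r)
        have h4 := hsymm ((r :: t).getD i r) ((r :: t).getD (i - 1) r)
        linarith)
    (fun i h1 h2 hr => by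
      obtain ⟨j, l, hj, hl, hlen', hc⟩ := hr
      rw [hlen] at hlen'
      exact ⟨j, l, hj, hl, by omega, hc⟩)
    (fun i h1 h2 hnr j l hj hl hln => by
      by_contra hc
      push_neg at hc
      exact hnr ⟨j, l, hj, hl, by rw [hlen]; omega, hc⟩)
  have hico : Finset.Ico 1 ((r :: t).length) = Finset.Ioc 0 t.length := by
    rw [hlen]
    ext i
    simp only [Finset.mem_Ico, Finset.mem_Ioc]
    omega
  have hreg : pathRegret c r (r :: t) =
      (∑ i ∈ Finset.Ioc 0 t.length, c ((r :: t).getD (i - 1) r) ((r :: t).getD i r)) -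
        c r ((r :: t).getD t.length r) := by
    unfold pathRegret
    rw [pathCost_eq_sum c r, getLastD_eq_getD, sum_Ioc_zero_eq]
    simp
  rw [hico, hreg]
  exact hmain
end

section
/- Let R ≥ 0 and let x be a feasible solution to the configuration LP (P) for RVRP of value k* = Σ_P x_P. For a nonempty set S ⊆ V and a node v ∈ S, define τ(v,S) = Σ_{P ∈ C_R : v ∈ P, red(v,P) ⊆ S} x_P, and call S active if τ(v,S) < 1/2 for every v ∈ S. Then there exists an assignment z of nonnegative values to the edges of the complete graph on V ∪ {r} such that Σ_{e ∈ δ(S)} z_e ≥ 1 for every active set S (where δ(S) is the set of edges with exactly one endpoint in S), and Σ_e c_e·z_e ≤ 3·k*·R. -/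
/-- Positions `p` and `q` of `w` lie in the same maximal red subpath iff all edges strictly
between them are red. -/
def inSameRedInterval {α : Type*} (c : α → α → ℝ) (r : α) (w : List α) (p q : ℕ) : Prop :=
  (∀ i, p < i → i ≤ q → redEdge c r w i) ∧ (∀ i, q < i → i ≤ p → redEdge c r w i)

/-- `red(v,w) ⊆ S`: every node of the maximal red subpath of `w` containing `v`
belongs to `S`. -/
def redSubpathSubset {α : Type*} [DecidableEq α] (c : α → α → ℝ) (r : α)
    (w : List α) (v : α) (S : Finset α) : Prop :=
  ∀ q < w.length, inSameRedInterval c r w (w.idxOf v) q → w.getD q r ∈ S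

open scoped Classical

private lemma block' (D e : ℕ → ℝ) (he : ∀ i, 0 ≤ e i)
    (H1 : ∀ j l, j < l → |D l - D j| ≤ ∑ i ∈ Finset.Ioc j l, e i) :
    ∀ k (m : ℝ) s t, t ≤ s + k → s ≤ t →
      (∀ i, s < i → i ≤ t →
        (∃ j, s ≤ j ∧ j < i ∧ m ≤ D j) ∨
        (∃ j l, s ≤ j ∧ j < i ∧ i ≤ l ∧ l ≤ t ∧ D l ≤ D j)) →
      D t - D s + 2 * max (min m (D t) - D s) 0 ≤ ∑ i ∈ Finset.Ioc s t, e i := by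
  intro k
  induction k with
  | zero =>
    intro m s t hk hst _
    have hts : t = s := le_antisymm (by omega) hst
    subst hts
    have h1 : min m (D t) - D t ≤ 0 := by
      have := min_le_right m (D t); linarith
    rw [max_eq_right h1]
    simp
  | succ k ih =>
    intro m s t hk hst hyp
    by_cases hK : min m (D t) ≤ D s
    · rw [max_eq_right (by linarith)]
      rcases eq_or_lt_of_le hst with h | h
      · subst h; simp
      · have h2 := H1 s t h
        have h3 : D t - D s ≤ |D t - D s| := le_abs_self _
        linarith
    · push_neg at hK
      set K := min m (D t) with hKdef
      have hAne : ((Finset.Icc s t).filter (fun i => K ≤ D i)).Nonempty := by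
        exact ⟨t, by simp only [Finset.mem_filter, Finset.mem_Icc]; exact ⟨⟨hst, le_refl t⟩, min_le_right _ _⟩⟩
      set p := ((Finset.Icc s t).filter (fun i => K ≤ D i)).min' hAne with hpdef
      have hpmem := Finset.min'_mem _ hAne
      simp only [Finset.mem_filter, Finset.mem_Icc] at hpmem
      obtain ⟨⟨hsp, hpt⟩, hKp⟩ := hpmem
      have hpmin : ∀ i, s ≤ i → i ≤ t → K ≤ D i → p ≤ i := by
        intro i h1 h2 h3
        exact Finset.min'_le _ _ (by simp [Finset.mem_filter, Finset.mem_Icc, h1, h2, h3])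
      have hsp' : s < p := by
        rcases eq_or_lt_of_le hsp with h | h
        · exfalso; rw [← h] at hKp; linarith
        · exact h
      -- get witnesses from hyp at p
      rcases hyp p hsp' hpt with ⟨j, hj1, hj2, hj3⟩ | ⟨j, l, hj1, hj2, hl1, hl2, hDlj⟩
      · exfalso
        have : K ≤ D j := le_trans (min_le_left _ _) hj3
        have := hpmin j hj1 (by omega) this
        omega
      · have hDj : D j < K := by
          by_contra h
          push_neg at h
          have := hpmin j hj1 (by omega) h
          omega
        -- min over [p,t]
        obtain ⟨v, hvmem, hvmin⟩ := Finset.exists_min_image (Finset.Icc p t) D ⟨t, by simp [hpt]; exact hpt⟩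
        simp only [Finset.mem_Icc] at hvmem
        have hm'lt : D v < K := by
          have : D v ≤ D l := hvmin l (by simp [Finset.mem_Icc]; omega)
          linarith
        have hpv : p < v := by
          rcases eq_or_lt_of_le hvmem.1 with h | h
          · exfalso; rw [← h] at hm'lt; linarith
          · exact h
        have hvt : v < t := by
          rcases eq_or_lt_of_le hvmem.2 with h | h
          · exfalso; rw [h] at hm'lt; have h2 : K ≤ D t := min_le_right m (D t); linarith
          · exact h
        -- sub hypothesis on [s,p] with m' = D v
        have subhyp : ∀ i, s < i → i ≤ p →
            (∃ j, s ≤ j ∧ j < i ∧ D v ≤ D j) ∨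
            (∃ j l, s ≤ j ∧ j < i ∧ i ≤ l ∧ l ≤ p ∧ D l ≤ D j) := by
          intro i hi1 hi2
          rcases hyp i hi1 (by omega) with ⟨j', h1, h2, h3⟩ | ⟨j', l', h1, h2, h3, h4, h5⟩
          · exfalso
            have : K ≤ D j' := le_trans (min_le_left _ _) h3
            have := hpmin j' h1 (by omega) this
            omega
          · by_cases hlp : l' ≤ p
            · exact Or.inr ⟨j', l', h1, h2, h3, hlp, h5⟩
            · left
              refine ⟨j', h1, h2, ?_⟩
              have : D v ≤ D l' := hvmin l' (by simp [Finset.mem_Icc]; omega)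
              linarith
        have hIH := ih (D v) s p (by omega) (le_of_lt hsp') subhyp
        have hminDv : min (D v) (D p) = D v := min_eq_left (by linarith)
        rw [hminDv] at hIH
        -- split sum
        have hsplit1 : ∑ i ∈ Finset.Ioc s p, e i + ∑ i ∈ Finset.Ioc p v, e i
            = ∑ i ∈ Finset.Ioc s v, e i :=
          Finset.sum_Ioc_consecutive _ (le_of_lt hsp') (le_of_lt hpv)
        have hsplit2 : ∑ i ∈ Finset.Ioc s v, e i + ∑ i ∈ Finset.Ioc v t, e i
            = ∑ i ∈ Finset.Ioc s t, e i :=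
          Finset.sum_Ioc_consecutive _ (by omega) (le_of_lt hvt)
        have hb1 : D p - D v ≤ ∑ i ∈ Finset.Ioc p v, e i := by
          have := H1 p v hpv
          have h' : D p - D v ≤ |D v - D p| := by
            rw [abs_sub_comm]; exact le_abs_self _
          linarith
        have hb2 : D t - D v ≤ ∑ i ∈ Finset.Ioc v t, e i := by
          have := H1 v t hvt
          have h' : D t - D v ≤ |D t - D v| := le_abs_self _
          linarith
        have hmax1 : D v - D s ≤ max (D v - D s) 0 := le_max_left _ _
        have hKt : K ≤ D t := min_le_right m (D t)
        rw [max_eq_left (by linarith : (0:ℝ) ≤ K - D s)]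
        linarith

private lemma seqlem (D e : ℕ → ℝ) (he : ∀ i, 0 ≤ e i)
    (H1 : ∀ j l, j < l → |D l - D j| ≤ ∑ i ∈ Finset.Ioc j l, e i) :
    ∀ n, (∑ i ∈ Finset.Ico 1 n,
        (if ∃ j l, j < i ∧ i ≤ l ∧ l < n ∧ D l ≤ D j then e i else 0))
      ≤ 3/2 * ((∑ i ∈ Finset.Ico 1 n, e i) - (D (n-1) - D 0)) := by
  intro n
  induction n using Nat.strong_induction_on with
  | _ n IH =>
    match n, IH with
    | 0, _ => simp
    | 1, _ => simp
    | (N+2), IH =>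
      set n := N + 2 with hn
      have hn2 : 2 ≤ n := by omega
      -- block bound helper
      have hblock : ∀ (s : ℕ), s < n →
          (∀ i, s < i → i ≤ n - 1 → ∃ j l, s ≤ j ∧ j < i ∧ i ≤ l ∧ l < n ∧ D l ≤ D j) →
          3 * (D (n-1) - D s) ≤ ∑ i ∈ Finset.Ioc s (n-1), e i := by
        intro s hs hall
        have hb := block' D e he H1 (n-1) (D (n-1)) s (n-1) (by omega) (by omega) ?_
        · rw [min_self] at hb
          have h1 : D (n-1) - D s ≤ max (D (n-1) - D s) 0 := le_max_left _ _
          linarith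
        · intro i hi1 hi2
          obtain ⟨j, l, h0, h1, h2, h3, h4⟩ := hall i hi1 hi2
          exact Or.inr ⟨j, l, h0, h1, h2, by omega, h4⟩
      by_cases hall : ∀ i, 1 ≤ i → i < n → (∃ j l, j < i ∧ i ≤ l ∧ l < n ∧ D l ≤ D j)
      · -- no blue edge: everything red
        have hsum : (∑ i ∈ Finset.Ico 1 n,
            (if ∃ j l, j < i ∧ i ≤ l ∧ l < n ∧ D l ≤ D j then e i else 0))
            = ∑ i ∈ Finset.Ico 1 n, e i := by
          apply Finset.sum_congr rfl
          intro i hi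
          simp only [Finset.mem_Ico] at hi
          rw [if_pos (hall i hi.1 hi.2)]
        rw [hsum]
        have hIoc : Finset.Ioc 0 (n-1) = Finset.Ico 1 n := by
          ext i; simp only [Finset.mem_Ioc, Finset.mem_Ico]; omega
        have hb := hblock 0 (by omega) ?_
        · rw [hIoc] at hb; linarith
        · intro i hi1 hi2
          obtain ⟨j, l, h1, h2, h3, h4⟩ := hall i (by omega) (by omega)
          exact ⟨j, l, Nat.zero_le _, h1, h2, h3, h4⟩
      · -- there is a blue edge; take the largest
        push_neg at hall
        obtain ⟨b0, hb01, hb02, hb03⟩ := hall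
        have hBne : ((Finset.Ico 1 n).filter
            (fun i => ¬ ∃ j l, j < i ∧ i ≤ l ∧ l < n ∧ D l ≤ D j)).Nonempty := by
          refine ⟨b0, ?_⟩
          simp only [Finset.mem_filter, Finset.mem_Ico]
          refine ⟨⟨hb01, hb02⟩, ?_⟩
          push_neg
          exact hb03
        set b := (((Finset.Ico 1 n).filter
            (fun i => ¬ ∃ j l, j < i ∧ i ≤ l ∧ l < n ∧ D l ≤ D j))).max' hBne with hbdef
        have hbmem := Finset.max'_mem _ hBne
        simp only [Finset.mem_filter, Finset.mem_Ico] at hbmem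
        obtain ⟨⟨hb1, hb2⟩, hbblue⟩ := hbmem
        have hbmax : ∀ i, 1 ≤ i → i < n →
            (¬ ∃ j l, j < i ∧ i ≤ l ∧ l < n ∧ D l ≤ D j) → i ≤ b := by
          intro i h1 h2 h3
          exact Finset.le_max' _ _ (by simp only [Finset.mem_filter, Finset.mem_Ico]
                                       exact ⟨⟨h1, h2⟩, h3⟩)
        -- everything above b is red
        have hredabove : ∀ i, b < i → i < n → ∃ j l, j < i ∧ i ≤ l ∧ l < n ∧ D l ≤ D j := by
          intro i h1 h2
          by_contra h3
          have := hbmax i (by omega) h2 h3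
          omega
        -- red witnesses above b have j ≥ b
        have hwit : ∀ i, b < i → i ≤ n - 1 → ∃ j l, b ≤ j ∧ j < i ∧ i ≤ l ∧ l < n ∧ D l ≤ D j := by
          intro i h1 h2
          obtain ⟨j, l, g1, g2, g3, g4⟩ := hredabove i h1 (by omega)
          refine ⟨j, l, ?_, g1, g2, g3, g4⟩
          by_contra hjb
          push_neg at hjb
          exact hbblue ⟨j, l, hjb, by omega, g3, g4⟩
        -- red below b is red w.r.t. horizon b
        have hequiv : ∀ i, 1 ≤ i → i < b →
            ((∃ j l, j < i ∧ i ≤ l ∧ l < n ∧ D l ≤ D j) ↔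
             (∃ j l, j < i ∧ i ≤ l ∧ l < b ∧ D l ≤ D j)) := by
          intro i h1 h2
          constructor
          · rintro ⟨j, l, g1, g2, g3, g4⟩
            refine ⟨j, l, g1, g2, ?_, g4⟩
            by_contra hlb
            push_neg at hlb
            exact hbblue ⟨j, l, by omega, by omega, g3, g4⟩
          · rintro ⟨j, l, g1, g2, g3, g4⟩
            exact ⟨j, l, g1, g2, by omega, g4⟩
        -- IH at b
        have hIHb := IH b (by omega)
        -- sum decompositions
        have hsplit : ∑ i ∈ Finset.Ico 1 b,
              (if ∃ j l, j < i ∧ i ≤ l ∧ l < n ∧ D l ≤ D j then e i else 0)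
            + ∑ i ∈ Finset.Ico b n,
              (if ∃ j l, j < i ∧ i ≤ l ∧ l < n ∧ D l ≤ D j then e i else 0)
            = ∑ i ∈ Finset.Ico 1 n,
              (if ∃ j l, j < i ∧ i ≤ l ∧ l < n ∧ D l ≤ D j then e i else 0) :=
          Finset.sum_Ico_consecutive _ hb1 (le_of_lt hb2)
        have hsplitE : ∑ i ∈ Finset.Ico 1 b, e i + ∑ i ∈ Finset.Ico b n, e i
            = ∑ i ∈ Finset.Ico 1 n, e i :=
          Finset.sum_Ico_consecutive _ hb1 (le_of_lt hb2)
        -- part below b equals the b-horizon sum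
        have hbelow : ∑ i ∈ Finset.Ico 1 b,
              (if ∃ j l, j < i ∧ i ≤ l ∧ l < n ∧ D l ≤ D j then e i else 0)
            = ∑ i ∈ Finset.Ico 1 b,
              (if ∃ j l, j < i ∧ i ≤ l ∧ l < b ∧ D l ≤ D j then e i else 0) := by
          apply Finset.sum_congr rfl
          intro i hi
          simp only [Finset.mem_Ico] at hi
          have := hequiv i hi.1 hi.2
          exact if_congr this rfl rfl
        -- part from b : Ico b n = {b} ∪ Ioc b (n-1)
        have hIcobn : Finset.Ico b n = insert b (Finset.Ioc b (n-1)) := by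
          ext i
          simp only [Finset.mem_Ico, Finset.mem_insert, Finset.mem_Ioc]
          omega
        have habove : ∑ i ∈ Finset.Ico b n,
              (if ∃ j l, j < i ∧ i ≤ l ∧ l < n ∧ D l ≤ D j then e i else 0)
            = ∑ i ∈ Finset.Ioc b (n-1), e i := by
          rw [hIcobn, Finset.sum_insert (by simp)]
          rw [if_neg hbblue, zero_add]
          apply Finset.sum_congr rfl
          intro i hi
          simp only [Finset.mem_Ioc] at hi
          rw [if_pos (hredabove i hi.1 (by omega))]
        have haboveE : ∑ i ∈ Finset.Ico b n, e i = e b + ∑ i ∈ Finset.Ioc b (n-1), e i := by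
          rw [hIcobn, Finset.sum_insert (by simp)]
        -- block bound on [b, n-1]
        have hC := hblock b (by omega) hwit
        -- e b lower bound
        have heb : D b - D (b-1) ≤ e b := by
          have h1 := H1 (b-1) b (by omega)
          have h2 : Finset.Ioc (b-1) b = {b} := by
            ext i; simp only [Finset.mem_Ioc, Finset.mem_singleton]; omega
          rw [h2, Finset.sum_singleton] at h1
          have h3 : D b - D (b-1) ≤ |D b - D (b-1)| := le_abs_self _
          linarith
        linarith

section PathLemmas

variable {α : Type*} (c : α → α → ℝ) (r : α)

private lemma chain_bound (htri : ∀ u v w, c u v ≤ c u w + c w v) (w : List α) :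
    ∀ l j, j < l →
      c (w.getD j r) (w.getD l r) ≤
        ∑ i ∈ Finset.Ioc j l, c (w.getD (i-1) r) (w.getD i r) := by
  intro l
  induction l with
  | zero => omega
  | succ l ihl =>
    intro j hj
    rcases eq_or_lt_of_le (Nat.lt_succ_iff.mp hj) with h | h
    · subst h
      have : Finset.Ioc j (j+1) = {j+1} := by
        ext i; simp only [Finset.mem_Ioc, Finset.mem_singleton]; omega
      rw [this, Finset.sum_singleton]
      simp
    · have hsplit : ∑ i ∈ Finset.Ioc j l, c (w.getD (i-1) r) (w.getD i r)
          + ∑ i ∈ Finset.Ioc l (l+1), c (w.getD (i-1) r) (w.getD i r)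
          = ∑ i ∈ Finset.Ioc j (l+1), c (w.getD (i-1) r) (w.getD i r) :=
        Finset.sum_Ioc_consecutive _ (by omega) (by omega)
      have hsing : Finset.Ioc l (l+1) = {l+1} := by
        ext i; simp only [Finset.mem_Ioc, Finset.mem_singleton]; omega
      rw [hsing, Finset.sum_singleton] at hsplit
      have htr := htri (w.getD j r) (w.getD (l+1) r) (w.getD l r)
      have := ihl j h
      simp only [Nat.add_sub_cancel] at hsplit
      linarith

private lemma dist_bound (hsymm : ∀ u v, c u v = c v u)
    (htri : ∀ u v w, c u v ≤ c u w + c w v) (w : List α) (j l : ℕ) (hj : j < l) :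
    |c r (w.getD l r) - c r (w.getD j r)| ≤
      ∑ i ∈ Finset.Ioc j l, c (w.getD (i-1) r) (w.getD i r) := by
  have h1 := chain_bound c r htri w l j hj
  rw [abs_le]
  constructor
  · have := htri r (w.getD j r) (w.getD l r)
    have h2 : c (w.getD l r) (w.getD j r) = c (w.getD j r) (w.getD l r) := hsymm _ _
    linarith
  · have := htri r (w.getD l r) (w.getD j r)
    linarith

private lemma pathCost_eq (w : List α) :
    pathCost c w = ∑ i ∈ Finset.range (w.length - 1), c (w.getD i r) (w.getD (i+1) r) := by
  induction w with
  | nil => simp [pathCost]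
  | cons a t iht =>
    match t, iht with
    | [], _ => simp [pathCost]
    | b :: l, iht =>
      show c a b + pathCost c (b :: l) = _
      have hlen : (a :: b :: l).length - 1 = (b :: l).length - 1 + 1 := by
        simp
      rw [hlen, Finset.sum_range_succ', iht]
      have hcongr : ∑ x ∈ Finset.range ((b :: l).length - 1),
            c ((a::b::l).getD (x+1) r) ((a::b::l).getD (x+1+1) r)
          = ∑ x ∈ Finset.range ((b :: l).length - 1),
            c ((b::l).getD x r) ((b::l).getD (x+1) r) := by
        apply Finset.sum_congr rfl
        intro x _
        simp
      rw [hcongr]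
      simp only [List.getD_cons_succ, List.getD_cons_zero]
      ring

private lemma pathCost_eq_Ico (w : List α) :
    pathCost c w = ∑ i ∈ Finset.Ico 1 w.length, c (w.getD (i-1) r) (w.getD i r) := by
  rw [pathCost_eq c r w, Finset.sum_Ico_eq_sum_range]
  apply Finset.sum_congr rfl
  intro i _
  congr 1
  · congr 1; omega
  · congr 1; omega

private lemma getLastD_eq (w : List α) : w.getLastD r = w.getD (w.length - 1) r := by
  induction w with
  | nil => simp
  | cons a t iht =>
    match t, iht with
    | [], _ => simp
    | b :: l, iht =>
      have h1 : (a :: b :: l).getLastD r = (b :: l).getLastD r := rfl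
      rw [h1, iht]
      have h2 : (a :: b :: l).length - 1 = ((b :: l).length - 1) + 1 := by simp
      rw [h2, List.getD_cons_succ]

end PathLemmas


open scoped Classical in
private lemma redcost_le {α : Type*} (c : α → α → ℝ) (r : α)
    (hsymm : ∀ u v, c u v = c v u) (hnn : ∀ u v, 0 ≤ c u v)
    (htri : ∀ u v w, c u v ≤ c u w + c w v) (hrefl : ∀ u, c u u = 0)
    (R : ℝ) (w : List α) (hw : IsRootedPath r w) (hreg : pathRegret c r w ≤ R) :
    ∑ i ∈ Finset.Ico 1 w.length,
      (if redEdge c r w i then c (w.getD (i-1) r) (w.getD i r) else 0) ≤ 3/2 * R := by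
  set D : ℕ → ℝ := fun i => c r (w.getD i r) with hD
  set e : ℕ → ℝ := fun i => c (w.getD (i-1) r) (w.getD i r) with he'
  have he : ∀ i, 0 ≤ e i := fun i => hnn _ _
  have H1 : ∀ j l, j < l → |D l - D j| ≤ ∑ i ∈ Finset.Ioc j l, e i := by
    intro j l hjl
    exact dist_bound c r hsymm htri w j l hjl
  have hseq := seqlem D e he H1 w.length
  have hred : ∀ i, redEdge c r w i ↔ (∃ j l, j < i ∧ i ≤ l ∧ l < w.length ∧ D l ≤ D j) :=
    fun i => Iff.rfl
  have hsum1 : ∑ i ∈ Finset.Ico 1 w.length,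
      (if redEdge c r w i then c (w.getD (i-1) r) (w.getD i r) else 0)
      = ∑ i ∈ Finset.Ico 1 w.length,
      (if ∃ j l, j < i ∧ i ≤ l ∧ l < w.length ∧ D l ≤ D j then e i else 0) := by
    apply Finset.sum_congr rfl
    intro i _
    exact if_congr (hred i) rfl rfl
  rw [hsum1]
  have hcost : ∑ i ∈ Finset.Ico 1 w.length, e i = pathCost c w := (pathCost_eq_Ico c r w).symm
  have hD0 : D 0 = 0 := by
    obtain ⟨hhead, _⟩ := hw
    obtain ⟨t, rfl⟩ : ∃ t, w = r :: t := by
      cases w with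
      | nil => simp at hhead
      | cons a t => simp at hhead; exact ⟨t, by rw [hhead]⟩
    simp [hD, hrefl]
  have hDlast : D (w.length - 1) = c r (w.getLastD r) := by
    rw [getLastD_eq r w]
  have hreg' : pathRegret c r w = (∑ i ∈ Finset.Ico 1 w.length, e i) - (D (w.length-1) - D 0) := by
    rw [hcost, hD0, hDlast, pathRegret]
    ring
  rw [hreg'] at hreg
  have h32 : (3:ℝ)/2 * ((∑ i ∈ Finset.Ico 1 w.length, e i) - (D (w.length-1) - D 0)) ≤ 3/2 * R := by
    linarith
  linarith

private lemma nat_ivt {f : ℕ → Prop} :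
    ∀ b a, a ≤ b → f a → ¬ f b → ∃ j, a ≤ j ∧ j < b ∧ f j ∧ ¬ f (j+1) := by
  intro b
  induction b with
  | zero =>
    intro a ha hfa hfb
    have : a = 0 := by omega
    subst this; exact absurd hfa hfb
  | succ b ihb =>
    intro a ha hfa hfb
    rcases eq_or_lt_of_le ha with h | h
    · subst h; exact absurd hfa hfb
    · by_cases hb : f b
      · exact ⟨b, by omega, by omega, hb, hfb⟩
      · obtain ⟨j, h1, h2, h3, h4⟩ := ihb a (by omega) hfa hb
        exact ⟨j, h1, by omega, h3, h4⟩

open scoped Classical in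
private lemma cut_witness {α : Type*} [DecidableEq α] (c : α → α → ℝ) (r : α)
    (w : List α) (S : Finset α) (v : α) (hv : v ∈ w.tail) (hvS : v ∈ S)
    (hw : IsRootedPath r w)
    (hns : ¬ redSubpathSubset c r w v S) :
    ∃ idx, 1 ≤ idx ∧ idx < w.length ∧ redEdge c r w idx ∧
      ((w.getD (idx-1) r ∈ S ∧ w.getD idx r ∉ S) ∨
       (w.getD (idx-1) r ∉ S ∧ w.getD idx r ∈ S)) := by
  rw [redSubpathSubset] at hns
  push_neg at hns
  obtain ⟨q, hq, hint, hqS⟩ := hns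
  have hvmem : v ∈ w := List.mem_of_mem_tail hv
  set p := w.idxOf v with hp
  have hplen : p < w.length := List.idxOf_lt_length_iff.mpr hvmem
  have hpv : w.getD p r = v := by
    rw [List.getD_eq_getElem?_getD]
    rw [List.getElem?_eq_getElem hplen]
    simp [hp]
  have hpq : p ≠ q := by
    intro h
    rw [← h, hpv] at hqS
    exact hqS hvS
  rcases Nat.lt_or_ge p q with h | h
  · -- p < q : walk forward
    obtain ⟨j, h1, h2, h3, h4⟩ := nat_ivt (f := fun i => w.getD i r ∈ S) q p (le_of_lt h)
      (by show w.getD p r ∈ S; rw [hpv]; exact hvS) hqS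
    refine ⟨j+1, by omega, by omega, hint.1 (j+1) (by omega) (by omega), ?_⟩
    left
    constructor
    · simpa using h3
    · exact h4
  · -- q < p : walk backward
    have hqp : q < p := by omega
    obtain ⟨j, h1, h2, h3, h4⟩ := nat_ivt (f := fun i => w.getD i r ∉ S) p q (le_of_lt hqp)
      hqS (by show ¬ w.getD p r ∉ S; rw [hpv]; simp [hvS])
    refine ⟨j+1, by omega, by omega, hint.2 (j+1) (by omega) (by omega), ?_⟩
    right
    constructor
    · simpa using h3
    · simpa using h4


open scoped Classical in
/-- given a feasible solution `x` of value `k*` to the configuration LP (P) for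
RVRP with regret bound `R`, define `τ(v,S) = Σ_{i : v ∈ P i, red(v, P i) ⊆ S} x_i`, and call a
nonempty set `S ⊆ V` active if `τ(v,S) < 1/2` for every `v ∈ S`.  Then there is a nonnegative
symmetric edge assignment `z` with `Σ_{e ∈ δ(S)} z_e ≥ 1` for every active `S`, and total cost
`Σ_e c_e·z_e ≤ 3·k*·R` (over unordered edges, i.e. half the sum over ordered pairs). -/
theorem forest_cut_lp_feasible {α : Type*} [Fintype α] [DecidableEq α]
    (c : α → α → ℝ) (r : α)
    (hsymm : ∀ u v, c u v = c v u) (hnn : ∀ u v, 0 ≤ c u v)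
    (htri : ∀ u v w, c u v ≤ c u w + c w v) (hrefl : ∀ u, c u u = 0)
    (hpos : ∀ u v, u ≠ v → 0 < c u v)
    (R : ℝ) (hR : 0 ≤ R)
    (m : ℕ) (P : Fin m → List α) (x : Fin m → ℝ)
    (hpath : ∀ i, IsRootedPath r (P i) ∧ pathRegret c r (P i) ≤ R)
    (hx : ∀ i, 0 ≤ x i)
    (hcov : ∀ v, v ≠ r → 1 ≤ ∑ i ∈ Finset.univ.filter (fun i => v ∈ (P i).tail), x i) :
    ∃ z : α → α → ℝ,
      (∀ u v, 0 ≤ z u v) ∧ (∀ u v, z u v = z v u) ∧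
      (∀ S : Finset α, S.Nonempty → r ∉ S →
        (∀ v ∈ S,
          (∑ i ∈ Finset.univ.filter
              (fun i => v ∈ (P i).tail ∧ redSubpathSubset c r (P i) v S), x i) < 1/2) →
        1 ≤ ∑ u ∈ S, ∑ v ∈ Sᶜ, z u v) ∧
      (1/2) * (∑ u, ∑ v, c u v * z u v) ≤ 3 * (∑ i, x i) * R := by
  classical
  set g : Fin m → ℕ → α := fun i idx => (P i).getD idx r with hg
  set ind : Fin m → ℕ → α → α → ℝ := fun i idx u v =>
    if ((g i (idx-1), g i idx) = (u, v) ∨ (g i (idx-1), g i idx) = (v, u))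
        ∧ redEdge c r (P i) idx then 1 else 0 with hind
  set A : Fin m → α → α → ℝ := fun i u v =>
    ∑ idx ∈ Finset.Ico 1 (P i).length, ind i idx u v with hA
  have hindnn : ∀ i idx u v, 0 ≤ ind i idx u v := by
    intro i idx u v
    simp only [hind]
    split_ifs <;> norm_num
  have hAnn : ∀ i u v, 0 ≤ A i u v :=
    fun i u v => Finset.sum_nonneg fun idx _ => hindnn i idx u v
  refine ⟨fun u v => 2 * ∑ i, x i * A i u v, ?_, ?_, ?_, ?_⟩
  · -- nonnegativity
    intro u v
    show 0 ≤ 2 * ∑ i, x i * A i u v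
    have : 0 ≤ ∑ i, x i * A i u v :=
      Finset.sum_nonneg fun i _ => mul_nonneg (hx i) (hAnn i u v)
    linarith
  · -- symmetry
    intro u v
    show 2 * ∑ i, x i * A i u v = 2 * ∑ i, x i * A i v u
    have hAsymm : ∀ i, A i u v = A i v u := by
      intro i
      apply Finset.sum_congr rfl
      intro idx _
      simp only [hind]
      exact if_congr (by tauto) rfl rfl
    simp only [hAsymm]
  · -- cut constraints
    intro S hSne hrS hactive
    obtain ⟨v₀, hv₀⟩ := hSne
    have hv₀r : v₀ ≠ r := fun h => hrS (h ▸ hv₀)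
    have hcover := hcov v₀ hv₀r
    have htau := hactive v₀ hv₀
    set Cov := Finset.univ.filter (fun i => v₀ ∈ (P i).tail) with hCov
    set Bad := Cov.filter (fun i => ¬ redSubpathSubset c r (P i) v₀ S) with hBad
    have hsplit := Finset.sum_filter_add_sum_filter_not Cov
      (fun i => redSubpathSubset c r (P i) v₀ S) x
    have hff : Cov.filter (fun i => redSubpathSubset c r (P i) v₀ S)
        = Finset.univ.filter (fun i => v₀ ∈ (P i).tail ∧ redSubpathSubset c r (P i) v₀ S) := by
      rw [hCov, Finset.filter_filter]
    rw [hff] at hsplit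
    have hBadlb : 1/2 < ∑ i ∈ Bad, x i := by
      rw [hBad]
      linarith
    -- T i : crossing mass of path i
    set T : Fin m → ℝ := fun i => ∑ u ∈ S, ∑ v ∈ Sᶜ, A i u v with hT
    have hTnn : ∀ i, 0 ≤ T i := fun i =>
      Finset.sum_nonneg fun u _ => Finset.sum_nonneg fun v _ => hAnn i u v
    have hT1 : ∀ i ∈ Bad, (1:ℝ) ≤ T i := by
      intro i hi
      simp only [hBad, hCov, Finset.mem_filter, Finset.mem_univ, true_and] at hi
      obtain ⟨hvtail, hnsub⟩ := hi
      obtain ⟨idx, hidx1, hidx2, hidxred, hcross⟩ :=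
        cut_witness c r (P i) S v₀ hvtail hv₀ (hpath i).1 hnsub
      have key : ∀ a b : α, a ∈ S → b ∈ Sᶜ →
          ((g i (idx-1), g i idx) = (a, b) ∨ (g i (idx-1), g i idx) = (b, a)) →
          (1:ℝ) ≤ T i := by
        intro a b haS hbS hab
        have h1 : (1:ℝ) ≤ A i a b := by
          have hmem : idx ∈ Finset.Ico 1 (P i).length := by
            simp only [Finset.mem_Ico]; omega
          have hval : ind i idx a b = 1 := by
            simp only [hind]
            rw [if_pos ⟨hab, hidxred⟩]
          calc (1:ℝ) = ind i idx a b := hval.symm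
            _ ≤ ∑ idx' ∈ Finset.Ico 1 (P i).length, ind i idx' a b :=
                Finset.single_le_sum (fun idx' _ => hindnn i idx' a b) hmem
            _ = A i a b := rfl
        have h2 : A i a b ≤ ∑ v ∈ Sᶜ, A i a v :=
          Finset.single_le_sum (f := fun v => A i a v) (fun v _ => hAnn i a v) hbS
        have h3 : ∑ v ∈ Sᶜ, A i a v ≤ T i :=
          Finset.single_le_sum (f := fun u => ∑ v ∈ Sᶜ, A i u v)
            (fun u _ => Finset.sum_nonneg fun v _ => hAnn i u v) haS
        linarith
      rcases hcross with ⟨h1, h2⟩ | ⟨h1, h2⟩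
      · exact key (g i (idx-1)) (g i idx) h1 (Finset.mem_compl.mpr h2) (Or.inl rfl)
      · exact key (g i idx) (g i (idx-1)) h2 (Finset.mem_compl.mpr h1) (Or.inr rfl)
    -- rearrange the double sum
    have step4 : ∀ i, (∑ u ∈ S, ∑ v ∈ Sᶜ, 2 * (x i * A i u v)) = 2 * (x i * T i) := by
      intro i
      simp only [hT, Finset.mul_sum]
    have hrearr : ∑ u ∈ S, ∑ v ∈ Sᶜ, (2 * ∑ i, x i * A i u v)
        = 2 * ∑ i, x i * T i := by
      calc ∑ u ∈ S, ∑ v ∈ Sᶜ, (2 * ∑ i, x i * A i u v)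
          = ∑ u ∈ S, ∑ v ∈ Sᶜ, ∑ i, 2 * (x i * A i u v) :=
            Finset.sum_congr rfl fun u _ => Finset.sum_congr rfl fun v _ => by
              rw [Finset.mul_sum]
        _ = ∑ u ∈ S, ∑ i, ∑ v ∈ Sᶜ, 2 * (x i * A i u v) :=
            Finset.sum_congr rfl fun u _ => Finset.sum_comm
        _ = ∑ i, ∑ u ∈ S, ∑ v ∈ Sᶜ, 2 * (x i * A i u v) := Finset.sum_comm
        _ = 2 * ∑ i, x i * T i := by
            rw [Finset.mul_sum]
            exact Finset.sum_congr rfl fun i _ => step4 i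
    show 1 ≤ ∑ u ∈ S, ∑ v ∈ Sᶜ, (2 * ∑ i, x i * A i u v)
    rw [hrearr]
    have hb1 : ∑ i ∈ Bad, x i ≤ ∑ i ∈ Bad, x i * T i := by
      apply Finset.sum_le_sum
      intro i hi
      have := hT1 i hi
      have := hx i
      nlinarith
    have hb2 : ∑ i ∈ Bad, x i * T i ≤ ∑ i, x i * T i := by
      apply Finset.sum_le_sum_of_subset_of_nonneg (Finset.subset_univ _)
      intro i _ _
      exact mul_nonneg (hx i) (hTnn i)
    linarith
  · -- cost bound
    set W : Fin m → ℝ := fun i => ∑ idx ∈ Finset.Ico 1 (P i).length,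
      (if redEdge c r (P i) idx then c (g i (idx-1)) (g i idx) else 0) with hWdef
    have hW : ∀ i, W i ≤ 3/2 * R := by
      intro i
      have h := redcost_le c r hsymm hnn htri hrefl R (P i) (hpath i).1 (hpath i).2
      simp only [hWdef, hg]
      exact h
    -- pointwise bound on the inner double sum
    have hidxbound : ∀ i idx, (∑ u, ∑ v, c u v * ind i idx u v)
        ≤ (if redEdge c r (P i) idx then 2 * c (g i (idx-1)) (g i idx) else 0) := by
      intro i idx
      set a := g i (idx-1) with ha
      set b := g i idx with hb
      by_cases hred : redEdge c r (P i) idx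
      · rw [if_pos hred]
        have hpt : ∀ u v : α, c u v * ind i idx u v ≤
            (if (a,b) = (u,v) then c u v else 0) + (if (a,b) = (v,u) then c u v else 0) := by
          intro u v
          simp only [hind]
          by_cases h1 : (a, b) = (u, v)
          · rw [if_pos ⟨Or.inl h1, hred⟩, if_pos h1, mul_one]
            by_cases h2 : (a, b) = (v, u)
            · rw [if_pos h2]
              have := hnn u v
              linarith
            · rw [if_neg h2, add_zero]
          · rw [if_neg h1]
            by_cases h2 : (a, b) = (v, u)
            · rw [if_pos ⟨Or.inr h2, hred⟩, if_pos h2, mul_one, zero_add]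
            · rw [if_neg (fun h => (h.1.elim h1 h2)), if_neg h2, mul_zero, add_zero]
        have hsum1 : (∑ u, ∑ v, (if (a,b) = (u,v) then c u v else 0)) = c a b := by
          simp [Prod.ext_iff, ite_and, Finset.sum_ite_eq]
        have hsum2 : (∑ u, ∑ v, (if (a,b) = (v,u) then c u v else 0)) = c b a := by
          simp [Prod.ext_iff, ite_and, Finset.sum_ite_eq]
        calc (∑ u, ∑ v, c u v * ind i idx u v)
            ≤ ∑ u, ∑ v, ((if (a,b) = (u,v) then c u v else 0)
                + (if (a,b) = (v,u) then c u v else 0)) :=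
              Finset.sum_le_sum fun u _ => Finset.sum_le_sum fun v _ => hpt u v
          _ = (∑ u, ∑ v, (if (a,b) = (u,v) then c u v else 0))
                + (∑ u, ∑ v, (if (a,b) = (v,u) then c u v else 0)) := by
              rw [← Finset.sum_add_distrib]
              exact Finset.sum_congr rfl fun u _ => Finset.sum_add_distrib
          _ = c a b + c b a := by rw [hsum1, hsum2]
          _ = 2 * c a b := by rw [hsymm b a]; ring
      · rw [if_neg hred]
        have hz : ∀ u v : α, c u v * ind i idx u v = 0 := by
          intro u v
          have : ind i idx u v = 0 := by
            simp only [hind]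
            exact if_neg (fun h => hred h.2)
          rw [this, mul_zero]
        apply le_of_eq
        apply Finset.sum_eq_zero
        intro u _
        exact Finset.sum_eq_zero fun v _ => hz u v
    -- per path bound
    have hCA : ∀ i, (∑ u, ∑ v, c u v * A i u v) ≤ 3 * R := by
      intro i
      have step1 : (∑ u, ∑ v, c u v * A i u v)
          = ∑ idx ∈ Finset.Ico 1 (P i).length, ∑ u, ∑ v, c u v * ind i idx u v := by
        calc (∑ u, ∑ v, c u v * A i u v)
            = ∑ u, ∑ v : α, ∑ idx ∈ Finset.Ico 1 (P i).length, c u v * ind i idx u v :=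
              Finset.sum_congr rfl fun u _ => Finset.sum_congr rfl fun v _ => by
                rw [hA]
                exact Finset.mul_sum _ _ _
          _ = ∑ u, ∑ idx ∈ Finset.Ico 1 (P i).length, ∑ v, c u v * ind i idx u v :=
              Finset.sum_congr rfl fun u _ => Finset.sum_comm
          _ = ∑ idx ∈ Finset.Ico 1 (P i).length, ∑ u, ∑ v, c u v * ind i idx u v :=
              Finset.sum_comm
      rw [step1]
      have step2 : ∑ idx ∈ Finset.Ico 1 (P i).length, (∑ u, ∑ v, c u v * ind i idx u v)
          ≤ ∑ idx ∈ Finset.Ico 1 (P i).length,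
            (if redEdge c r (P i) idx then 2 * c (g i (idx-1)) (g i idx) else 0) :=
        Finset.sum_le_sum fun idx _ => hidxbound i idx
      have step3 : ∑ idx ∈ Finset.Ico 1 (P i).length,
            (if redEdge c r (P i) idx then 2 * c (g i (idx-1)) (g i idx) else 0)
          = 2 * W i := by
        rw [hWdef, Finset.mul_sum]
        apply Finset.sum_congr rfl
        intro idx _
        split_ifs <;> ring
      have := hW i
      linarith
    -- final assembly
    show (1/2) * (∑ u, ∑ v, c u v * (2 * ∑ i, x i * A i u v)) ≤ 3 * (∑ i, x i) * R
    have htot : (∑ u, ∑ v, c u v * (2 * ∑ i, x i * A i u v))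
        = ∑ i, 2 * (x i * ∑ u, ∑ v, c u v * A i u v) := by
      calc (∑ u, ∑ v, c u v * (2 * ∑ i, x i * A i u v))
          = ∑ u, ∑ v : α, ∑ i, 2 * (x i * (c u v * A i u v)) :=
            Finset.sum_congr rfl fun u _ => Finset.sum_congr rfl fun v _ => by
              rw [Finset.mul_sum, Finset.mul_sum]
              exact Finset.sum_congr rfl fun i _ => by ring
        _ = ∑ u, ∑ i, ∑ v : α, 2 * (x i * (c u v * A i u v)) :=
            Finset.sum_congr rfl fun u _ => Finset.sum_comm
        _ = ∑ i, ∑ u, ∑ v : α, 2 * (x i * (c u v * A i u v)) := Finset.sum_comm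
        _ = ∑ i, 2 * (x i * ∑ u, ∑ v, c u v * A i u v) := by
            apply Finset.sum_congr rfl
            intro i _
            simp only [Finset.mul_sum]
    rw [htot]
    have hbound : ∑ i, 2 * (x i * ∑ u, ∑ v, c u v * A i u v)
        ≤ ∑ i, 2 * (x i * (3 * R)) := by
      apply Finset.sum_le_sum
      intro i _
      have h1 := hCA i
      have h2 := hx i
      have hCAnn : 0 ≤ ∑ u, ∑ v, c u v * A i u v :=
        Finset.sum_nonneg fun u _ => Finset.sum_nonneg fun v _ =>
          mul_nonneg (hnn u v) (hAnn i u v)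
      nlinarith
    have hfin : ∑ i, 2 * (x i * (3 * R)) = 6 * R * ∑ i, x i := by
      rw [Finset.mul_sum]
      exact Finset.sum_congr rfl fun i _ => by ring
    rw [hfin] at hbound
    linarith
end

section
/- Let S ⊆ V, let ρ > 0, and suppose there exist k rooted paths such that every node of S lies on one of them with additive regret at most ρ with respect to that path. Then for every ε > 0 there exist at most k·⌈1/ε⌉ rooted paths, each of regret at most ε·ρ, whose union covers S. -/
/-- The distance travelled along `w` from its first node until first reaching `v`. -/
def prefixCost {α : Type*} [DecidableEq α] (c : α → α → ℝ) (w : List α) (v : α) : ℝ :=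
  pathCost c (w.take (w.idxOf v + 1))

/-- The (additive) regret of node `v` with respect to the rooted path `w`. -/
def nodeRegret {α : Type*} [DecidableEq α] (c : α → α → ℝ) (r : α) (w : List α) (v : α) : ℝ :=
  prefixCost c w v - c r v

section lems
variable {α : Type*} [DecidableEq α] (c : α → α → ℝ)

lemma pathCost_cons (a b : α) (l : List α) :
    pathCost c (a :: b :: l) = c a b + pathCost c (b :: l) := rfl

lemma pathCost_single (a : α) : pathCost c [a] = 0 := rfl

lemma head_reach (htri : ∀ u v w, c u v ≤ c u w + c w v) :
    ∀ (w : List α) (a b : α), b ∈ w → c a b ≤ pathCost c (a :: w.take (w.idxOf b + 1)) := by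
  intro w
  induction w with
  | nil => intro a b hb; simp at hb
  | cons x rest ih =>
    intro a b hb
    by_cases hbx : b = x
    · subst hbx
      simp [List.idxOf_cons_self, pathCost_cons, pathCost_single]
    · have hb' : b ∈ rest := by
        rcases List.mem_cons.mp hb with h | h
        · exact absurd h hbx
        · exact h
      rw [List.idxOf_cons_ne _ (Ne.symm hbx)]
      have : (x :: rest).take (Nat.succ (rest.idxOf b) + 1)
          = x :: rest.take (rest.idxOf b + 1) := rfl
      rw [this, pathCost_cons]
      calc c a b ≤ c a x + c x b := htri a b x
        _ ≤ c a x + pathCost c (x :: rest.take (rest.idxOf b + 1)) := by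
            linarith [ih x b hb']

lemma prefixCost_cons_self (a : α) (l : List α) : prefixCost c (a :: l) a = 0 := by
  simp [prefixCost, List.idxOf_cons_self, pathCost_single]

lemma prefixCost_cons_ne (x h : α) (rest : List α) (v : α) (hv : v ≠ x) :
    prefixCost c (x :: h :: rest) v = c x h + prefixCost c (h :: rest) v := by
  unfold prefixCost
  rw [List.idxOf_cons_ne _ (Ne.symm hv)]
  rcases Nat.eq_zero_or_eq_succ_pred ((h :: rest).idxOf v) with h0 | h0
  · rw [h0]; rfl
  · rw [h0]; rfl
end lems

section lems2
set_option linter.unusedSectionVars false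
variable {α : Type*} [DecidableEq α] (c : α → α → ℝ)
variable (htri : ∀ u v w, c u v ≤ c u w + c w v)
include htri

lemma pair_ineq {a b : α} : ∀ {w : List α}, List.Sublist [a, b] w → w.Nodup →
    c a b + prefixCost c w a ≤ prefixCost c w b := by
  intro w
  induction w with
  | nil => intro h; cases h
  | cons x w' ih =>
    intro h hnd
    have hx : x ∉ w' := (List.nodup_cons.mp hnd).1
    have hnd' : w'.Nodup := (List.nodup_cons.mp hnd).2
    cases h with
    | cons _ h' =>
      have ha : a ∈ w' := h'.subset (by simp)
      have hb : b ∈ w' := h'.subset (by simp)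
      have hax : a ≠ x := fun e => hx (e ▸ ha)
      have hbx : b ≠ x := fun e => hx (e ▸ hb)
      obtain ⟨h0, rest, rfl⟩ : ∃ h0 rest, w' = h0 :: rest := by
        cases w' with
        | nil => simp at ha
        | cons h0 rest => exact ⟨h0, rest, rfl⟩
      rw [prefixCost_cons_ne c x h0 rest a hax, prefixCost_cons_ne c x h0 rest b hbx]
      have := ih h' hnd'
      linarith
    | cons_cons _ h' =>
      have hb : b ∈ w' := List.singleton_sublist.mp h'
      have hba : b ≠ a := fun e => hx (e ▸ hb)
      rw [prefixCost_cons_self]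
      have hkey := head_reach c htri w' a b hb
      have : prefixCost c (a :: w') b
          = pathCost c (a :: w'.take (w'.idxOf b + 1)) := by
        unfold prefixCost
        rw [List.idxOf_cons_ne _ (Ne.symm hba)]
        rfl
      rw [this]
      linarith

lemma chain_ineq : ∀ (l : List α) (hne : l ≠ []) {w : List α}, List.Sublist l w → w.Nodup →
    pathCost c l + prefixCost c w (l.head hne) ≤ prefixCost c w (l.getLast hne) := by
  intro l
  induction l with
  | nil => intro hne; exact absurd rfl hne
  | cons a l' ih =>
    intro _ w hsub hnd
    cases l' with
    | nil => simp [pathCost_single]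
    | cons b l'' =>
      have h1 : List.Sublist [a, b] w := by
        refine List.Sublist.trans ?_ hsub
        exact (List.nil_sublist l'').cons₂ b |>.cons₂ a
      have h2 : List.Sublist (b :: l'') w := ((b :: l'').sublist_cons_self a).trans hsub
      have hpair := pair_ineq c htri h1 hnd
      have hih := ih (List.cons_ne_nil b l'') h2 hnd
      rw [pathCost_cons, List.getLast_cons (List.cons_ne_nil b l'')]
      simp only [List.head_cons] at hih ⊢
      linarith
end lems2

section lems3
set_option linter.unusedSectionVars false
variable {α : Type*} [DecidableEq α] (c : α → α → ℝ) (r : α)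
variable (htri : ∀ u v w, c u v ≤ c u w + c w v) (hrefl : ∀ u, c u u = 0)

lemma rooted_cons {w : List α} (hw : IsRootedPath r w) : w = r :: w.tail := by
  cases w with
  | nil => simp [IsRootedPath] at hw
  | cons x t =>
    obtain ⟨h1, _⟩ := hw
    simp only [List.head?_cons, Option.some.injEq] at h1
    rw [h1]; rfl

include htri in
lemma nodeRegret_nonneg {w : List α} (hw : IsRootedPath r w) {v : α} (hv : v ∈ w.tail) :
    0 ≤ nodeRegret c r w v := by
  have hw' := rooted_cons r hw
  have hsub : List.Sublist [r, v] w := by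
    rw [hw']
    exact (List.singleton_sublist.mpr hv).cons₂ r
  have := pair_ineq c htri hsub hw.2
  have h0 : prefixCost c w r = 0 := by rw [hw']; exact prefixCost_cons_self c r w.tail
  unfold nodeRegret
  linarith

include htri hrefl in
lemma shortcut_regret {w : List α} (hw : IsRootedPath r w) (L : List α)
    (hL : List.Sublist L w.tail) (δ : ℝ) (hδ : 0 ≤ δ)
    (hbound : ∀ u ∈ L, ∀ v ∈ L, nodeRegret c r w u - nodeRegret c r w v ≤ δ) :
    IsRootedPath r (r :: L) ∧ pathRegret c r (r :: L) ≤ δ := by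
  have hw' := rooted_cons r hw
  have hndw : w.Nodup := hw.2
  have hndt : w.tail.Nodup := by
    rw [hw'] at hndw; exact (List.nodup_cons.mp hndw).2
  have hrt : r ∉ w.tail := by
    rw [hw'] at hndw; exact (List.nodup_cons.mp hndw).1
  constructor
  · refine ⟨rfl, List.nodup_cons.mpr ⟨fun hrL => hrt (hL.subset hrL), hL.nodup hndt⟩⟩
  · cases L with
    | nil =>
      simp [pathRegret, pathCost_single, hrefl r]; exact hδ
    | cons h0 L' =>
      have hLne : (h0 :: L') ≠ [] := List.cons_ne_nil _ _
      have hsubw : List.Sublist (h0 :: L') w := hL.trans (List.tail_sublist w)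
      have hchain := chain_ineq c htri (h0 :: L') hLne hsubw hndw
      simp only [List.head_cons] at hchain
      set lst := (h0 :: L').getLast hLne with hlst
      have hglast : (r :: h0 :: L').getLastD r = lst := by
        rw [List.getLastD_eq_getLast?]
        rw [List.getLast?_eq_getLast (l := r :: h0 :: L') (List.cons_ne_nil _ _)]
        simp only [Option.getD_some]
        exact List.getLast_cons hLne
      have hmemh0 : h0 ∈ h0 :: L' := List.mem_cons_self
      have hmemlst : lst ∈ h0 :: L' := List.getLast_mem hLne
      have hb := hbound lst hmemlst h0 hmemh0
      unfold pathRegret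
      rw [hglast, pathCost_cons]
      unfold nodeRegret at hb
      linarith
end lems3

lemma bucket_bound {x δ : ℝ} {N t : ℕ} (hδ : 0 < δ) (hx0 : 0 ≤ x) (hxN : x ≤ N * δ)
    (hN : 1 ≤ N) (ht : min ⌊x / δ⌋₊ (N - 1) = t) :
    (t : ℝ) * δ ≤ x ∧ x ≤ ((t : ℝ) + 1) * δ := by
  constructor
  · have h1 : t ≤ ⌊x / δ⌋₊ := ht ▸ min_le_left _ _
    have h2 : (t : ℝ) ≤ x / δ := (Nat.le_floor_iff (by positivity)).mp h1
    calc (t : ℝ) * δ ≤ (x / δ) * δ := by nlinarith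
      _ = x := div_mul_cancel₀ x (ne_of_gt hδ)
  · rcases le_or_gt ⌊x / δ⌋₊ (N - 1) with h | h
    · have heq : t = ⌊x / δ⌋₊ := by omega
      have h2 : x / δ < ⌊x / δ⌋₊ + 1 := Nat.lt_floor_add_one _
      have h3 : x < ((⌊x / δ⌋₊ : ℝ) + 1) * δ := by
        rw [← div_lt_iff₀ hδ]; exact_mod_cast h2
      rw [heq]
      linarith
    · have htN : t = N - 1 := by omega
      have : ((N - 1 : ℕ) : ℝ) + 1 = (N : ℝ) := by
        have : (N - 1) + 1 = N := Nat.succ_pred_eq_of_pos hN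
        exact_mod_cast congrArg (Nat.cast (R := ℝ)) this
      rw [htN, this]
      exact hxN

/-- if `k` rooted paths cover every node of `S ⊆ V` with additive regret at most
`ρ > 0`, then for every `ε > 0` there are at most `k·⌈1/ε⌉` rooted paths, each of regret at
most `ε·ρ`, whose union covers `S`. -/
theorem covering_with_scaled_regret {α : Type*} [Fintype α] [DecidableEq α]
    (c : α → α → ℝ) (r : α)
    (hsymm : ∀ u v, c u v = c v u) (hnn : ∀ u v, 0 ≤ c u v)
    (htri : ∀ u v w, c u v ≤ c u w + c w v) (hrefl : ∀ u, c u u = 0)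
    (hpos : ∀ u v, u ≠ v → 0 < c u v)
    (S : Set α) (hSr : r ∉ S)
    (ρ : ℝ) (hρ : 0 < ρ) (k : ℕ)
    (P : Fin k → List α) (hP : ∀ i, IsRootedPath r (P i))
    (hcov : ∀ v ∈ S, ∃ i, v ∈ (P i).tail ∧ nodeRegret c r (P i) v ≤ ρ)
    (ε : ℝ) (hε : 0 < ε) :
    ∃ (n : ℕ) (Q : Fin n → List α),
      n ≤ k * ⌈1/ε⌉₊ ∧
      (∀ j, IsRootedPath r (Q j) ∧ pathRegret c r (Q j) ≤ ε * ρ) ∧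
      (∀ v ∈ S, ∃ j, v ∈ (Q j).tail) := by
  classical
  set N := ⌈1/ε⌉₊ with hNdef
  have hN1 : 1 ≤ N := Nat.one_le_iff_ne_zero.mpr (by
    have : 0 < N := Nat.ceil_pos.mpr (by positivity)
    omega)
  have hNε : ρ ≤ (N : ℝ) * (ε * ρ) := by
    have h1 : 1/ε ≤ (N : ℝ) := Nat.le_ceil _
    have h2 : 1 ≤ (N : ℝ) * ε := by
      rw [div_le_iff₀ hε] at h1
      linarith
    nlinarith
  have hδ : (0:ℝ) < ε * ρ := by positivity
  refine ⟨k * N, fun j =>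
    r :: ((P (finProdFinEquiv.symm j).1).tail.filter (fun v =>
      decide (nodeRegret c r (P (finProdFinEquiv.symm j).1) v ≤ ρ ∧
        min ⌊nodeRegret c r (P (finProdFinEquiv.symm j).1) v / (ε * ρ)⌋₊ (N - 1)
          = ((finProdFinEquiv.symm j).2 : ℕ)))), le_rfl, ?_, ?_⟩
  · intro j
    set i := (finProdFinEquiv.symm j).1 with hi
    set t := (finProdFinEquiv.symm j).2 with ht
    refine shortcut_regret c r htri hrefl (hP i) _ List.filter_sublist (ε * ρ)
      (le_of_lt hδ) ?_
    intro u hu v hv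
    obtain ⟨humem, hup⟩ := List.mem_filter.mp hu
    obtain ⟨hvmem, hvp⟩ := List.mem_filter.mp hv
    obtain ⟨huρ, hubkt⟩ := of_decide_eq_true hup
    obtain ⟨hvρ, hvbkt⟩ := of_decide_eq_true hvp
    have hu0 : 0 ≤ nodeRegret c r (P i) u := nodeRegret_nonneg c r htri (hP i) humem
    have hv0 : 0 ≤ nodeRegret c r (P i) v := nodeRegret_nonneg c r htri (hP i) hvmem
    have Bu := bucket_bound hδ hu0 (le_trans huρ hNε) hN1 hubkt
    have Bv := bucket_bound hδ hv0 (le_trans hvρ hNε) hN1 hvbkt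
    linarith [Bu.2, Bv.1]
  · intro v hv
    obtain ⟨i, hvt, hvρ⟩ := hcov v hv
    have htlt : min ⌊nodeRegret c r (P i) v / (ε * ρ)⌋₊ (N - 1) < N :=
      lt_of_le_of_lt (min_le_right _ _) (by omega)
    refine ⟨finProdFinEquiv (i, ⟨_, htlt⟩), ?_⟩
    simp only [Equiv.symm_apply_apply, List.tail_cons]
    rw [List.mem_filter]
    exact ⟨hvt, decide_eq_true ⟨hvρ, rfl⟩⟩
end

section
/- Let δ > 0 and R = 1 + δ. Assume D_v ≥ 1 for all v ∈ V, and for i ≥ 1 let V_i = {v ∈ V : 2^{i−1} ≤ D_v < 2^i} (so the V_i partition V). Let N ≥ 1 and suppose that for every i ≥ 1 there are rooted paths P^i_1, …, P^i_N (possibly trivial), all of whose non-root nodes lie in V_i, whose union covers V_i, and each of which has regret at most δ·2^{i−2}. Let M = ⌈log₂(3 + 8/δ)⌉. Then there exist at most M·N walks starting at r that together cover V, such that every node v ∈ V is reached at travel time at most R·D_v along the walk covering it (the travel time of v is the total distance traveled from r until first reaching v). -/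
set_option maxHeartbeats 1000000
set_option linter.unusedSectionVars false

namespace MRCaux

section Helpers
variable {α : Type*} [DecidableEq α] (c : α → α → ℝ)

lemma pathCost_nil : pathCost c ([] : List α) = 0 := rfl
lemma pathCost_single (a : α) : pathCost c [a] = 0 := rfl
lemma pathCost_cons_cons (a b : α) (l : List α) :
    pathCost c (a :: b :: l) = c a b + pathCost c (b :: l) := rfl

lemma pathCost_nonneg (hnn : ∀ u v, 0 ≤ c u v) : ∀ l : List α, 0 ≤ pathCost c l := by
  intro l
  induction l with
  | nil => simp [pathCost_nil]
  | cons a t ih =>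
    cases t with
    | nil => simp [pathCost_single]
    | cons b t' =>
      rw [pathCost_cons_cons]
      exact add_nonneg (hnn _ _) ih

lemma eq_cons_of_head? {l : List α} {a : α} (h : l.head? = some a) : l = a :: l.tail := by
  cases l with
  | nil => simp at h
  | cons x t => simp at h; simp [h]

lemma getLastD_mem : ∀ (t : List α) (d : α), t ≠ [] → t.getLastD d ∈ t := by
  intro t
  induction t with
  | nil => intro d h; exact absurd rfl h
  | cons x t' ih =>
    intro d _
    cases t' with
    | nil => simp [List.getLastD_cons]
    | cons y t'' =>
      have := ih x (by simp)
      simp only [List.getLastD_cons] at this ⊢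
      exact List.mem_cons_of_mem _ (by simpa [List.getLastD_cons] using this)

lemma getLastD_append (d : α) (l1 : List α) (a : α) (l2 : List α) :
    (l1 ++ a :: l2).getLastD d = (a :: l2).getLastD d := by
  rw [List.getLastD_eq_getLast?, List.getLastD_eq_getLast?,
    show (l1 ++ a::l2).getLast? = (a::l2).getLast? from
      List.getLast?_append_of_ne_nil _ (by simp)]

lemma pathCost_append (r : α) : ∀ (l1 : List α) (a : α) (l2 : List α), l1 ≠ [] →
    pathCost c (l1 ++ a :: l2) =
      pathCost c l1 + c (l1.getLastD r) a + pathCost c (a :: l2) := by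
  intro l1
  induction l1 with
  | nil => intro a l2 h; exact absurd rfl h
  | cons x t ih =>
    intro a l2 _
    cases t with
    | nil => simp [pathCost_single, pathCost_cons_cons]
    | cons y t' =>
      have ih' := ih a l2 (by simp)
      simp only [List.cons_append] at ih' ⊢
      rw [pathCost_cons_cons c x y (t' ++ a :: l2), ih', pathCost_cons_cons c x y t']
      simp only [List.getLastD_cons]
      ring

lemma pathCost_ge_ends (htri : ∀ u v w, c u v ≤ c u w + c w v) (hrefl : ∀ u, c u u = 0)
    (r : α) : ∀ (t : List α) (a : α), c a ((a :: t).getLastD r) ≤ pathCost c (a :: t) := by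
  intro t
  induction t with
  | nil => intro a; simp [pathCost_single, List.getLastD_cons, hrefl]
  | cons b t' ih =>
    intro a
    calc c a ((a :: b :: t').getLastD r) = c a ((b :: t').getLastD r) := by
          simp [List.getLastD_cons]
      _ ≤ c a b + c b ((b :: t').getLastD r) := htri _ _ _
      _ ≤ c a b + pathCost c (b :: t') := by
          have := ih b
          simp only [List.getLastD_cons] at this ⊢
          linarith
      _ = pathCost c (a :: b :: t') := (pathCost_cons_cons c a b t').symm

lemma take_indexOf_append_left (v : α) : ∀ (l1 l2 : List α), v ∈ l1 →
    (l1 ++ l2).take ((l1 ++ l2).idxOf v + 1) = l1.take (l1.idxOf v + 1) := by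
  intro l1
  induction l1 with
  | nil => intro l2 h; simp at h
  | cons x t ih =>
    intro l2 hv
    by_cases hx : x = v
    · subst hx; simp [List.idxOf_cons_self]
    · have hvt : v ∈ t := by
        rcases List.mem_cons.mp hv with h | h
        · exact absurd h.symm hx
        · exact h
      rw [List.cons_append, List.idxOf_cons_ne _ hx, List.idxOf_cons_ne _ hx]
      simp only [Nat.succ_eq_add_one, List.take_succ_cons]
      rw [ih l2 hvt]

lemma take_indexOf_append_right (v : α) : ∀ (l1 l2 : List α), v ∉ l1 → v ∈ l2 →
    (l1 ++ l2).take ((l1 ++ l2).idxOf v + 1) = l1 ++ l2.take (l2.idxOf v + 1) := by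
  intro l1
  induction l1 with
  | nil => intro l2 _ _; simp
  | cons x t ih =>
    intro l2 hv1 hv2
    have hx : x ≠ v := fun h => hv1 (h ▸ List.mem_cons_self)
    have hvt : v ∉ t := fun h => hv1 (List.mem_cons_of_mem x h)
    rw [List.cons_append, List.idxOf_cons_ne _ hx]
    simp only [Nat.succ_eq_add_one, List.take_succ_cons, List.cons_append]
    rw [ih l2 hvt hv2]

lemma prefixCost_append_left (v : α) (l1 l2 : List α) (hv : v ∈ l1) :
    prefixCost c (l1 ++ l2) v = prefixCost c l1 v := by
  unfold prefixCost
  rw [take_indexOf_append_left v l1 l2 hv]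

lemma prefixCost_append_right (r : α) (v : α) (l1 : List α) (h : α) (t2 : List α)
    (hne : l1 ≠ []) (hv1 : v ∉ l1) (hv2 : v ∈ h :: t2) :
    prefixCost c (l1 ++ h :: t2) v =
      pathCost c l1 + c (l1.getLastD r) h + prefixCost c (h :: t2) v := by
  unfold prefixCost
  rw [take_indexOf_append_right v l1 (h :: t2) hv1 hv2]
  have e : (h :: t2).take ((h :: t2).idxOf v + 1)
      = h :: (t2.take ((h :: t2).idxOf v)) := by
    cases hidx : (h :: t2).idxOf v with
    | zero => simp
    | succ n => simp [List.take_succ_cons]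
  rw [e, pathCost_append c r l1 h _ hne, ← e]

lemma prefixCost_add_last_le (r : α) (htri : ∀ u v w, c u v ≤ c u w + c w v)
    (hrefl : ∀ u, c u u = 0) :
    ∀ (l : List α) (v : α), v ∈ l →
      prefixCost c l v + c v (l.getLastD r) ≤ pathCost c l := by
  intro l
  induction l with
  | nil => intro v h; simp at h
  | cons a t ih =>
    intro v hv
    by_cases hav : a = v
    · subst hav
      have h1 : prefixCost c (a :: t) a = 0 := by
        unfold prefixCost
        rw [List.idxOf_cons_self]
        rfl
      rw [h1, zero_add]
      exact pathCost_ge_ends c htri hrefl r t a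
    · have hvt : v ∈ t := by
        rcases List.mem_cons.mp hv with h | h
        · exact absurd h.symm hav
        · exact h
      cases t with
      | nil => simp at hvt
      | cons b t' =>
        have e1 : prefixCost c (a :: b :: t') v
            = c a b + prefixCost c (b :: t') v := by
          unfold prefixCost
          rw [List.idxOf_cons_ne _ hav]
          simp only [Nat.succ_eq_add_one, List.take_succ_cons]
          by_cases hbv : b = v
          · subst hbv
            rw [List.idxOf_cons_self]
            rfl
          · rw [List.idxOf_cons_ne _ hbv]
            simp only [Nat.succ_eq_add_one, List.take_succ_cons]
            rfl
        have e2 : ((a :: b :: t').getLastD r) = ((b :: t').getLastD r) := by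
          simp [List.getLastD_cons]
        rw [e1, e2, pathCost_cons_cons]
        have := ih v hvt
        linarith

end Helpers

/-- concatenation of the first `K` blocks -/
def walkW {α : Type*} (f : ℕ → List α) : ℕ → List α
  | 0 => []
  | (K+1) => walkW f K ++ f K

lemma walkW_suffix {α : Type*} (f : ℕ → List α) (k : ℕ) :
    ∀ d, ∃ s, walkW f (k + d) = walkW f k ++ s := by
  intro d
  induction d with
  | zero => exact ⟨[], by simp⟩
  | succ d ih =>
    obtain ⟨s, hs⟩ := ih
    exact ⟨s ++ f (k + d), by rw [show k + (d+1) = (k+d) + 1 from rfl, walkW, hs, List.append_assoc]⟩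

lemma walkW_mem {α : Type*} (f : ℕ → List α) :
    ∀ K v, v ∈ walkW f K → ∃ k, k < K ∧ v ∈ f k := by
  intro K
  induction K with
  | zero => intro v h; simp [walkW] at h
  | succ K ih =>
    intro v h
    rw [walkW, List.mem_append] at h
    rcases h with h | h
    · obtain ⟨k, hk, hm⟩ := ih v h
      exact ⟨k, Nat.lt_succ_of_lt hk, hm⟩
    · exact ⟨K, Nat.lt_succ_self K, h⟩

lemma walkW_ne_nil {α : Type*} (f : ℕ → List α) (K : ℕ) (hK : 1 ≤ K)
    (h : f (K - 1) ≠ []) : walkW f K ≠ [] := by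
  cases K with
  | zero => omega
  | succ K =>
    rw [walkW]
    simp only [Nat.add_sub_cancel] at h
    intro hcon
    exact h (List.append_eq_nil_iff.mp hcon).2

lemma walkW_cost {α : Type*} [DecidableEq α] (c : α → α → ℝ) (r : α)
    (hrefl : ∀ u, c u u = 0) (f : ℕ → List α) :
    ∀ K, (∀ k, k < K → (f k).head? = some r) →
    pathCost c (walkW f K) + c ((walkW f K).getLastD r) r ≤
      ∑ k ∈ Finset.range K, (pathCost c (f k) + c ((f k).getLastD r) r) := by
  intro K
  induction K with
  | zero => intro _; simp [walkW, pathCost_nil, hrefl]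
  | succ K ih =>
    intro hf
    have hfK := hf K (Nat.lt_succ_self K)
    have hcons := eq_cons_of_head? hfK
    by_cases hK0 : K = 0
    · subst hK0
      rw [walkW, walkW]
      simp [Finset.sum_range_one]
    · have hK1 : 1 ≤ K := Nat.one_le_iff_ne_zero.mpr hK0
      have hne : walkW f K ≠ [] := by
        apply walkW_ne_nil f K hK1
        have := hf (K-1) (by omega)
        intro hcon
        rw [hcon] at this
        simp at this
      have ihh := ih (fun k hk => hf k (Nat.lt_succ_of_lt hk))
      rw [walkW, hcons, pathCost_append c r _ r _ hne, getLastD_append,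
        Finset.sum_range_succ, ← hcons]
      have h2 : pathCost c (f K) + c ((f K).getLastD r) r
          = pathCost c (r :: (f K).tail) + c ((r :: (f K).tail).getLastD r) r := by
        rw [← hcons]
      rw [hcons] at h2
      linarith [ihh]

lemma geom_aux (M m : ℕ) : ∀ K : ℕ,
    ((2:ℝ)^M - 1) * ∑ k ∈ Finset.range K, (2:ℝ)^(m+1+k*M)
      ≤ (2:ℝ)^(m+1+K*M) - (2:ℝ)^(m+1) := by
  intro K
  induction K with
  | zero => simp
  | succ K ih =>
    rw [Finset.sum_range_succ, mul_add]
    have e : (2:ℝ)^(m+1+(K+1)*M) = (2:ℝ)^(m+1+K*M) * 2^M := by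
      rw [← pow_add]
      congr 1
      ring
    rw [e]
    nlinarith [ih]

end MRCaux

/-- let `δ > 0`, `R = 1 + δ`, `D_v ≥ 1` for all `v ∈ V`, and for `i ≥ 1` let
`V_i = {v : 2^{i−1} ≤ D_v < 2^i}`.  Suppose for every `i ≥ 1` there are `N` rooted paths
(possibly trivial), with non-root nodes in `V_i`, covering `V_i`, each of regret at most
`δ·2^{i−2}`.  With `M = ⌈log₂(3 + 8/δ)⌉`, there exist at most `M·N` walks starting at `r`
covering `V` such that every `v ∈ V` is first reached at travel time at most `R·D_v` along
the walk covering it. -/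
theorem multiplicative_regret_concatenation {α : Type*} [Fintype α] [DecidableEq α]
    (c : α → α → ℝ) (r : α)
    (hsymm : ∀ u v, c u v = c v u) (hnn : ∀ u v, 0 ≤ c u v)
    (htri : ∀ u v w, c u v ≤ c u w + c w v) (hrefl : ∀ u, c u u = 0)
    (hpos : ∀ u v, u ≠ v → 0 < c u v)
    (δ : ℝ) (hδ : 0 < δ)
    (hD : ∀ v, v ≠ r → 1 ≤ c r v)
    (N : ℕ) (hN : 1 ≤ N)
    (P : ℕ → Fin N → List α)
    (hpath : ∀ i : ℕ, 1 ≤ i → ∀ j, IsRootedPath r (P i j) ∧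
      (∀ v ∈ (P i j).tail, (2:ℝ)^((i:ℤ)-1) ≤ c r v ∧ c r v < (2:ℝ)^(i:ℤ)) ∧
      pathRegret c r (P i j) ≤ δ * (2:ℝ)^((i:ℤ)-2))
    (hcov : ∀ i : ℕ, 1 ≤ i → ∀ v, v ≠ r →
      (2:ℝ)^((i:ℤ)-1) ≤ c r v → c r v < (2:ℝ)^(i:ℤ) → ∃ j, v ∈ (P i j).tail) :
    ∃ (n : ℕ) (W : Fin n → List α),
      n ≤ ⌈Real.logb 2 (3 + 8/δ)⌉₊ * N ∧
      (∀ j, (W j).head? = some r) ∧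
      (∀ v, v ≠ r → ∃ j, v ∈ (W j) ∧ prefixCost c (W j) v ≤ (1 + δ) * c r v) := by
  classical
  set M := ⌈Real.logb 2 (3 + 8/δ)⌉₊ with hMdef
  have hδ8 : (0:ℝ) < 8/δ := by positivity
  have hgt1 : (1:ℝ) < 3 + 8/δ := by linarith
  have hMpow : (3 + 8/δ) ≤ (2:ℝ)^M := by
    have h := Nat.le_ceil (Real.logb 2 (3+8/δ))
    have h2 := (Real.logb_le_iff_le_rpow (by norm_num) (by linarith)).mp h
    rwa [Real.rpow_natCast] at h2
  have hM1 : 1 ≤ M := by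
    by_contra h
    push_neg at h
    have hM0 : M = 0 := by omega
    rw [hM0] at hMpow
    norm_num at hMpow
    linarith
  have hM2 : (2:ℝ) ≤ 2^M := by
    calc (2:ℝ) = 2^1 := (pow_one 2).symm
      _ ≤ 2^M := pow_le_pow_right₀ one_le_two hM1
  obtain ⟨I, hI⟩ : ∃ I : ℕ, ∀ v : α, c r v < (2:ℝ)^I := by
    obtain ⟨I, hI⟩ := pow_unbounded_of_one_lt (R := ℝ)
      (Finset.univ.sup' ⟨r, Finset.mem_univ r⟩ (c r)) one_lt_two
    exact ⟨I, fun v => lt_of_le_of_lt (Finset.le_sup' (c r) (Finset.mem_univ v)) hI⟩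
  set K := I + 1 with hKdef
  have hblock : ∀ (i : ℕ), 1 ≤ i → ∀ (j : Fin N), P i j = r :: (P i j).tail :=
    fun i hi j => MRCaux.eq_cons_of_head? ((hpath i hi j).1.1)
  have hz1 : ∀ i : ℕ, (2:ℝ)^((i:ℤ)-1) = (2:ℝ)^i / 2 := by
    intro i; rw [zpow_sub₀ (two_ne_zero), zpow_natCast, zpow_one]
  have hz2 : ∀ i : ℕ, (2:ℝ)^((i:ℤ)-2) = (2:ℝ)^i / 4 := by
    intro i; rw [zpow_sub₀ (two_ne_zero), zpow_natCast]; norm_num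
  -- per-block cost bound
  have hcost : ∀ (i : ℕ), 1 ≤ i → ∀ (j : Fin N),
      pathCost c (P i j) + c ((P i j).getLastD r) r ≤ (2 + δ/4) * (2:ℝ)^i := by
    intro i hi j
    obtain ⟨hp1, hp2, hp3⟩ := hpath i hi j
    have hlast : c r ((P i j).getLastD r) ≤ (2:ℝ)^i := by
      rcases ht : (P i j).tail with _ | ⟨y, t'⟩
      · have h1 : P i j = [r] := by rw [hblock i hi j, ht]
        rw [h1, show ([r]:List α).getLastD r = r from rfl, hrefl]
        positivity
      · have hmem : ((P i j).tail).getLastD r ∈ (P i j).tail := by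
          rw [ht]; exact MRCaux.getLastD_mem _ r (by simp)
        have hlt := (hp2 _ hmem).2
        rw [zpow_natCast] at hlt
        have e : (P i j).getLastD r = ((P i j).tail).getLastD r := by
          conv_lhs => rw [hblock i hi j]
          rw [List.getLastD_cons]
        rw [e]
        exact le_of_lt hlt
    have hreg := hp3
    unfold pathRegret at hreg
    rw [hz2] at hreg
    have hsy := hsymm ((P i j).getLastD r) r
    nlinarith [hnn r ((P i j).getLastD r)]
  have hNpos : 0 < N := hN
  set Wfun : Fin (M*N) → List α := fun q =>
    MRCaux.walkW (fun k => P (q.1 / N + 1 + k * M) ⟨q.1 % N, Nat.mod_lt _ hNpos⟩) K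
    with hWfun
  refine ⟨M * N, Wfun, le_refl _, ?_, ?_⟩
  · -- heads
    intro q
    obtain ⟨s, hs⟩ := MRCaux.walkW_suffix
      (fun k => P (q.1 / N + 1 + k * M) ⟨q.1 % N, Nat.mod_lt _ hNpos⟩) 1 (K - 1)
    rw [show (1 + (K-1)) = K by omega] at hs
    have h0 : MRCaux.walkW (fun k => P (q.1 / N + 1 + k * M) ⟨q.1 % N, Nat.mod_lt _ hNpos⟩) 1
        = P (q.1 / N + 1) ⟨q.1 % N, Nat.mod_lt _ hNpos⟩ := by
      rw [MRCaux.walkW, MRCaux.walkW]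
      simp
    rw [hWfun]
    simp only []
    rw [hs, h0, hblock (q.1 / N + 1) (Nat.le_add_left 1 _)]
    simp
  · -- coverage
    intro v hvr
    have hD1 : 1 ≤ c r v := hD v hvr
    have hex : ∃ i : ℕ, c r v < (2:ℝ)^i := ⟨I, hI v⟩
    set i := Nat.find hex with hidef
    have hup : c r v < (2:ℝ)^i := Nat.find_spec hex
    have hi1 : 1 ≤ i := by
      by_contra h
      push_neg at h
      have : i = 0 := by omega
      rw [this] at hup
      norm_num at hup
      linarith
    have hlow : (2:ℝ)^(i-1) ≤ c r v := by
      have h := Nat.find_min hex (show i - 1 < i by omega)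
      push_neg at h
      exact h
    have hlow' : (2:ℝ)^i / 2 ≤ c r v := by
      have e : (2:ℝ)^i = 2^(i-1) * 2 := by
        rw [← pow_succ]; congr 1; omega
      rw [e]; linarith
    obtain ⟨j, hj⟩ := hcov i hi1 v hvr (by rw [hz1]; exact hlow')
      (by rw [zpow_natCast]; exact hup)
    set m := (i - 1) % M with hmdef
    set k₀ := (i - 1) / M with hk0def
    have hmM : m < M := Nat.mod_lt _ (by omega)
    have hik : i = m + 1 + k₀ * M := by
      have h := Nat.div_add_mod (i-1) M
      calc i = (i-1) + 1 := by omega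
        _ = (M * ((i-1)/M) + (i-1)%M) + 1 := by rw [h]
        _ = m + 1 + k₀ * M := by rw [← hmdef, ← hk0def]; ring
    have hiI : i ≤ I := by
      have hlt : (2:ℝ)^(i-1) < (2:ℝ)^I := lt_of_le_of_lt hlow (hI v)
      have := (pow_lt_pow_iff_right₀ (a := (2:ℝ)) one_lt_two).mp hlt
      omega
    have hk₀K : k₀ + 1 ≤ K := by
      have : k₀ ≤ i - 1 := Nat.div_le_self _ _
      omega
    set q : Fin (M * N) := ⟨m * N + j.1, by
      calc m*N+j.1 < m*N+N := by omega
        _ = (m+1)*N := by ring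
        _ ≤ M*N := Nat.mul_le_mul_right N hmM⟩ with hqdef
    have hqval : q.1 = j.1 + N * m := by rw [hqdef]; ring
    have hdiv : q.1 / N = m := by
      rw [hqval, Nat.add_mul_div_left _ _ hNpos, Nat.div_eq_of_lt j.2, Nat.zero_add]
    have hmod : q.1 % N = j.1 := by
      rw [hqval, Nat.add_mul_mod_self_left, Nat.mod_eq_of_lt j.2]
    set g : ℕ → List α := fun k => P (m + 1 + k * M) j with hgdef
    have hWq : Wfun q = MRCaux.walkW g K := by
      rw [hWfun]
      simp only []
      congr 1
      funext k
      rw [hgdef]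
      simp only []
      congr 1
      · rw [hdiv]
      · exact Fin.ext hmod
    have hone : ∀ k : ℕ, 1 ≤ m + 1 + k * M :=
      fun k => (Nat.le_add_left 1 m).trans (Nat.le_add_right (m+1) (k*M))
    have hgc : ∀ k, g k = r :: (g k).tail := fun k => hblock _ (hone k) j
    have hPg : P i j = g k₀ := by rw [hgdef]; simp only []; rw [← hik]
    have hvtail : v ∈ (g k₀).tail := by rw [← hPg]; exact hj
    have hvg : v ∈ g k₀ := by
      rw [hgc k₀]; exact List.mem_cons_of_mem _ hvtail
    obtain ⟨s, hs⟩ := MRCaux.walkW_suffix g (k₀+1) (K - (k₀+1))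
    rw [show k₀+1 + (K - (k₀+1)) = K by omega] at hs
    have hsplit : MRCaux.walkW g K = (MRCaux.walkW g k₀ ++ g k₀) ++ s := by
      rw [hs]; rfl
    have hvW : v ∈ Wfun q := by
      rw [hWq, hsplit]
      exact List.mem_append_left _ (List.mem_append_right _ hvg)
    -- v not in earlier blocks
    have hnot : v ∉ MRCaux.walkW g k₀ := by
      intro hmem
      obtain ⟨k, hk, hkm⟩ := MRCaux.walkW_mem g k₀ v hmem
      rw [hgc k] at hkm
      rcases List.mem_cons.mp hkm with h | h
      · exact hvr h
      · have hp := (hpath (m+1+k*M) (hone k) j).2.1 v h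
        have hupk : c r v < (2:ℝ)^(m+1+k*M) := by
          have := hp.2
          rwa [zpow_natCast] at this
        have hle : (m+1+k*M) ≤ i - 1 := by
          have h1 : k + 1 ≤ k₀ := hk
          have h2 : k*M + M ≤ k₀*M := by
            calc k*M+M = (k+1)*M := by ring
              _ ≤ k₀*M := Nat.mul_le_mul_right M h1
          exact Nat.le_sub_one_of_lt (by linarith [hik, hM1])
        have hpow : (2:ℝ)^(m+1+k*M) ≤ (2:ℝ)^(i-1) := pow_le_pow_right₀ one_le_two hle
        linarith
    -- prefix cost bound inside the block
    have hpref_blk : prefixCost c (g k₀) v ≤ c r v + δ * ((2:ℝ)^i/4) := by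
      have hA := MRCaux.prefixCost_add_last_le c r htri hrefl (g k₀) v hvg
      have hreg := (hpath i hi1 j).2.2
      unfold pathRegret at hreg
      rw [hz2, hPg] at hreg
      have htr : c r ((g k₀).getLastD r) ≤ c r v + c v ((g k₀).getLastD r) := htri _ _ _
      linarith
    set S : ℝ := ∑ k ∈ Finset.range k₀, (pathCost c (g k) + c ((g k).getLastD r) r)
      with hSdef
    have key : prefixCost c (MRCaux.walkW g K) v ≤ S + (c r v + δ * ((2:ℝ)^i/4)) := by
      rcases Nat.eq_zero_or_pos k₀ with h0 | hposk
      · have e : MRCaux.walkW g K = g 0 ++ s := by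
          rw [hsplit, h0]
          simp [MRCaux.walkW]
        have hS0 : S = 0 := by rw [hSdef, h0]; simp
        rw [e, MRCaux.prefixCost_append_left c v _ s (h0 ▸ hvg), hS0]
        have := h0 ▸ hpref_blk
        linarith
      · have hne : MRCaux.walkW g k₀ ≠ [] := by
          apply MRCaux.walkW_ne_nil g k₀ hposk
          rw [hgc (k₀-1)]; simp
        have e : MRCaux.walkW g K = MRCaux.walkW g k₀ ++ (r :: ((g k₀).tail ++ s)) := by
          rw [hsplit, List.append_assoc]
          congr 1
          rw [hgc k₀]
          simp
        have hv2 : v ∈ r :: ((g k₀).tail ++ s) :=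
          List.mem_cons_of_mem _ (List.mem_append_left _ hvtail)
        rw [e, MRCaux.prefixCost_append_right c r v _ r ((g k₀).tail ++ s) hne hnot hv2]
        have hpc : prefixCost c (r :: ((g k₀).tail ++ s)) v = prefixCost c (g k₀) v := by
          rw [show (r :: ((g k₀).tail ++ s)) = (r :: (g k₀).tail) ++ s from by simp,
            MRCaux.prefixCost_append_left c v _ s (by rw [← hgc k₀]; exact hvg),
            ← hgc k₀]
        have hDsum := MRCaux.walkW_cost c r hrefl g k₀
          (fun k hk => by rw [hgc k]; simp)
        rw [hpc]
        linarith
    -- bound the sum S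
    have hMm1 : (0:ℝ) < 2^M - 1 := by linarith
    have hSig : ∑ k ∈ Finset.range k₀, (2:ℝ)^(m+1+k*M) ≤ (2:ℝ)^i / (2^M - 1) := by
      rw [le_div_iff₀ hMm1, mul_comm]
      calc ((2:ℝ)^M - 1) * ∑ k ∈ Finset.range k₀, (2:ℝ)^(m+1+k*M)
          ≤ (2:ℝ)^(m+1+k₀*M) - (2:ℝ)^(m+1) := MRCaux.geom_aux M m k₀
        _ ≤ (2:ℝ)^i := by
            rw [← hik]
            have : (0:ℝ) ≤ 2^(m+1) := by positivity
            linarith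
    have hS : S ≤ (2+δ/4) * ((2:ℝ)^i/(2^M-1)) := by
      calc S ≤ ∑ k ∈ Finset.range k₀, (2+δ/4) * (2:ℝ)^(m+1+k*M) := by
            apply Finset.sum_le_sum
            intro k _
            exact hcost (m+1+k*M) (hone k) j
        _ = (2+δ/4) * ∑ k ∈ Finset.range k₀, (2:ℝ)^(m+1+k*M) := by
            rw [Finset.mul_sum]
        _ ≤ (2+δ/4) * ((2:ℝ)^i/(2^M-1)) := by
            apply mul_le_mul_of_nonneg_left hSig
            linarith
    have h8 : 8 + δ ≤ δ * ((2:ℝ)^M - 1) := by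
      have h1 : δ * (3 + 8/δ) ≤ δ * 2^M := mul_le_mul_of_nonneg_left hMpow hδ.le
      have h2 : δ * (3 + 8/δ) = 3*δ + 8 := by field_simp
      nlinarith
    have hxpos : (0:ℝ) < 2^i := by positivity
    have hfinal : (2+δ/4) * ((2:ℝ)^i/(2^M-1)) ≤ δ * ((2:ℝ)^i/4) := by
      rw [mul_div_assoc', div_le_iff₀ hMm1]
      have h3 := mul_le_mul_of_nonneg_left h8 (show (0:ℝ) ≤ 2^i/4 by positivity)
      nlinarith
    have hmul : δ * ((2:ℝ)^i/2) ≤ δ * c r v := mul_le_mul_of_nonneg_left hlow' hδ.le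
    refine ⟨q, hvW, ?_⟩
    rw [hWq]
    calc prefixCost c (MRCaux.walkW g K) v ≤ S + (c r v + δ * ((2:ℝ)^i/4)) := key
      _ ≤ δ * ((2:ℝ)^i/4) + (c r v + δ * ((2:ℝ)^i/4)) := by linarith
      _ = c r v + δ * ((2:ℝ)^i/2) := by ring
      _ ≤ c r v + δ * c r v := by linarith
      _ = (1+δ) * c r v := by ring
end

section
/- Let a_0 > a_1 > … > a_k > 0 be integers with a_0 ≥ 2 such that 2^(a_{i+1} − a_i) < (log₂ a_{i+1}) / a_{i+1} for all i = 0, …, k−1. Then k ≤ 16 + 9·a_0 / log₂ a_0; in particular k = O(a_0 / log a_0). -/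
set_option maxHeartbeats 1000000

lemma log_le_div_e {y : ℝ} (hy : 0 < y) : Real.log y ≤ y / Real.exp 1 := by
  have h1 : Real.log (y / Real.exp 1) ≤ y / Real.exp 1 - 1 :=
    Real.log_le_sub_one_of_pos (by positivity)
  have h2 : Real.log (y / Real.exp 1) = Real.log y - 1 := by
    rw [Real.log_div (ne_of_gt hy) (Real.exp_ne_zero 1), Real.log_exp]
  linarith

lemma elog2 : (1.8:ℝ) ≤ Real.log 2 * Real.exp 1 := by
  have he : (2.7182818283 : ℝ) < Real.exp 1 := Real.exp_one_gt_d9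
  have hl2 : (0.6931471803 : ℝ) < Real.log 2 := Real.log_two_gt_d9
  nlinarith

lemma logb2_le_rpow {x : ℝ} (hx : 1 ≤ x) : Real.logb 2 x ≤ x ^ ((2:ℝ)/3) := by
  have hx0 : 0 < x := lt_of_lt_of_le one_pos hx
  set y := x ^ ((2:ℝ)/3) with hy
  have hy0 : 0 < y := Real.rpow_pos_of_pos hx0 _
  have hly : Real.log y = (2/3) * Real.log x := Real.log_rpow hx0 _
  have h1 : Real.log y ≤ y / Real.exp 1 := log_le_div_e hy0
  have hl2 : (0.6931471803 : ℝ) < Real.log 2 := Real.log_two_gt_d9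
  rw [Real.logb, div_le_iff₀ (by linarith)]
  have h2 : Real.log x ≤ (3/2) * (y / Real.exp 1) := by linarith
  have h3 : (3/2) * (y / Real.exp 1) ≤ y * Real.log 2 := by
    rw [mul_div_assoc', div_le_iff₀ (Real.exp_pos 1)]
    nlinarith [elog2, hy0]
  linarith

lemma logb2_le_sqrt {x : ℝ} (hx : 1 ≤ x) : Real.logb 2 x ≤ (9/7) * Real.sqrt x := by
  have hx0 : 0 < x := lt_of_lt_of_le one_pos hx
  have hs0 : 0 < Real.sqrt x := Real.sqrt_pos.mpr hx0
  have hlx : Real.log x = 2 * Real.log (Real.sqrt x) := by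
    rw [Real.log_sqrt hx0.le]; ring
  have h1 : Real.log (Real.sqrt x) ≤ Real.sqrt x / Real.exp 1 := log_le_div_e hs0
  have hl2 : (0.6931471803 : ℝ) < Real.log 2 := Real.log_two_gt_d9
  rw [Real.logb, div_le_iff₀ (by linarith)]
  have h2 : Real.log x ≤ 2 * (Real.sqrt x / Real.exp 1) := by linarith
  have h3 : 2 * (Real.sqrt x / Real.exp 1) ≤ (9/7) * Real.sqrt x * Real.log 2 := by
    rw [mul_div_assoc', div_le_iff₀ (Real.exp_pos 1)]
    nlinarith [elog2, hs0]
  linarith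

lemma one_le_logb {m : ℝ} (hm : 2 ≤ m) : 1 ≤ Real.logb 2 m := by
  rw [Real.le_logb_iff_rpow_le (by norm_num) (by linarith), Real.rpow_one]
  exact hm

lemma gap_lemma {m d : ℝ} (hm : 2 ≤ m) (h : (2:ℝ) ^ (m - d) < Real.logb 2 m / m) :
    (1/3) * Real.logb 2 m < d - m := by
  have hm0 : 0 < m := by linarith
  have hL1 : 1 ≤ Real.logb 2 m := one_le_logb hm
  have hL0 : 0 < Real.logb 2 m := by linarith
  have h2 : Real.logb 2 ((2:ℝ) ^ (m - d)) < Real.logb 2 (Real.logb 2 m / m) :=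
    Real.logb_lt_logb (by norm_num) (Real.rpow_pos_of_pos (by norm_num) _) h
  rw [Real.logb_rpow (by norm_num) (by norm_num),
    Real.logb_div (by linarith) (by linarith)] at h2
  have h3 : Real.logb 2 (Real.logb 2 m) ≤ (2/3) * Real.logb 2 m := by
    have h4 : Real.logb 2 m ≤ m ^ ((2:ℝ)/3) := logb2_le_rpow (by linarith)
    have h5 : Real.logb 2 (Real.logb 2 m) ≤ Real.logb 2 (m ^ ((2:ℝ)/3)) :=
      Real.logb_le_logb_of_le (by norm_num) hL0 h4
    rwa [Real.logb_rpow_eq_mul_logb_of_pos hm0] at h5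
  linarith



/-- let `a_0 > a_1 > … > a_k > 0` be integers with `a_0 ≥ 2` such that
`2^(a_{i+1} − a_i) < (log₂ a_{i+1}) / a_{i+1}` for all `i < k` (real exponentiation).
Then `k ≤ 16 + 9·a_0 / log₂ a_0`. -/
theorem sequence_length_bound (k : ℕ) (a : ℕ → ℕ)
    (ha0 : 2 ≤ a 0)
    (hdec : ∀ i < k, a (i + 1) < a i)
    (hpos : 0 < a k)
    (hcond : ∀ i < k,
      (2:ℝ) ^ ((a (i + 1) : ℝ) - (a i : ℝ))
        < Real.logb 2 (a (i + 1)) / (a (i + 1) : ℝ)) :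
    (k : ℝ) ≤ 16 + 9 * (a 0 : ℝ) / Real.logb 2 (a 0) := by
  have key : ∀ d i, i + d ≤ k → a (i + d) + d ≤ a i := by
    intro d
    induction d with
    | zero => intro i _; simp
    | succ n ih =>
      intro i h
      have h1 : i + 1 + n ≤ k := by omega
      have h2 := ih (i + 1) h1
      have h3 : a (i + 1) < a i := hdec i (by omega)
      have h4 : i + (n + 1) = i + 1 + n := by omega
      rw [h4]; omega
  have hk1 : k + 1 ≤ a 0 := by
    have h := key k 0 (by omega)
    simp only [Nat.zero_add] at h
    omega
  have hL1 : 1 ≤ Real.logb 2 (a 0) := one_le_logb (by exact_mod_cast ha0)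
  have hL0 : 0 < Real.logb 2 (a 0) := by linarith
  obtain ⟨L, hLdef⟩ : ∃ x, x = Real.logb 2 (a 0 : ℝ) := ⟨_, rfl⟩
  rw [← hLdef] at hL1 hL0 ⊢
  obtain ⟨Q, hQdef⟩ : ∃ x, x = (a 0 : ℝ) / L := ⟨_, rfl⟩
  have hgoal : 9 * (a 0 : ℝ) / L = 9 * Q := by rw [hQdef]; ring
  rw [hgoal]
  have hQ0 : 0 ≤ Q := by rw [hQdef]; positivity
  by_cases hsmall : a 0 < 512
  · have h512 : (a 0 : ℝ) ≤ 512 := by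
      have : a 0 ≤ 512 := by omega
      exact_mod_cast this
    have hL9 : L ≤ 9 := by
      have h1 : L ≤ Real.logb 2 512 := by
        rw [hLdef]
        exact Real.logb_le_logb_of_le (by norm_num) (by positivity) h512
      have h2 : Real.logb 2 ((2:ℝ) ^ (9:ℝ)) = 9 :=
        Real.logb_rpow (by norm_num) (by norm_num)
      have h3 : (2:ℝ) ^ (9:ℝ) = 512 := by
        rw [show (9:ℝ) = ((9:ℕ):ℝ) by norm_num, Real.rpow_natCast]; norm_num
      rw [h3] at h2
      linarith
    have hAQ : (a 0 : ℝ) ≤ 9 * Q := by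
      rw [hQdef, ← mul_div_assoc, le_div_iff₀ hL0]
      nlinarith [show (0:ℝ) < (a 0 : ℝ) by positivity]
    have hkA : (k : ℝ) ≤ (a 0 : ℝ) := by
      have : k ≤ a 0 := by omega
      exact_mod_cast this
    linarith
  · push_neg at hsmall
    have hL9 : 9 ≤ L := by
      have h512 : (512 : ℝ) ≤ (a 0 : ℝ) := by exact_mod_cast hsmall
      have h1 : Real.logb 2 512 ≤ L := by
        rw [hLdef]
        exact Real.logb_le_logb_of_le (by norm_num) (by norm_num) h512
      have h2 : Real.logb 2 ((2:ℝ) ^ (9:ℝ)) = 9 :=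
        Real.logb_rpow (by norm_num) (by norm_num)
      have h3 : (2:ℝ) ^ (9:ℝ) = 512 := by
        rw [show (9:ℝ) = ((9:ℕ):ℝ) by norm_num, Real.rpow_natCast]; norm_num
      rw [h3] at h2
      linarith
    obtain ⟨T, hTdef⟩ : ∃ x, x = Nat.sqrt (a 0) := ⟨_, rfl⟩
    have hT2 : 2 ≤ T := by
      rw [hTdef]
      exact Nat.le_sqrt.mpr (by omega)
    have hTR2 : (2:ℝ) ≤ (T:ℝ) := by exact_mod_cast hT2
    have hTsqN : T * T ≤ a 0 := by
      have h := Nat.sqrt_le' (a 0); rw [pow_two] at h; rw [hTdef]; exact h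
    have hTsq : (T:ℝ) * (T:ℝ) ≤ (a 0 : ℝ) := by exact_mod_cast hTsqN
    have hTsq2 : (a 0 : ℕ) < (T + 1) * (T + 1) := by
      have h := Nat.lt_succ_sqrt' (a 0); rw [pow_two] at h; rw [hTdef]; exact h
    have hlogT : 7/18 * L ≤ Real.logb 2 (T:ℝ) := by
      have h4 : (a 0 : ℝ) < 4 * (T:ℝ)^2 := by
        have hc : ((a 0 : ℕ) : ℝ) < ((T:ℝ) + 1) * ((T:ℝ) + 1) := by exact_mod_cast hTsq2
        nlinarith
      have h5 : L ≤ Real.logb 2 (4 * (T:ℝ)^2) := by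
        rw [hLdef]
        exact Real.logb_le_logb_of_le (by norm_num) (by positivity) h4.le
      have h6 : Real.logb 2 (4 * (T:ℝ)^2) = 2 + 2 * Real.logb 2 (T:ℝ) := by
        have hT0 : (T:ℝ) ≠ 0 := by linarith
        have hlog2 : Real.log 2 ≠ 0 := by
          have := Real.log_two_gt_d9; linarith
        rw [Real.logb, Real.log_mul (by norm_num) (by positivity),
          Real.log_pow, show (4:ℝ) = 2^(2:ℕ) by norm_num, Real.log_pow, Real.logb]
        field_simp
        norm_num
      linarith
    have hlogT1 : 1 ≤ Real.logb 2 (T:ℝ) := one_le_logb hTR2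
    obtain ⟨g, hgdef⟩ : ∃ x, x = 1/3 * Real.logb 2 (T:ℝ) := ⟨_, rfl⟩
    have hg0 : 0 < g := by rw [hgdef]; linarith
    have hP : ∃ i, i = k ∨ a i < T := ⟨k, Or.inl rfl⟩
    obtain ⟨t, htspec, htmin⟩ : ∃ t, (t = k ∨ a t < T) ∧ ∀ i < t, ¬(i = k ∨ a i < T) :=
      ⟨Nat.find hP, Nat.find_spec hP, fun i hi => Nat.find_min hP hi⟩
    have ht_le : t ≤ k := by
      by_contra hc
      exact htmin k (by omega) (Or.inl rfl)
    have ht_lt : ∀ i < t, i ≠ k ∧ T ≤ a i := by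
      intro i hi
      have := htmin i hi
      push_neg at this
      exact ⟨this.1, this.2⟩
    have hkt : k - t ≤ T := by
      rcases htspec with h | h
      · omega
      · have h2 := key (k - t) t (by omega)
        rw [show t + (k - t) = k by omega] at h2
        omega
    have hub : ∀ i, i < t → (a i : ℝ) ≤ (a 0 : ℝ) - i * g := by
      intro i
      induction i with
      | zero => intro _; norm_num
      | succ n ih =>
        intro h
        have hn : n < t := by omega
        have h1 := ih hn
        have hTn : T ≤ a (n + 1) := (ht_lt (n + 1) h).2
        have hnk : n < k := by omega
        have hm2 : (2:ℝ) ≤ (a (n + 1) : ℝ) := by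
          have : 2 ≤ a (n + 1) := le_trans hT2 hTn
          exact_mod_cast this
        have hgap := gap_lemma hm2 (hcond n hnk)
        have hmono : Real.logb 2 (T:ℝ) ≤ Real.logb 2 (a (n + 1) : ℝ) :=
          Real.logb_le_logb_of_le (by norm_num) (by linarith) (by exact_mod_cast hTn)
        have hcast : ((n + 1 : ℕ) : ℝ) = (n : ℝ) + 1 := by push_cast; ring
        rw [hcast]
        have hgg : g < (a n : ℝ) - (a (n + 1) : ℝ) := by
          rw [hgdef]; nlinarith
        linarith
    have htb : (t : ℝ) ≤ 1 + 54/7 * Q := by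
      rcases Nat.eq_zero_or_pos t with h0 | h0
      · rw [h0]; push_cast; linarith
      · have h1 := hub (t - 1) (by omega)
        have h2 : (T:ℝ) ≤ (a (t - 1) : ℝ) := by
          exact_mod_cast (ht_lt (t - 1) (by omega)).2
        have hcast : ((t - 1 : ℕ) : ℝ) = (t : ℝ) - 1 := by
          have : (1:ℕ) ≤ t := h0
          push_cast [this]; ring
        rw [hcast] at h1
        have ht1 : (0:ℝ) ≤ (t:ℝ) - 1 := by
          have : (1:ℝ) ≤ (t:ℝ) := by exact_mod_cast h0
          linarith
        have h3 : ((t:ℝ) - 1) * g ≤ (a 0 : ℝ) := by nlinarith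
        have hgL : 7/54 * L ≤ g := by rw [hgdef]; linarith
        have h4 : ((t:ℝ) - 1) * (7/54 * L) ≤ (a 0 : ℝ) :=
          le_trans (mul_le_mul_of_nonneg_left hgL ht1) h3
        have h5 : (t:ℝ) - 1 ≤ 54/7 * Q := by
          rw [hQdef, ← mul_div_assoc, le_div_iff₀ hL0]
          nlinarith
        linarith
    have hsqrtT : (T:ℝ) ≤ Real.sqrt (a 0 : ℝ) := by
      rw [show (T:ℝ) = Real.sqrt ((T:ℝ) * (T:ℝ)) by
        rw [Real.sqrt_mul_self (by linarith)]]
      exact Real.sqrt_le_sqrt hTsq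
    have hsA : Real.sqrt (a 0 : ℝ) ≤ 9/7 * Q := by
      have hlb := logb2_le_sqrt (x := ((a 0 : ℕ) : ℝ)) (by exact_mod_cast Nat.one_le_iff_ne_zero.mpr (by omega))
      have hsq : Real.sqrt (a 0 : ℝ) * Real.sqrt (a 0 : ℝ) = (a 0 : ℝ) :=
        Real.mul_self_sqrt (by positivity)
      have hs0 : 0 ≤ Real.sqrt (a 0 : ℝ) := Real.sqrt_nonneg _
      rw [← hLdef] at hlb
      rw [hQdef, ← mul_div_assoc, le_div_iff₀ hL0]
      nlinarith
    have hktR : (k : ℝ) ≤ ((k - t : ℕ) : ℝ) + (t : ℝ) := by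
      have : k ≤ (k - t) + t := by omega
      exact_mod_cast this
    have hktT : ((k - t : ℕ) : ℝ) ≤ (T : ℝ) := by exact_mod_cast hkt
    linarith
end

section
/- For all integers h ≥ 1 and c ≥ 1, let k = c·(2h−1) and consider the RVRP instance given by the shortest-path metric of the graph consisting of c·h disjoint copies of the ladder graph L_h, all sharing the common root r. Then: (a) there is a feasible fractional solution x to the configuration LP (P) with regret bound R = 1 (i.e., Σ_{P ∈ C_1 : v ∈ P} x_P ≥ 1 for every non-root node v) of value Σ_P x_P ≤ k; and (b) every collection of rooted paths, each of regret strictly less than 2h−1, whose union covers all non-root nodes, contains at least k + c = 2ch paths. -/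
/-- Extended-real cost of a walk, given edge weights `g` (with `⊤` for non-edges). -/
noncomputable def walkCostE {β : Type*} (g : β → β → ENNReal) : List β → ENNReal
  | [] => 0
  | [_] => 0
  | a :: b :: l => g a b + walkCostE g (b :: l)

/-- Shortest-path distance induced by edge weights `g`. -/
noncomputable def spDist {β : Type*} (g : β → β → ENNReal) (u v : β) : ℝ :=
  (⨅ l ∈ {l : List β | l.head? = some u ∧ l.getLast? = some v}, walkCostE g l).toReal

/-- Nodes of `copies` disjoint copies of the ladder graph `L_h` sharing a common root:
`Sum.inl ()` is the root `r`; `Sum.inr (j, i, b)` is `u_{i+1}` (if `b = true`) or `v_{i+1}`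
(if `b = false`) of copy `j`. -/
abbrev LadderNode (h copies : ℕ) := Unit ⊕ (Fin copies × Fin (2 * h - 1) × Bool)

/-- Edge weights of `copies` disjoint copies of the ladder graph `L_h` sharing the root:
"vertical" edges `(u_i,u_{i+1})`, `(v_i,v_{i+1})` (within one copy, with `u_0 = v_0 = r`)
cost `h`, "rung" edges `(u_i,v_i)` cost `1`, everything else is a non-edge (`⊤`). -/
noncomputable def ladderEdges (h copies : ℕ) :
    LadderNode h copies → LadderNode h copies → ENNReal
  | Sum.inl _, Sum.inl _ => ⊤
  | Sum.inl _, Sum.inr (_, i, _) => if (i : ℕ) = 0 then (h : ENNReal) else ⊤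
  | Sum.inr (_, i, _), Sum.inl _ => if (i : ℕ) = 0 then (h : ENNReal) else ⊤
  | Sum.inr (j, i, b), Sum.inr (j', i', b') =>
      if j = j' ∧ b = b' ∧ ((i : ℕ) + 1 = (i' : ℕ) ∨ (i' : ℕ) + 1 = (i : ℕ)) then (h : ENNReal)
      else if j = j' ∧ i = i' ∧ b ≠ b' then 1 else ⊤

/-- The shortest-path metric of `copies` disjoint copies of `L_h` sharing the root. -/
noncomputable def ladderMetric (h copies : ℕ) :
    LadderNode h copies → LadderNode h copies → ℝ :=
  spDist (ladderEdges h copies)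


/-- Decidability of list membership from decidable equality (helper instance). -/
instance listDecidableMem {γ : Type*} [DecidableEq γ] (v : γ) (l : List γ) :
    Decidable (v ∈ l) :=
  List.rec (.isFalse (by simp))
    (fun a l ih => decidable_of_iff (v = a ∨ v ∈ l) (by simp [eq_comm])) l

namespace KR


variable {β : Type*}

lemma walkCostE_cons_cons (g : β → β → ENNReal) (a b : β) (l : List β) :
    walkCostE g (a :: b :: l) = g a b + walkCostE g (b :: l) := rfl

lemma walk_lower (g : β → β → ENNReal) (φ : β → ℕ)
    (hφ : ∀ x y, (φ y : ENNReal) ≤ φ x + g x y) :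
    ∀ (l : List β) (u v : β), l.head? = some u → l.getLast? = some v →
      (φ v : ENNReal) ≤ φ u + walkCostE g l := by
  intro l
  induction l with
  | nil => intro u v h1 h2; simp at h1
  | cons a t ih =>
    intro u v h1 h2
    have h1' : a = u := by simpa using h1
    subst h1'
    cases t with
    | nil =>
      simp [List.getLast?] at h2; subst h2
      simp [walkCostE]
    | cons b t2 =>
      have h2' : (b :: t2).getLast? = some v := by
        rw [List.getLast?_cons_cons] at h2; exact h2
      have := ih b v rfl h2'
      calc (φ v : ENNReal) ≤ φ b + walkCostE g (b :: t2) := this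
        _ ≤ (φ a + g a b) + walkCostE g (b :: t2) := by
            exact add_le_add_left (hφ a b) _
        _ = φ a + walkCostE g (a :: b :: t2) := by
            rw [walkCostE_cons_cons, add_assoc]

lemma spDist_le_nat (g : β → β → ENNReal) (u v : β) (l : List β)
    (h1 : l.head? = some u) (h2 : l.getLast? = some v) (N : ℕ) (hc : walkCostE g l ≤ N) :
    spDist g u v ≤ N := by
  have hI : (⨅ l ∈ {l : List β | l.head? = some u ∧ l.getLast? = some v}, walkCostE g l)
      ≤ (N : ENNReal) := le_trans (iInf₂_le l ⟨h1, h2⟩) hc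
  have := ENNReal.toReal_mono (by simp) hI
  simpa [spDist] using this

lemma le_spDist (g : β → β → ENNReal) (u v : β) (φ : β → ℕ)
    (hφ : ∀ x y, (φ y : ENNReal) ≤ φ x + g x y)
    (l : List β) (h1 : l.head? = some u) (h2 : l.getLast? = some v)
    (hfin : walkCostE g l ≠ ⊤) :
    (φ v : ℝ) - φ u ≤ spDist g u v := by
  set I := ⨅ l ∈ {l : List β | l.head? = some u ∧ l.getLast? = some v}, walkCostE g l with hIdef
  have hIne : I ≠ ⊤ := by
    intro htop
    exact hfin (top_le_iff.mp (htop ▸ iInf₂_le l ⟨h1, h2⟩))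
  by_cases hc : φ v ≤ φ u
  · have : (φ v : ℝ) - φ u ≤ 0 := by
      have : (φ v : ℝ) ≤ φ u := by exact_mod_cast hc
      linarith
    exact le_trans this ENNReal.toReal_nonneg
  · push_neg at hc
    have hle : φ u ≤ φ v := le_of_lt hc
    have key : ((φ v - φ u : ℕ) : ENNReal) ≤ I := by
      apply le_iInf₂
      intro l' hl'
      have hw := walk_lower g φ hφ l' u v hl'.1 hl'.2
      rw [ENNReal.natCast_sub]
      exact tsub_le_iff_left.mpr hw
    have := ENNReal.toReal_mono hIne key
    rw [ENNReal.toReal_natCast] at this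
    have hcast : ((φ v - φ u : ℕ) : ℝ) = (φ v : ℝ) - φ u := by
      push_cast [Nat.cast_sub hle]; ring
    rw [hcast] at this
    exact this

lemma spDist_nonneg (g : β → β → ENNReal) (u v : β) : 0 ≤ spDist g u v :=
  ENNReal.toReal_nonneg

/-- join two walks sharing endpoint -/
lemma walkCostE_join (g : β → β → ENNReal) :
    ∀ (l1 l2 : List β) (z : β), l1.getLast? = some z → l2.head? = some z →
      walkCostE g (l1 ++ l2.tail) = walkCostE g l1 + walkCostE g l2 := by
  intro l1
  induction l1 with
  | nil => intro l2 z h1 h2; simp at h1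
  | cons a t ih =>
    intro l2 z h1 h2
    cases t with
    | nil =>
      simp [List.getLast?] at h1; subst h1
      cases l2 with
      | nil => simp at h2
      | cons b t2 =>
        simp at h2; subst h2
        cases t2 with
        | nil => simp [walkCostE]
        | cons c t3 => simp [walkCostE_cons_cons, walkCostE]
    | cons b t2 =>
      have h1' : (b :: t2).getLast? = some z := by
        rw [List.getLast?_cons_cons] at h1; exact h1
      have := ih l2 z h1' h2
      calc walkCostE g ((a :: b :: t2) ++ l2.tail)
          = g a b + walkCostE g ((b :: t2) ++ l2.tail) := rfl
        _ = g a b + (walkCostE g (b :: t2) + walkCostE g l2) := by rw [this]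
        _ = walkCostE g (a :: b :: t2) + walkCostE g l2 := by
            rw [walkCostE_cons_cons, add_assoc]

lemma walkCostE_append_single (g : β → β → ENNReal) :
    ∀ (l : List β) (x a : β), l.getLast? = some x →
      walkCostE g (l ++ [a]) = walkCostE g l + g x a := by
  intro l
  induction l with
  | nil => intro x a h; simp at h
  | cons y t ih =>
    intro x a h
    cases t with
    | nil =>
      simp [List.getLast?] at h; subst h
      simp [walkCostE]
    | cons b t2 =>
      have h' : (b :: t2).getLast? = some x := by
        rw [List.getLast?_cons_cons] at h; exact h
      have := ih x a h'
      calc walkCostE g ((y :: b :: t2) ++ [a])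
          = g y b + walkCostE g ((b :: t2) ++ [a]) := rfl
        _ = g y b + (walkCostE g (b :: t2) + g x a) := by rw [this]
        _ = walkCostE g (y :: b :: t2) + g x a := by rw [walkCostE_cons_cons, add_assoc]

lemma walkCostE_reverse (g : β → β → ENNReal) (hsym : ∀ x y, g x y = g y x) :
    ∀ l : List β, walkCostE g l.reverse = walkCostE g l := by
  intro l
  induction l with
  | nil => rfl
  | cons a t ih =>
    cases t with
    | nil => rfl
    | cons b t2 =>
      have hlast : (b :: t2).reverse.getLast? = some b := by
        rw [List.getLast?_reverse]; rfl
      calc walkCostE g (a :: b :: t2).reverse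
          = walkCostE g ((b :: t2).reverse ++ [a]) := by simp
        _ = walkCostE g (b :: t2).reverse + g b a := walkCostE_append_single g _ b a hlast
        _ = walkCostE g (b :: t2) + g a b := by rw [ih, hsym b a]
        _ = walkCostE g (a :: b :: t2) := by rw [walkCostE_cons_cons, add_comm]


lemma getLast?_tail (l : List β) (z y : β) (h1 : l.head? = some z)
    (h2 : l.getLast? = some y) (hne : y ≠ z) : l.tail.getLast? = some y := by
  cases l with
  | nil => simp at h1
  | cons a t =>
    have : a = z := by simpa using h1
    subst this
    cases t with
    | nil => simp [List.getLast?] at h2; exact absurd h2.symm hne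
    | cons b t2 => rw [List.getLast?_cons_cons] at h2; simpa using h2

lemma pathCost_cons_cons {α : Type*} (c : α → α → ℝ) (a b : α) (l : List α) :
    pathCost c (a :: b :: l) = c a b + pathCost c (b :: l) := rfl

lemma pathCost_eq_sum {α : Type*} (c : α → α → ℝ) (d : α) :
    ∀ l : List α, pathCost c l = ∑ q ∈ Finset.range (l.length - 1),
      c (l.getD q d) (l.getD (q+1) d) := by
  intro l
  induction l with
  | nil => simp [pathCost]
  | cons a t ih =>
    cases t with
    | nil => simp [pathCost]
    | cons b t2 =>
      rw [pathCost_cons_cons, ih]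
      have hlen : (a :: b :: t2).length - 1 = ((b :: t2).length - 1) + 1 := by
        simp
      rw [hlen, Finset.sum_range_succ']
      simp only [List.getD_cons_succ, List.getD_cons_zero, List.length_cons,
        Nat.add_sub_cancel, add_comm]
      congr 1
      apply Finset.sum_congr rfl
      intro x _
      congr 1
      rw [show 1 + (x + 1) = (x + 1) + 1 from by omega, List.getD_cons_succ,
        List.getD_cons_succ]

lemma pathCost_append {α : Type*} (c : α → α → ℝ) :
    ∀ (l1 l2 : List α) (x y : α), l1.getLast? = some x → l2.head? = some y →
      pathCost c (l1 ++ l2) = pathCost c l1 + c x y + pathCost c l2 := by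
  intro l1
  induction l1 with
  | nil => intro l2 x y h1 h2; simp at h1
  | cons a t ih =>
    intro l2 x y h1 h2
    cases t with
    | nil =>
      cases l2 with
      | nil => simp at h2
      | cons u t2 =>
        simp at h1 h2
        subst h1; subst h2
        simp only [List.singleton_append, pathCost]
        ring
    | cons b t2 =>
      have h1' : (b :: t2).getLast? = some x := by
        rw [List.getLast?_cons_cons] at h1; exact h1
      have := ih l2 x y h1' h2
      calc pathCost c ((a :: b :: t2) ++ l2)
          = c a b + pathCost c ((b :: t2) ++ l2) := rfl
        _ = c a b + (pathCost c (b :: t2) + c x y + pathCost c l2) := by rw [this]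
        _ = pathCost c (a :: b :: t2) + c x y + pathCost c l2 := by
            rw [pathCost_cons_cons]; ring

lemma pathCost_le_of_chain {α : Type*} (c : α → α → ℝ) (K : ℝ) :
    ∀ (t : List α) (a : α), List.Chain (fun u v => c u v ≤ K) a t →
      pathCost c (a :: t) ≤ t.length * K := by
  intro t
  induction t with
  | nil => intro a _; simp [pathCost]
  | cons b t2 ih =>
    intro a hch
    simp only [List.Chain, List.isChain_cons_cons] at hch
    have := ih b hch.2
    rw [pathCost_cons_cons]
    simp only [List.length_cons]
    push_cast
    have h1 := hch.1
    push_cast at this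
    linarith

lemma getLastD_eq_getD {α : Type*} :
    ∀ (l : List α) (d : α), l ≠ [] → l.getLastD d = l.getD (l.length - 1) d := by
  intro l
  induction l with
  | nil => tauto
  | cons a t ih =>
    intro d _
    cases t with
    | nil => rfl
    | cons b t2 =>
      have hne : (b :: t2) ≠ [] := by simp
      have h1 : (a :: b :: t2).getLastD d = (b :: t2).getLastD a := rfl
      rw [h1, ih a hne]
      have hidx : (b :: t2).length - 1 < (b :: t2).length := by simp
      rw [List.getD_eq_getElem _ _ hidx]
      have hidx2 : (a :: b :: t2).length - 1 = ((b :: t2).length - 1) + 1 := by simp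
      rw [hidx2, List.getD_cons_succ, List.getD_eq_getElem _ _ hidx]

lemma mono_of_adj (f : ℕ → ℕ) (m : ℕ) (hadj : ∀ q, q + 1 ≤ m → f q ≤ f (q+1)) :
    ∀ a b, a ≤ b → b ≤ m → f a ≤ f b := by
  intro a b
  induction b with
  | zero =>
    intro hab _
    have ha : a = 0 := Nat.le_zero.mp hab
    subst ha
    exact le_rfl
  | succ n ih =>
    intro hab hbm
    rcases Nat.lt_or_ge a (n+1) with hlt | hge
    · exact le_trans (ih (by omega) (by omega)) (hadj n hbm)
    · have ha : a = n + 1 := by omega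
      subst ha
      exact le_rfl

lemma exists_adj_change {γ : Type*} (f : ℕ → γ) (a b : ℕ) (hab : a ≤ b) (hne : f a ≠ f b) :
    ∃ q, a ≤ q ∧ q < b ∧ f q ≠ f (q+1) := by
  by_contra hcon
  push_neg at hcon
  have key : ∀ k, a ≤ k → k ≤ b → f a = f k := by
    intro k
    induction k with
    | zero =>
      intro hak _
      have ha : a = 0 := Nat.le_zero.mp hak
      subst ha
      rfl
    | succ n ih =>
      intro hak hkb
      rcases Nat.lt_or_ge a (n+1) with hlt | hge
      · rw [ih (by omega) (by omega)]
        exact hcon n (by omega) (by omega)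
      · have : a = n + 1 := by omega
        rw [this]
  exact hne (key b hab le_rfl)

section Ladder

variable {h C : ℕ}

/-- helper for casts -/
lemma cast_le_add (a b k : ℕ) (H : a ≤ b + k) : (a : ENNReal) ≤ (b : ENNReal) + (k : ENNReal) := by
  exact_mod_cast H

lemma cast_le_add_one (a b : ℕ) (H : a ≤ b + 1) : (a : ENNReal) ≤ (b : ENNReal) + 1 := by
  exact_mod_cast H

def lvN : LadderNode h C → ℕ
  | Sum.inl _ => 0
  | Sum.inr (_, i, _) => (i : ℕ) + 1

lemma ladderEdges_symm : ∀ x y : LadderNode h C, ladderEdges h C x y = ladderEdges h C y x := by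
  rintro (⟨⟩ | ⟨j1, i1, b1⟩) (⟨⟩ | ⟨j2, i2, b2⟩) <;> simp only [ladderEdges]
  by_cases hv : j1 = j2 ∧ b1 = b2 ∧ ((i1:ℕ) + 1 = (i2:ℕ) ∨ (i2:ℕ) + 1 = (i1:ℕ))
  · have hv' : j2 = j1 ∧ b2 = b1 ∧ ((i2:ℕ) + 1 = (i1:ℕ) ∨ (i1:ℕ) + 1 = (i2:ℕ)) :=
      ⟨hv.1.symm, hv.2.1.symm, hv.2.2.symm⟩
    rw [if_pos hv, if_pos hv']
  · have hv' : ¬(j2 = j1 ∧ b2 = b1 ∧ ((i2:ℕ) + 1 = (i1:ℕ) ∨ (i1:ℕ) + 1 = (i2:ℕ))) :=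
      fun hs => hv ⟨hs.1.symm, hs.2.1.symm, hs.2.2.symm⟩
    rw [if_neg hv, if_neg hv']
    by_cases hr : j1 = j2 ∧ i1 = i2 ∧ b1 ≠ b2
    · have hr' : j2 = j1 ∧ i2 = i1 ∧ b2 ≠ b1 := ⟨hr.1.symm, hr.2.1.symm, hr.2.2.symm⟩
      rw [if_pos hr, if_pos hr']
    · have hr' : ¬(j2 = j1 ∧ i2 = i1 ∧ b2 ≠ b1) :=
        fun hs => hr ⟨hs.1.symm, hs.2.1.symm, hs.2.2.symm⟩
      rw [if_neg hr, if_neg hr']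

lemma lip_lv : ∀ x y : LadderNode h C,
    ((lvN y * h : ℕ) : ENNReal) ≤ ((lvN x * h : ℕ) : ENNReal) + ladderEdges h C x y := by
  rintro (⟨⟩ | ⟨j1, i1, b1⟩) (⟨⟩ | ⟨j2, i2, b2⟩) <;> simp only [ladderEdges, lvN]
  · simp
  · by_cases hi : (i2:ℕ) = 0
    · rw [if_pos hi]
      apply cast_le_add
      rw [hi]; omega
    · rw [if_neg hi]; simp
  · by_cases hi : (i1:ℕ) = 0
    · rw [if_pos hi]
      apply cast_le_add; omega
    · rw [if_neg hi]; simp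
  · by_cases hv : j1 = j2 ∧ b1 = b2 ∧ ((i1:ℕ) + 1 = (i2:ℕ) ∨ (i2:ℕ) + 1 = (i1:ℕ))
    · rw [if_pos hv]
      apply cast_le_add
      obtain ⟨-, -, hor⟩ := hv
      calc ((i2:ℕ)+1)*h ≤ ((i1:ℕ)+1+1)*h := Nat.mul_le_mul_right _ (by omega)
        _ = ((i1:ℕ)+1)*h + h := by ring
    · rw [if_neg hv]
      by_cases hr : j1 = j2 ∧ i1 = i2 ∧ b1 ≠ b2
      · rw [if_pos hr]
        apply cast_le_add_one
        rw [hr.2.1]; omega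
      · rw [if_neg hr]; simp

def chiN (j : Fin C) (a : ℕ) (s : Bool) : LadderNode h C → ℕ
  | Sum.inl _ => (a + 1) * h
  | Sum.inr (j', i, b) =>
      if j' = j then Nat.dist (i : ℕ) a * h + (if b = s then 0 else 1)
      else ((i : ℕ) + 1 + (a + 1)) * h

lemma lip_chi (hh : 1 ≤ h) (j : Fin C) (a : ℕ) (s : Bool) :
    ∀ x y : LadderNode h C,
      ((chiN j a s y : ℕ) : ENNReal) ≤ ((chiN j a s x : ℕ) : ENNReal) + ladderEdges h C x y := by
  rintro (⟨⟩ | ⟨j1, i1, b1⟩) (⟨⟩ | ⟨j2, i2, b2⟩) <;> simp only [ladderEdges, chiN]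
  · simp
  · -- root to node
    by_cases hi : (i2:ℕ) = 0
    · rw [if_pos hi]
      by_cases hj : j2 = j
      · rw [if_pos hj]
        apply cast_le_add
        have hd : Nat.dist (i2:ℕ) a = a := by rw [hi, Nat.dist_zero_left]
        rw [hd]
        have he : (if b2 = s then 0 else 1) ≤ 2 * h := by split <;> omega
        calc a * h + (if b2 = s then 0 else 1) ≤ a * h + 2 * h := Nat.add_le_add_left he _
          _ = (a + 1) * h + h := by ring
      · rw [if_neg hj]
        apply cast_le_add
        rw [hi]
        exact le_of_eq (by ring)
    · rw [if_neg hi]; simp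
  · -- node to root
    by_cases hi : (i1:ℕ) = 0
    · rw [if_pos hi]
      by_cases hj : j1 = j
      · rw [if_pos hj]
        apply cast_le_add
        have hd : Nat.dist (i1:ℕ) a = a := by rw [hi, Nat.dist_zero_left]
        rw [hd]
        calc (a+1)*h = a*h + h := by ring
          _ ≤ a*h + (if b1 = s then 0 else 1) + h :=
              Nat.add_le_add (Nat.le_add_right _ _) le_rfl
      · rw [if_neg hj]
        apply cast_le_add
        calc (a+1)*h ≤ ((i1:ℕ)+1+(a+1))*h := Nat.mul_le_mul_right _ (by omega)
          _ ≤ ((i1:ℕ)+1+(a+1))*h + h := Nat.le_add_right _ _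
    · rw [if_neg hi]; simp
  · -- node to node
    by_cases hv : j1 = j2 ∧ b1 = b2 ∧ ((i1:ℕ) + 1 = (i2:ℕ) ∨ (i2:ℕ) + 1 = (i1:ℕ))
    · rw [if_pos hv]
      obtain ⟨rfl, rfl, hor⟩ := hv
      by_cases hj : j1 = j
      · rw [if_pos hj, if_pos hj]
        apply cast_le_add
        have hd : Nat.dist (i2:ℕ) a ≤ Nat.dist (i1:ℕ) a + 1 := by
          simp only [Nat.dist]; omega
        calc Nat.dist (i2:ℕ) a * h + (if b1 = s then 0 else 1)
            ≤ (Nat.dist (i1:ℕ) a + 1) * h + (if b1 = s then 0 else 1) :=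
              Nat.add_le_add (Nat.mul_le_mul_right _ hd) le_rfl
          _ = Nat.dist (i1:ℕ) a * h + (if b1 = s then 0 else 1) + h := by ring
      · rw [if_neg hj, if_neg hj]
        apply cast_le_add
        calc ((i2:ℕ)+1+(a+1))*h ≤ ((i1:ℕ)+1+1+(a+1))*h := Nat.mul_le_mul_right _ (by omega)
          _ = ((i1:ℕ)+1+(a+1))*h + h := by ring
    · rw [if_neg hv]
      by_cases hr : j1 = j2 ∧ i1 = i2 ∧ b1 ≠ b2
      · rw [if_pos hr]
        obtain ⟨rfl, rfl, hb⟩ := hr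
        by_cases hj : j1 = j
        · rw [if_pos hj, if_pos hj]
          apply cast_le_add_one
          have he : (if b2 = s then 0 else 1) ≤ (if b1 = s then 0 else 1) + 1 := by
            split <;> split <;> omega
          calc Nat.dist (i1:ℕ) a * h + (if b2 = s then 0 else 1)
              ≤ Nat.dist (i1:ℕ) a * h + ((if b1 = s then 0 else 1) + 1) :=
                Nat.add_le_add_left he _
            _ = Nat.dist (i1:ℕ) a * h + (if b1 = s then 0 else 1) + 1 := by ring
        · rw [if_neg hj, if_neg hj]
          apply cast_le_add_one
          exact Nat.le_add_right _ _
      · rw [if_neg hr]; simp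

def fnd (hL : 0 < 2*h-1) (j : Fin C) (b : Bool) (t : ℕ) : LadderNode h C :=
  Sum.inr (j, ⟨t % (2*h-1), Nat.mod_lt _ hL⟩, b)

lemma fnd_coe (hL : 0 < 2*h-1) (j : Fin C) (b : Bool) (i : Fin (2*h-1)) :
    fnd hL j b (i:ℕ) = Sum.inr (j, i, b) := by
  simp only [fnd]
  congr 1
  exact Prod.ext rfl (Prod.ext (Fin.ext (Nat.mod_eq_of_lt i.isLt)) rfl)

def dwalk (hL : 0 < 2*h-1) (j : Fin C) (b : Bool) : ℕ → List (LadderNode h C)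
  | 0 => [Sum.inl ()]
  | n+1 => fnd hL j b n :: dwalk hL j b n

lemma dwalk_head (hL : 0 < 2*h-1) (j : Fin C) (b : Bool) (n : ℕ) :
    (dwalk hL j b (n+1)).head? = some (fnd hL j b n) := rfl

lemma dwalk_last (hL : 0 < 2*h-1) (j : Fin C) (b : Bool) :
    ∀ n, (dwalk hL j b n).getLast? = some (Sum.inl ()) := by
  intro n
  induction n with
  | zero => rfl
  | succ m ih =>
    cases m with
    | zero => rfl
    | succ m' =>
      show (fnd hL j b (m'+1) :: fnd hL j b m' :: dwalk hL j b m').getLast? = _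
      rw [List.getLast?_cons_cons]
      exact ih

lemma edge_root_fnd (hL : 0 < 2*h-1) (j : Fin C) (b : Bool) :
    ladderEdges h C (Sum.inl ()) (fnd hL j b 0) = (h : ENNReal) := by
  simp [ladderEdges, fnd, Nat.zero_mod]

lemma edge_fnd_root (hL : 0 < 2*h-1) (j : Fin C) (b : Bool) :
    ladderEdges h C (fnd hL j b 0) (Sum.inl ()) = (h : ENNReal) := by
  simp [ladderEdges, fnd, Nat.zero_mod]

lemma edge_step (hL : 0 < 2*h-1) (j : Fin C) (b : Bool) (n : ℕ) (hn : n + 1 < 2*h-1) :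
    ladderEdges h C (fnd hL j b (n+1)) (fnd hL j b n) = (h : ENNReal) := by
  have e1 : (n+1) % (2*h-1) = n+1 := Nat.mod_eq_of_lt hn
  have e2 : n % (2*h-1) = n := Nat.mod_eq_of_lt (by omega)
  simp only [fnd, ladderEdges]
  rw [if_pos]
  refine ⟨by trivial, by trivial, Or.inr ?_⟩
  simp [e1, e2]

lemma edge_rung (hL : 0 < 2*h-1) (j : Fin C) (b : Bool) (t : ℕ) :
    ladderEdges h C (fnd hL j b t) (fnd hL j (!b) t) = 1 := by
  simp only [fnd, ladderEdges]
  rw [if_neg, if_pos]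
  · exact ⟨by trivial, by trivial, by simp⟩
  · rintro ⟨-, hb, -⟩
    simp at hb

lemma dwalk_cost (hL : 0 < 2*h-1) (j : Fin C) (b : Bool) :
    ∀ n, n ≤ 2*h-1 → walkCostE (ladderEdges h C) (dwalk hL j b n) = ((n*h : ℕ) : ENNReal) := by
  intro n
  induction n with
  | zero => intro _; simp [dwalk, walkCostE]
  | succ m ih =>
    intro hm
    cases m with
    | zero =>
      show walkCostE (ladderEdges h C) (fnd hL j b 0 :: [Sum.inl ()]) = _
      rw [walkCostE_cons_cons, edge_fnd_root]
      show (h : ENNReal) + 0 = ((1*h : ℕ) : ENNReal)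
      simp
    | succ m' =>
      show walkCostE (ladderEdges h C) (fnd hL j b (m'+1) :: fnd hL j b m' :: dwalk hL j b m') = _
      rw [walkCostE_cons_cons, edge_step hL j b m' (by omega)]
      have := ih (by omega)
      rw [show (fnd hL j b m' :: dwalk hL j b m') = dwalk hL j b (m'+1) from rfl, this]
      rw [show ((m'+1+1)*h : ℕ) = h + (m'+1)*h  by ring]
      push_cast
      ring

lemma exists_walk (hh : 1 ≤ h) (x y : LadderNode h C) :
    ∃ l : List (LadderNode h C), l.head? = some x ∧ l.getLast? = some y ∧
      walkCostE (ladderEdges h C) l ≠ ⊤ := by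
  have hL : 0 < 2*h-1 := by omega
  obtain (⟨⟩ | ⟨j, i, b⟩) := x <;> obtain (⟨⟩ | ⟨j', i', b'⟩) := y
  · exact ⟨[Sum.inl ()], rfl, rfl, by simp [walkCostE]⟩
  · refine ⟨(dwalk hL j' b' ((i':ℕ)+1)).reverse, ?_, ?_, ?_⟩
    · rw [List.head?_reverse, dwalk_last]
    · rw [List.getLast?_reverse, dwalk_head, fnd_coe]
    · rw [walkCostE_reverse _ ladderEdges_symm, dwalk_cost hL j' b' _ (by have := i'.isLt; omega)]
      exact ENNReal.natCast_ne_top _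
  · exact ⟨dwalk hL j b ((i:ℕ)+1), by rw [dwalk_head, fnd_coe], dwalk_last hL j b _,
      by rw [dwalk_cost hL j b _ (by have := i.isLt; omega)]; exact ENNReal.natCast_ne_top _⟩
  · set l2 := (dwalk hL j' b' ((i':ℕ)+1)).reverse with hl2
    have h2h : l2.head? = some (Sum.inl ()) := by rw [hl2, List.head?_reverse, dwalk_last]
    have h2l : l2.getLast? = some (Sum.inr (j', i', b')) := by
      rw [hl2, List.getLast?_reverse, dwalk_head, fnd_coe]
    refine ⟨dwalk hL j b ((i:ℕ)+1) ++ l2.tail, ?_, ?_, ?_⟩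
    · show (fnd hL j b (i:ℕ) :: (dwalk hL j b (i:ℕ) ++ l2.tail)).head? = _
      rw [List.head?_cons, fnd_coe]
    · have htl : l2.tail.getLast? = some (Sum.inr (j', i', b')) :=
        getLast?_tail l2 _ _ h2h h2l (by simp)
      have hne : l2.tail ≠ [] := by
        intro hnil
        rw [hnil] at htl
        simp at htl
      rw [List.getLast?_append_of_ne_nil _ hne, htl]
    · rw [walkCostE_join (ladderEdges h C) _ l2 (Sum.inl ()) (dwalk_last hL j b _) h2h]
      rw [dwalk_cost hL j b _ (by have := i.isLt; omega),
        walkCostE_reverse _ ladderEdges_symm, dwalk_cost hL j' b' _ (by have := i'.isLt; omega)]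
      rw [← Nat.cast_add]
      exact ENNReal.natCast_ne_top _

lemma walkCostE_pair (g : LadderNode h C → LadderNode h C → ENNReal) (x y : LadderNode h C) :
    walkCostE g [x, y] = g x y := by
  show g x y + walkCostE g [y] = g x y
  show g x y + 0 = g x y
  rw [add_zero]

lemma metric_root_le (hh : 1 ≤ h) (j : Fin C) (i : Fin (2*h-1)) (b : Bool) :
    ladderMetric h C (Sum.inl ()) (Sum.inr (j, i, b)) ≤ (((i:ℕ)+1) * h : ℝ) := by
  have hL : 0 < 2*h-1 := by omega
  have := spDist_le_nat (ladderEdges h C) (Sum.inl ()) (Sum.inr (j, i, b))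
    ((dwalk hL j b ((i:ℕ)+1)).reverse)
    (by rw [List.head?_reverse, dwalk_last])
    (by rw [List.getLast?_reverse, dwalk_head, fnd_coe])
    (((i:ℕ)+1) * h)
    (by rw [walkCostE_reverse _ ladderEdges_symm,
        dwalk_cost hL j b _ (by have := i.isLt; omega)])
  calc ladderMetric h C (Sum.inl ()) (Sum.inr (j, i, b)) ≤ ((((i:ℕ)+1) * h : ℕ) : ℝ) := this
    _ = (((i:ℕ)+1) * h : ℝ) := by push_cast; ring

lemma metric_ge_lv (hh : 1 ≤ h) (x y : LadderNode h C) :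
    ((lvN y : ℝ) - lvN x) * h ≤ ladderMetric h C x y := by
  obtain ⟨l, h1, h2, h3⟩ := exists_walk hh x y
  have := le_spDist (ladderEdges h C) x y (fun z => lvN z * h) (fun a b => lip_lv a b) l h1 h2 h3
  calc ((lvN y : ℝ) - lvN x) * h = ((lvN y * h : ℕ) : ℝ) - ((lvN x * h : ℕ) : ℝ) := by
        push_cast; ring
    _ ≤ ladderMetric h C x y := this

lemma metric_ge_chi (hh : 1 ≤ h) (j : Fin C) (a : ℕ) (s : Bool) (x y : LadderNode h C) :
    ((chiN j a s y : ℝ)) - chiN j a s x ≤ ladderMetric h C x y := by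
  obtain ⟨l, h1, h2, h3⟩ := exists_walk hh x y
  exact le_spDist (ladderEdges h C) x y (chiN j a s) (fun u v => lip_chi hh j a s u v) l h1 h2 h3

lemma metric_step_le (hh : 1 ≤ h) (j : Fin C) (p q : Fin (2*h-1)) (b : Bool)
    (hpq : (p:ℕ) + 1 = (q:ℕ) ∨ (q:ℕ) + 1 = (p:ℕ)) :
    ladderMetric h C (Sum.inr (j, p, b)) (Sum.inr (j, q, b)) ≤ (h : ℝ) := by
  have := spDist_le_nat (ladderEdges h C) (Sum.inr (j, p, b)) (Sum.inr (j, q, b))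
    [Sum.inr (j, p, b), Sum.inr (j, q, b)] rfl rfl h
    (by rw [walkCostE_pair]; simp only [ladderEdges]; rw [if_pos ⟨by trivial, by trivial, hpq⟩])
  exact this

lemma metric_rung_le (hh : 1 ≤ h) (j : Fin C) (p : Fin (2*h-1)) (b b' : Bool) (hb : b ≠ b') :
    ladderMetric h C (Sum.inr (j, p, b)) (Sum.inr (j, p, b')) ≤ (1 : ℝ) := by
  have := spDist_le_nat (ladderEdges h C) (Sum.inr (j, p, b)) (Sum.inr (j, p, b'))
    [Sum.inr (j, p, b), Sum.inr (j, p, b')] rfl rfl 1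
    (by
      rw [walkCostE_pair]; simp only [ladderEdges]
      rw [if_neg, if_pos ⟨by trivial, by trivial, hb⟩]
      · simp
      · rintro ⟨-, hbb, -⟩
        exact hb hbb)
  simpa [ladderMetric] using this

lemma cor_D_ge (hh : 1 ≤ h) (j : Fin C) (i : Fin (2*h-1)) (b : Bool) :
    ((i:ℕ)+1) * (h:ℝ) ≤ ladderMetric h C (Sum.inl ()) (Sum.inr (j, i, b)) := by
  have := metric_ge_lv hh (Sum.inl ()) (Sum.inr (j, i, b))
  simp only [lvN] at this
  calc ((i:ℕ)+1) * (h:ℝ) = (((((i:ℕ)+1) : ℕ) : ℝ) - ((0:ℕ):ℝ)) * h := by push_cast; ring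
    _ ≤ _ := this

lemma cor_cross (hh : 1 ≤ h) (j j' : Fin C) (a i' : Fin (2*h-1)) (s b' : Bool)
    (hjj : j' ≠ j) :
    (((a:ℕ)+1) + ((i':ℕ)+1)) * (h:ℝ) ≤
      ladderMetric h C (Sum.inr (j, a, s)) (Sum.inr (j', i', b')) := by
  have := metric_ge_chi hh j (a:ℕ) s (Sum.inr (j, a, s)) (Sum.inr (j', i', b'))
  simp only [chiN, Nat.dist_self, if_neg hjj, eq_self_iff_true, if_true] at this
  push_cast at this
  ring_nf at this ⊢
  linarith

lemma cor_same_copy (hh : 1 ≤ h) (j : Fin C) (a i' : Fin (2*h-1)) (s b' : Bool) :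
    (Nat.dist (i':ℕ) (a:ℕ) : ℝ) * (h:ℝ) + (if b' = s then (0:ℝ) else 1) ≤
      ladderMetric h C (Sum.inr (j, a, s)) (Sum.inr (j, i', b')) := by
  have := metric_ge_chi hh j (a:ℕ) s (Sum.inr (j, a, s)) (Sum.inr (j, i', b'))
  simp only [chiN, Nat.dist_self, eq_self_iff_true, if_true] at this
  push_cast at this
  ring_nf at this ⊢
  linarith


def Wp (t : List (LadderNode h C)) (q : ℕ) : LadderNode h C :=
  (Sum.inl () :: t).getD q (Sum.inl ())

noncomputable def wstep (t : List (LadderNode h C)) (q : ℕ) : ℝ :=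
  ladderMetric h C (Wp t q) (Wp t (q+1)) + (lvN (Wp t q) : ℝ) * h - (lvN (Wp t (q+1)) : ℝ) * h

lemma wstep_nonneg (hh : 1 ≤ h) (t : List (LadderNode h C)) (q : ℕ) : 0 ≤ wstep t q := by
  have := metric_ge_lv hh (Wp t q) (Wp t (q+1))
  unfold wstep
  have hexp : ((lvN (Wp t (q+1)) : ℝ) - lvN (Wp t q)) * h
      = (lvN (Wp t (q+1)) : ℝ) * h - (lvN (Wp t q) : ℝ) * h := by ring
  rw [hexp] at this
  linarith

lemma regret_ge_sum (hh : 1 ≤ h) (t : List (LadderNode h C)) (ht : t ≠ [])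
    (hlast : ∃ (j : Fin C) (i : Fin (2*h-1)) (b : Bool),
      t.getLastD (Sum.inl ()) = Sum.inr (j, i, b))
    (S : Finset ℕ) (hS : S ⊆ Finset.range t.length) :
    ∑ q ∈ S, wstep t q ≤ pathRegret (ladderMetric h C) (Sum.inl ()) (Sum.inl () :: t) := by
  set m := t.length with hm
  have step1 : ∑ q ∈ S, wstep t q ≤ ∑ q ∈ Finset.range m, wstep t q :=
    Finset.sum_le_sum_of_subset_of_nonneg hS (fun q _ _ => wstep_nonneg hh t q)
  have hpc : pathCost (ladderMetric h C) (Sum.inl () :: t)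
      = ∑ q ∈ Finset.range m, ladderMetric h C (Wp t q) (Wp t (q+1)) := by
    rw [pathCost_eq_sum (ladderMetric h C) (Sum.inl ()) (Sum.inl () :: t)]
    simp only [List.length_cons, Nat.add_sub_cancel]
    rfl
  have htel : ∑ q ∈ Finset.range m,
      ((lvN (Wp t q) : ℝ) * h - (lvN (Wp t (q+1)) : ℝ) * h)
      = (lvN (Wp t 0) : ℝ) * h - (lvN (Wp t m) : ℝ) * h :=
    Finset.sum_range_sub' (fun q => (lvN (Wp t q) : ℝ) * h) m
  have step2 : ∑ q ∈ Finset.range m, wstep t q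
      = pathCost (ladderMetric h C) (Sum.inl () :: t) - (lvN (Wp t m) : ℝ) * h := by
    have hsplit : ∀ q ∈ Finset.range m, wstep t q
        = ladderMetric h C (Wp t q) (Wp t (q+1))
          + ((lvN (Wp t q) : ℝ) * h - (lvN (Wp t (q+1)) : ℝ) * h) := by
      intro q _; unfold wstep; ring
    rw [Finset.sum_congr rfl hsplit, Finset.sum_add_distrib, htel, ← hpc]
    have hW0 : (lvN (Wp t 0) : ℝ) = 0 := by
      show ((lvN (Sum.inl () : LadderNode h C) : ℕ) : ℝ) = 0
      simp [lvN]
    rw [hW0]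
    ring
  have hWm : Wp t m = t.getLastD (Sum.inl ()) := by
    have hne : (Sum.inl () :: t) ≠ ([] : List (LadderNode h C)) := by simp
    have := getLastD_eq_getD (Sum.inl () :: t) (Sum.inl ()) hne
    simp only [List.length_cons, Nat.add_sub_cancel] at this
    rw [List.getLastD_cons] at this
    exact this.symm
  have hD : ladderMetric h C (Sum.inl ()) (Wp t m) ≤ (lvN (Wp t m) : ℝ) * h := by
    obtain ⟨j, i, b, hlb⟩ := hlast
    rw [hWm, hlb]
    have := metric_root_le hh j i b
    simpa [lvN] using this
  have hreg : pathRegret (ladderMetric h C) (Sum.inl ()) (Sum.inl () :: t)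
      = pathCost (ladderMetric h C) (Sum.inl () :: t)
        - ladderMetric h C (Sum.inl ()) (Wp t m) := by
    unfold pathRegret
    rw [List.getLastD_cons, ← hWm]
  rw [hreg]
  linarith

def cpo : LadderNode h C → Option (Fin C)
  | Sum.inl _ => none
  | Sum.inr (j, _, _) => some j

def sdN : LadderNode h C → Bool
  | Sum.inl _ => true
  | Sum.inr (_, _, b) => b

lemma Wp_zero (t : List (LadderNode h C)) : Wp t 0 = Sum.inl () := rfl

lemma Wp_mem (t : List (LadderNode h C)) (q : ℕ) (hq1 : 1 ≤ q) (hq2 : q ≤ t.length) :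
    Wp t q ∈ t := by
  unfold Wp
  obtain ⟨k, rfl⟩ : ∃ k, q = k + 1 := ⟨q - 1, by omega⟩
  rw [List.getD_cons_succ, List.getD_eq_getElem _ _ (by omega)]
  exact List.getElem_mem _

lemma mem_pos (t : List (LadderNode h C)) (x : LadderNode h C) (hx : x ∈ t) :
    ∃ q, 1 ≤ q ∧ q ≤ t.length ∧ Wp t q = x := by
  obtain ⟨k, hk, he⟩ := List.getElem_of_mem hx
  refine ⟨k + 1, by omega, by omega, ?_⟩
  unfold Wp
  rw [List.getD_cons_succ, List.getD_eq_getElem _ _ hk]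
  exact he

lemma getLastD_mem {α : Type*} (t : List α) (d : α) (ht : t ≠ []) : t.getLastD d ∈ t := by
  rw [getLastD_eq_getD t d ht,
    List.getD_eq_getElem _ _ (Nat.sub_lt (List.length_pos_iff.mpr ht) one_pos)]
  exact List.getElem_mem _

lemma claimB (hh : 1 ≤ h) (t : List (LadderNode h C))
    (j1 j2 : Fin C) (i1 i2 : Fin (2*h-1)) (b1 b2 : Bool)
    (hx : Sum.inr (j1, i1, b1) ∈ t) (hy : Sum.inr (j2, i2, b2) ∈ t) (hj : j1 ≠ j2)
    (hnr : ∀ x ∈ t, x ≠ Sum.inl ()) :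
    2*(h:ℝ) - 1 ≤ pathRegret (ladderMetric h C) (Sum.inl ()) (Sum.inl () :: t) := by
  have ht : t ≠ [] := by intro he; rw [he] at hx; simp at hx
  have hlast : ∃ (j' : Fin C) (i : Fin (2*h-1)) (b : Bool),
      t.getLastD (Sum.inl ()) = Sum.inr (j', i, b) := by
    have hm := getLastD_mem t (Sum.inl ()) ht
    rcases hle : t.getLastD (Sum.inl ()) with ⟨⟩ | ⟨j', i, b⟩
    · exact absurd hle (hnr _ hm)
    · exact ⟨j', i, b, rfl⟩
  have hh0 : (0:ℝ) ≤ (h:ℝ) := by positivity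
  have main : ∀ u v : ℕ, 1 ≤ u → v ≤ t.length → u ≤ v →
      cpo (Wp t u) ≠ cpo (Wp t v) →
      2*(h:ℝ) - 1 ≤ pathRegret (ladderMetric h C) (Sum.inl ()) (Sum.inl () :: t) := by
    intro u v hu hv huv hne
    obtain ⟨q, hq1, hq2, hqne⟩ := exists_adj_change (fun r => cpo (Wp t r)) u v huv hne
    have hql : 1 ≤ q := le_trans hu hq1
    have hqlen : q + 1 ≤ t.length := by omega
    have hmem1 := Wp_mem t q hql (by omega)
    have hmem2 := Wp_mem t (q+1) (by omega) hqlen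
    rcases hxx : Wp t q with ⟨⟩ | ⟨ja, ia, ba⟩
    · exact absurd hxx (hnr _ hmem1)
    rcases hyy : Wp t (q+1) with ⟨⟩ | ⟨jb, ib, bb⟩
    · exact absurd hyy (hnr _ hmem2)
    have hjab : jb ≠ ja := by
      rw [hxx, hyy] at hqne
      simp only [cpo] at hqne
      intro he; exact hqne (by rw [he])
    have hcross := cor_cross hh ja jb ia ib ba bb hjab
    have hstep : 2*(h:ℝ) ≤ wstep t q := by
      unfold wstep
      rw [hxx, hyy]
      simp only [lvN]
      push_cast
      have hia : (0:ℝ) ≤ ((ia:ℕ):ℝ) := Nat.cast_nonneg _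
      nlinarith [mul_nonneg hia hh0]
    have hsum := regret_ge_sum hh t ht hlast {q} (by
      intro r hr
      simp only [Finset.mem_singleton] at hr
      subst hr
      exact Finset.mem_range.mpr (by omega))
    rw [Finset.sum_singleton] at hsum
    have hhr : (1:ℝ) ≤ (h:ℝ) := by exact_mod_cast hh
    linarith
  obtain ⟨q1, hq11, hq12, hW1⟩ := mem_pos t _ hx
  obtain ⟨q2, hq21, hq22, hW2⟩ := mem_pos t _ hy
  have hcp1 : cpo (Wp t q1) = some j1 := by rw [hW1]; rfl
  have hcp2 : cpo (Wp t q2) = some j2 := by rw [hW2]; rfl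
  rcases le_total q1 q2 with hc | hc
  · exact main q1 q2 hq11 hq22 hc (by rw [hcp1, hcp2]; simp [hj])
  · exact main q2 q1 hq21 hq12 hc (by rw [hcp1, hcp2]; simp [Ne.symm hj])

lemma claimC (hh : 1 ≤ h) (j : Fin C) (t : List (LadderNode h C))
    (hcopy : ∀ x ∈ t, ∃ (i : Fin (2*h-1)) (b : Bool), x = Sum.inr (j, i, b))
    (hcov : ∀ (i : Fin (2*h-1)) (b : Bool), Sum.inr (j, i, b) ∈ t) :
    2*(h:ℝ) - 1 ≤ pathRegret (ladderMetric h C) (Sum.inl ()) (Sum.inl () :: t) := by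
  classical
  have hL : 0 < 2*h-1 := by omega
  have ht : t ≠ [] := by
    intro he
    have := hcov ⟨0, hL⟩ true
    rw [he] at this
    simp at this
  have hnr : ∀ x ∈ t, x ≠ Sum.inl () := by
    intro x hx
    obtain ⟨i, b, rfl⟩ := hcopy x hx
    simp
  have hlast : ∃ (j' : Fin C) (i : Fin (2*h-1)) (b : Bool),
      t.getLastD (Sum.inl ()) = Sum.inr (j', i, b) := by
    obtain ⟨i, b, he⟩ := hcopy _ (getLastD_mem t (Sum.inl ()) ht)
    exact ⟨j, i, b, he⟩
  have hh0 : (0:ℝ) ≤ (h:ℝ) := by positivity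
  have hhr : (1:ℝ) ≤ (h:ℝ) := by exact_mod_cast hh
  by_cases hdown : ∃ q, 1 ≤ q ∧ q + 1 ≤ t.length ∧ lvN (Wp t (q+1)) < lvN (Wp t q)
  · -- a descending step : huge waste
    obtain ⟨q, hql, hqlen, hlt⟩ := hdown
    obtain ⟨ia, ba, hxx⟩ := hcopy _ (Wp_mem t q hql (by omega))
    obtain ⟨ib, bb, hyy⟩ := hcopy _ (Wp_mem t (q+1) (by omega) hqlen)
    rw [hxx, hyy] at hlt
    simp only [lvN] at hlt
    have hdist : (ia:ℕ) ≤ Nat.dist (ib:ℕ) (ia:ℕ) + (ib:ℕ) := by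
      simp only [Nat.dist]; omega
    have hcs := cor_same_copy hh j ia ib ba bb
    have hstep : 2*(h:ℝ) ≤ wstep t q := by
      unfold wstep
      rw [hxx, hyy]
      simp only [lvN]
      push_cast
      have hd : ((ia:ℕ):ℝ) - (ib:ℕ) ≤ (Nat.dist (ib:ℕ) (ia:ℕ) : ℝ) := by
        have : ((ia:ℕ):ℝ) ≤ (Nat.dist (ib:ℕ) (ia:ℕ) : ℝ) + ((ib:ℕ):ℝ) := by
          exact_mod_cast hdist
        linarith
      have hgap : ((ib:ℕ):ℝ) + 1 ≤ ((ia:ℕ):ℝ) := by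
        have : (ib:ℕ) + 1 ≤ (ia:ℕ) := by omega
        exact_mod_cast this
      have he0 : (0:ℝ) ≤ (if bb = ba then (0:ℝ) else 1) := by split <;> norm_num
      nlinarith [mul_le_mul_of_nonneg_right hd hh0,
        mul_le_mul_of_nonneg_right hgap hh0]
    have hsum := regret_ge_sum hh t ht hlast {q} (by
      intro r hr
      simp only [Finset.mem_singleton] at hr
      subst hr
      exact Finset.mem_range.mpr (by omega))
    rw [Finset.sum_singleton] at hsum
    linarith
  · -- levels are nondecreasing
    push_neg at hdown
    have hadj : ∀ q, q + 1 ≤ t.length → lvN (Wp t q) ≤ lvN (Wp t (q+1)) := by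
      intro q hq
      rcases Nat.eq_zero_or_pos q with rfl | hpos
      · rw [show lvN (Wp t 0) = 0 from rfl]
        exact Nat.zero_le _
      · exact Nat.le_of_not_lt (fun hc => absurd hc (by
          have := hdown q hpos hq
          omega))
    have hmono := mono_of_adj (fun q => lvN (Wp t q)) t.length hadj
    set S : Finset ℕ := (Finset.range t.length).filter
      (fun q => 1 ≤ q ∧ lvN (Wp t q) = lvN (Wp t (q+1)) ∧ sdN (Wp t q) ≠ sdN (Wp t (q+1)))
      with hSdef
    have key1 : ∀ q ∈ S, (1:ℝ) ≤ wstep t q := by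
      intro q hq
      rw [hSdef, Finset.mem_filter, Finset.mem_range] at hq
      obtain ⟨hqlen, hq1, hlv, hsd⟩ := hq
      obtain ⟨ia, ba, hxx⟩ := hcopy _ (Wp_mem t q hq1 (by omega))
      obtain ⟨ib, bb, hyy⟩ := hcopy _ (Wp_mem t (q+1) (by omega) (by omega))
      rw [hxx, hyy] at hlv hsd
      simp only [lvN] at hlv
      simp only [sdN] at hsd
      have hiab : ia = ib := by
        apply Fin.ext
        omega
      subst hiab
      have hcs := cor_same_copy hh j ia ia ba bb
      rw [Nat.dist_self, if_neg (fun hc => hsd hc.symm)] at hcs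
      have hstep : (1:ℝ) ≤ wstep t q := by
        unfold wstep
        rw [hxx, hyy]
        simp only [lvN]
        push_cast
        push_cast at hcs
        linarith
      exact hstep
    have hsel : ∀ i : Fin (2*h-1), ∃ q, q ∈ S ∧ lvN (Wp t q) = (i:ℕ) + 1 := by
      intro i
      obtain ⟨qu, hqu1, hqu2, hWu⟩ := mem_pos t _ (hcov i true)
      obtain ⟨qv, hqv1, hqv2, hWv⟩ := mem_pos t _ (hcov i false)
      have hne' : qu ≠ qv := by
        intro he
        rw [he, hWv] at hWu
        simp at hWu
      set u := min qu qv with hu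
      set v := max qu qv with hv
      have hu1 : 1 ≤ u := le_min hqu1 hqv1
      have hvlen : v ≤ t.length := max_le hqu2 hqv2
      have huv : u < v := min_lt_max.mpr hne'
      have hlvu : lvN (Wp t u) = (i:ℕ) + 1 := by
        rcases le_total qu qv with hc | hc
        · rw [hu, min_eq_left hc, hWu]; rfl
        · rw [hu, min_eq_right hc, hWv]; rfl
      have hlvv : lvN (Wp t v) = (i:ℕ) + 1 := by
        rcases le_total qu qv with hc | hc
        · rw [hv, max_eq_right hc, hWv]; rfl
        · rw [hv, max_eq_left hc, hWu]; rfl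
      have hsdne : sdN (Wp t u) ≠ sdN (Wp t v) := by
        rcases le_total qu qv with hc | hc
        · rw [hu, min_eq_left hc, hWu, hv, max_eq_right hc, hWv]; simp [sdN]
        · rw [hu, min_eq_right hc, hWv, hv, max_eq_left hc, hWu]; simp [sdN]
      obtain ⟨q, hq1, hq2, hqne⟩ := exists_adj_change (fun r => sdN (Wp t r)) u v
        (le_of_lt huv) hsdne
      have hsq : ∀ r, u ≤ r → r ≤ v → lvN (Wp t r) = (i:ℕ) + 1 := by
        intro r hr1 hr2
        have h1 : lvN (Wp t u) ≤ lvN (Wp t r) := hmono u r hr1 (by omega)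
        have h2 : lvN (Wp t r) ≤ lvN (Wp t v) := hmono r v hr2 hvlen
        omega
      refine ⟨q, ?_, hsq q hq1 (by omega)⟩
      rw [hSdef, Finset.mem_filter, Finset.mem_range]
      exact ⟨by omega, by omega,
        by rw [hsq q hq1 (by omega), hsq (q+1) (by omega) (by omega)], hqne⟩
    have key2 : 2*h - 1 ≤ S.card := by
      have hinj : Set.InjOn (fun i : Fin (2*h-1) => (hsel i).choose)
          ↑(Finset.univ : Finset (Fin (2*h-1))) := by
        intro a _ b _ hab
        have ha := (hsel a).choose_spec.2
        have hb := (hsel b).choose_spec.2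
        simp only at hab
        rw [hab, hb] at ha
        exact Fin.ext (by omega)
      have := Finset.card_le_card_of_injOn (fun i : Fin (2*h-1) => (hsel i).choose)
        (fun i _ => (hsel i).choose_spec.1) hinj
      simpa using this
    have hsum := regret_ge_sum hh t ht hlast S (by
      rw [hSdef]; exact Finset.filter_subset _ _)
    have hcard : (S.card : ℝ) ≤ ∑ q ∈ S, wstep t q := by
      have := Finset.card_nsmul_le_sum S (fun q => wstep t q) 1 key1
      simpa using this
    have hfin : 2*(h:ℝ) - 1 ≤ (S.card : ℝ) := by
      have : ((2*h - 1 : ℕ) : ℝ) ≤ (S.card : ℝ) := by exact_mod_cast key2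
      have hcast : ((2*h - 1 : ℕ) : ℝ) = 2*(h:ℝ) - 1 := by
        rw [Nat.cast_sub (by omega)]
        push_cast
        ring
      linarith [hcast ▸ this]
    linarith


lemma map_range_getLast? {α : Type*} (f : ℕ → α) (n : ℕ) (hn : 0 < n) :
    ((List.range n).map f).getLast? = some (f (n-1)) := by
  obtain ⟨m, rfl⟩ : ∃ m, n = m+1 := ⟨n-1, by omega⟩
  rw [List.range_succ, List.map_append]
  simp

lemma map_range_head? {α : Type*} (f : ℕ → α) (n : ℕ) (hn : 0 < n) :
    ((List.range n).map f).head? = some (f 0) := by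
  obtain ⟨m, rfl⟩ : ∃ m, n = m+1 := ⟨n-1, by omega⟩
  rw [List.range_succ_eq_map]
  rfl

lemma chain_range {α : Type*} (R : α → α → Prop) : ∀ (n : ℕ) (g : ℕ → α) (a : α),
    (0 < n → R a (g 0)) → (∀ t, t+1 < n → R (g t) (g (t+1))) →
    List.Chain R a ((List.range n).map g) := by
  intro n
  induction n with
  | zero =>
    intro g a _ _
    rw [List.range_zero, List.map_nil]
    exact List.Chain.nil
  | succ m ih =>
    intro g a h0 hadj
    rw [List.range_succ_eq_map, List.map_cons, List.map_map]
    exact List.Chain.cons (h0 (Nat.succ_pos m))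
      (ih (g ∘ Nat.succ) (g 0) (fun hm => hadj 0 (by omega)) (fun t ht => hadj (t+1) (by omega)))

lemma fnd_eq_of_lt (hL : 0 < 2*h-1) (j : Fin C) (b : Bool) (t : ℕ) (ht : t < 2*h-1) :
    fnd hL j b t = Sum.inr (j, ⟨t, ht⟩, b) := by
  simp only [fnd]
  congr 1
  exact Prod.ext rfl (Prod.ext (Fin.ext (Nat.mod_eq_of_lt ht)) rfl)

def pathFor (hL : 0 < 2*h-1) (j : Fin C) (i : ℕ) (s : Bool) : List (LadderNode h C) :=
  Sum.inl () :: ((List.range (i+1)).map (fun t => fnd hL j s t)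
    ++ (List.range (2*h-1-i)).map (fun t => fnd hL j (!s) (i+t)))

lemma pathFor_head (hL : 0 < 2*h-1) (j : Fin C) (i : ℕ) (s : Bool) :
    (pathFor hL j i s).head? = some (Sum.inl ()) := rfl

lemma pathFor_nodup (hL : 0 < 2*h-1) (j : Fin C) (i : ℕ) (s : Bool) (hi : i < 2*h-1) :
    (pathFor hL j i s).Nodup := by
  unfold pathFor
  rw [List.nodup_cons]
  constructor
  · intro hmem
    rw [List.mem_append] at hmem
    rcases hmem with hm | hm <;>
      (obtain ⟨t, ht, he⟩ := List.mem_map.mp hm; simp [fnd] at he)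
  · rw [List.nodup_append]
    refine ⟨?_, ?_, ?_⟩
    · refine List.Nodup.map_on ?_ List.nodup_range
      intro t1 h1 t2 h2 he
      rw [List.mem_range] at h1 h2
      rw [fnd_eq_of_lt hL j s t1 (by omega), fnd_eq_of_lt hL j s t2 (by omega)] at he
      simpa using he
    · refine List.Nodup.map_on ?_ List.nodup_range
      intro t1 h1 t2 h2 he
      rw [List.mem_range] at h1 h2
      rw [fnd_eq_of_lt hL j (!s) (i+t1) (by omega), fnd_eq_of_lt hL j (!s) (i+t2) (by omega)]
        at he
      have : i + t1 = i + t2 := by simpa using he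
      omega
    · intro a ha b hb hab
      subst hab
      obtain ⟨t1, ht1, he1⟩ := List.mem_map.mp ha
      obtain ⟨t2, ht2, he2⟩ := List.mem_map.mp hb
      rw [List.mem_range] at ht1 ht2
      rw [← he2] at he1
      rw [fnd_eq_of_lt hL j s t1 (by omega), fnd_eq_of_lt hL j (!s) (i+t2) (by omega)] at he1
      simp at he1

lemma pathFor_mem1 (hL : 0 < 2*h-1) (j : Fin C) (i : ℕ) (s : Bool)
    (tt : Fin (2*h-1)) (htt : (tt:ℕ) ≤ i) :
    Sum.inr (j, tt, s) ∈ (pathFor hL j i s).tail := by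
  show _ ∈ _ ++ _
  apply List.mem_append_left
  exact List.mem_map.mpr ⟨(tt:ℕ), List.mem_range.mpr (by omega), fnd_coe hL j s tt⟩

lemma pathFor_mem2 (hL : 0 < 2*h-1) (j : Fin C) (i : ℕ) (s : Bool)
    (tt : Fin (2*h-1)) (htt : i ≤ (tt:ℕ)) :
    Sum.inr (j, tt, !s) ∈ (pathFor hL j i s).tail := by
  show _ ∈ _ ++ _
  apply List.mem_append_right
  refine List.mem_map.mpr ⟨(tt:ℕ) - i, List.mem_range.mpr (by have := tt.isLt; omega), ?_⟩
  rw [show i + ((tt:ℕ) - i) = (tt:ℕ) from by omega]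
  exact fnd_coe hL j (!s) tt

lemma pathFor_regret (hh : 1 ≤ h) (hL : 0 < 2*h-1) (j : Fin C) (i : ℕ) (s : Bool)
    (hi : i < 2*h-1) :
    pathRegret (ladderMetric h C) (Sum.inl ()) (pathFor hL j i s) ≤ 1 := by
  have hhr : (1:ℝ) ≤ (h:ℝ) := by exact_mod_cast hh
  set c := ladderMetric h C with hc
  set f1 : ℕ → LadderNode h C := fun t => fnd hL j s t with hf1
  set f2 : ℕ → LadderNode h C := fun t => fnd hL j (!s) (i+t) with hf2
  set k := 2*h-1-i-1 with hk
  have hLi : 2*h-1-i = k+1 := by omega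
  set seg1 := (List.range (i+1)).map f1 with hseg1
  set seg2 := (List.range (k+1)).map f2 with hseg2
  have hpath : pathFor hL j i s = (Sum.inl () :: seg1) ++ seg2 := by
    unfold pathFor
    rw [hLi]
    rfl
  -- endpoints
  have hgl1 : (Sum.inl () :: seg1).getLast? = some (f1 i) := by
    rw [show ((Sum.inl () : LadderNode h C) :: seg1) = [Sum.inl ()] ++ seg1 from rfl,
      List.getLast?_append, hseg1, map_range_getLast? f1 (i+1) (by omega)]
    rfl
  have hhd2 : seg2.head? = some (f2 0) := by
    rw [hseg2]
    exact map_range_head? f2 (k+1) (by omega)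
  -- last node of the whole path
  have hlast : (pathFor hL j i s).getLastD (Sum.inl ())
      = Sum.inr (j, ⟨2*h-1-1, by omega⟩, !s) := by
    rw [hpath, show ((Sum.inl () : LadderNode h C) :: seg1) ++ seg2
      = Sum.inl () :: (seg1 ++ seg2) from rfl, List.getLastD_cons,
      List.getLastD_eq_getLast?, List.getLast?_append, hseg2,
      map_range_getLast? f2 (k+1) (by omega), Nat.add_sub_cancel]
    show fnd hL j (!s) (i + k) = _
    rw [show i + k = 2*h-1-1 from by omega]
    exact fnd_eq_of_lt hL j (!s) _ (by omega)
  have hcost : pathCost c (pathFor hL j i s)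
      = pathCost c (Sum.inl () :: seg1) + c (f1 i) (f2 0) + pathCost c seg2 := by
    rw [hpath]
    exact pathCost_append c _ _ _ _ hgl1 hhd2
  have hch1 : List.Chain (fun u v => c u v ≤ (h:ℝ)) (Sum.inl ()) seg1 := by
    rw [hseg1]
    apply chain_range
    · intro _
      show c (Sum.inl ()) (fnd hL j s 0) ≤ _
      rw [fnd_eq_of_lt hL j s 0 (by omega)]
      have := metric_root_le hh j ⟨0, by omega⟩ s
      simpa using this
    · intro t ht
      show c (fnd hL j s t) (fnd hL j s (t+1)) ≤ _
      rw [fnd_eq_of_lt hL j s t (by omega), fnd_eq_of_lt hL j s (t+1) (by omega)]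
      exact metric_step_le hh j _ _ s (Or.inl rfl)
  have hb1 := pathCost_le_of_chain c (h:ℝ) seg1 (Sum.inl ()) hch1
  have hlen1 : (seg1.length : ℝ) = (i:ℝ) + 1 := by
    rw [hseg1]
    simp
  rw [hlen1] at hb1
  have hrung : c (f1 i) (f2 0) ≤ 1 := by
    show c (fnd hL j s i) (fnd hL j (!s) (i+0)) ≤ 1
    rw [Nat.add_zero, fnd_eq_of_lt hL j s i hi, fnd_eq_of_lt hL j (!s) i hi]
    exact metric_rung_le hh j ⟨i, hi⟩ s (!s) (Ne.symm (Bool.not_ne_self s))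
  have hseg2' : seg2 = f2 0 :: (List.range k).map (fun t => f2 (t+1)) := by
    rw [hseg2, List.range_succ_eq_map, List.map_cons, List.map_map]
    rfl
  have hch2 : List.Chain (fun u v => c u v ≤ (h:ℝ)) (f2 0)
      ((List.range k).map (fun t => f2 (t+1))) := by
    apply chain_range
    · intro hk0
      show c (fnd hL j (!s) (i+0)) (fnd hL j (!s) (i+(0+1))) ≤ _
      rw [fnd_eq_of_lt hL j (!s) (i+0) (by omega), fnd_eq_of_lt hL j (!s) (i+(0+1)) (by omega)]
      exact metric_step_le hh j _ _ (!s) (Or.inl (show i+0+1 = i+(0+1) by omega))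
    · intro t ht
      show c (fnd hL j (!s) (i+(t+1))) (fnd hL j (!s) (i+(t+1+1))) ≤ _
      rw [fnd_eq_of_lt hL j (!s) (i+(t+1)) (by omega),
        fnd_eq_of_lt hL j (!s) (i+(t+1+1)) (by omega)]
      exact metric_step_le hh j _ _ (!s) (Or.inl (show i+(t+1)+1 = i+(t+1+1) by omega))
  have hb2 := pathCost_le_of_chain c (h:ℝ) ((List.range k).map (fun t => f2 (t+1))) (f2 0) hch2
  rw [← hseg2'] at hb2
  have hlen2 : (((List.range k).map (fun t => f2 (t+1))).length : ℝ) = (k:ℝ) := by simp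
  rw [hlen2] at hb2
  have hD := cor_D_ge hh j ⟨2*h-1-1, by omega⟩ (!s)
  unfold pathRegret
  rw [hlast, hcost]
  have hsum : ((i:ℝ) + 1) + (k:ℝ) = (((2*h-1-1 : ℕ) : ℝ)) + 1 := by
    exact_mod_cast (show (i+1) + k = (2*h-1-1) + 1 from by omega)
  have hmul : (((i:ℝ) + 1) + (k:ℝ)) * (h:ℝ) = ((((2*h-1-1 : ℕ) : ℝ)) + 1) * (h:ℝ) := by
    rw [hsum]
  have hD' : ((((2*h-1-1 : ℕ) : ℝ)) + 1) * (h:ℝ)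
      ≤ c (Sum.inl ()) (Sum.inr (j, (⟨2*h-1-1, by omega⟩ : Fin (2*h-1)), !s)) := hD
  linarith


lemma part_b (hh : 1 ≤ h) (n : ℕ) (Q : Fin n → List (LadderNode h C))
    (hQ : ∀ p, ((Q p).head? = some (Sum.inl ()) ∧ (Q p).Nodup) ∧
      pathRegret (ladderMetric h C) (Sum.inl ()) (Q p) < 2*(h:ℝ) - 1)
    (hcov : ∀ v : LadderNode h C, v ≠ Sum.inl () → ∃ p, v ∈ (Q p).tail) :
    2 * C ≤ n := by
  classical
  have hL : 0 < 2*h-1 := by omega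
  have hsh : ∀ p, Q p = Sum.inl () :: (Q p).tail := by
    intro p
    obtain ⟨⟨hhd, -⟩, -⟩ := hQ p
    cases hqp : Q p with
    | nil => rw [hqp] at hhd; simp at hhd
    | cons a t =>
      rw [hqp] at hhd
      simp at hhd
      subst hhd
      rfl
  have hnr : ∀ p, ∀ x ∈ (Q p).tail, x ≠ Sum.inl () := by
    intro p x hx he
    obtain ⟨⟨-, hnd⟩, -⟩ := hQ p
    rw [hsh p, List.nodup_cons] at hnd
    exact hnd.1 (he ▸ hx)
  have hreg : ∀ p,
      pathRegret (ladderMetric h C) (Sum.inl ()) (Sum.inl () :: (Q p).tail) < 2*(h:ℝ) - 1 := by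
    intro p
    rw [← hsh p]
    exact (hQ p).2
  have honecopy : ∀ p (j j' : Fin C) (i i' : Fin (2*h-1)) (b b' : Bool),
      Sum.inr (j,i,b) ∈ (Q p).tail → Sum.inr (j',i',b') ∈ (Q p).tail → j = j' := by
    intro p j j' i i' b b' h1 h2
    by_contra hne
    exact absurd (claimB hh ((Q p).tail) j j' i i' b b' h1 h2 hne (hnr p))
      (not_le.mpr (hreg p))
  set S : Fin C → Finset (Fin n) := fun j => @Finset.filter _
    (fun p => ∃ (i : Fin (2*h-1)) (b : Bool), Sum.inr (j,i,b) ∈ (Q p).tail)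
    (fun p => Classical.propDecidable _) Finset.univ with hS
  have hcard2 : ∀ j, 2 ≤ (S j).card := by
    intro j
    obtain ⟨p0, hp0⟩ := hcov (Sum.inr (j, ⟨0,hL⟩, true)) (by simp)
    have hp0S : p0 ∈ S j := by
      rw [hS]
      simp only [Finset.mem_filter]
      exact ⟨Finset.mem_univ _, ⟨_, _, hp0⟩⟩
    by_contra hlt
    push_neg at hlt
    have huniq : ∀ p ∈ S j, p = p0 := by
      intro p hp
      exact Finset.card_le_one.mp (by omega : (S j).card ≤ 1) p hp p0 hp0S
    have hcovall : ∀ (i : Fin (2*h-1)) (b : Bool), Sum.inr (j,i,b) ∈ (Q p0).tail := by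
      intro i b
      obtain ⟨p, hp⟩ := hcov (Sum.inr (j,i,b)) (by simp)
      have hpS : p ∈ S j := by
        rw [hS]
        simp only [Finset.mem_filter]
        exact ⟨Finset.mem_univ _, ⟨i, b, hp⟩⟩
      rw [← huniq p hpS]
      exact hp
    have hcopy : ∀ x ∈ (Q p0).tail,
        ∃ (i : Fin (2*h-1)) (b : Bool), x = Sum.inr (j, i, b) := by
      intro x hx
      rcases x with ⟨⟩ | ⟨j'', i, b⟩
      · exact absurd rfl (hnr p0 _ hx)
      · have := honecopy p0 j'' j i ⟨0,hL⟩ b true hx hp0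
        exact ⟨i, b, by rw [this]⟩
    exact absurd (claimC hh j ((Q p0).tail) hcopy hcovall) (not_le.mpr (hreg p0))
  have hdisj : ∀ j1 ∈ (Finset.univ : Finset (Fin C)), ∀ j2 ∈ Finset.univ,
      j1 ≠ j2 → Disjoint (S j1) (S j2) := by
    intro j1 _ j2 _ hne
    rw [Finset.disjoint_left]
    intro p hp1 hp2
    rw [hS] at hp1 hp2
    simp only [Finset.mem_filter] at hp1 hp2
    obtain ⟨-, i1, b1, h1⟩ := hp1
    obtain ⟨-, i2, b2, h2⟩ := hp2
    exact hne (honecopy p j1 j2 i1 i2 b1 b2 h1 h2)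
  calc 2 * C = ∑ _j : Fin C, 2 := by
        simp [Finset.sum_const, Finset.card_univ, mul_comm]
    _ ≤ ∑ j, (S j).card := Finset.sum_le_sum (fun j _ => hcard2 j)
    _ = (Finset.univ.biUnion S).card := (Finset.card_biUnion hdisj).symm
    _ ≤ (Finset.univ : Finset (Fin n)).card := Finset.card_le_card (Finset.subset_univ _)
    _ = n := by simp

end Ladder

lemma part_a (h cc : ℕ) (hh : 1 ≤ h) :
    ∃ (m : ℕ) (P : Fin m → List (LadderNode h (cc * h))) (x : Fin m → ℝ),
      (∀ i, IsRootedPath (Sum.inl () : LadderNode h (cc * h)) (P i) ∧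
        pathRegret (ladderMetric h (cc * h)) (Sum.inl ()) (P i) ≤ 1) ∧
      (∀ i, 0 ≤ x i) ∧
      (∀ v : LadderNode h (cc * h), v ≠ Sum.inl () →
        1 ≤ ∑ i ∈ Finset.univ.filter (fun i : Fin m => v ∈ (P i).tail), x i) ∧
      ∑ i, x i ≤ ((cc * (2 * h - 1) : ℕ) : ℝ) := by
  classical
  have hL : 0 < 2*h-1 := by omega
  have hhr : (1:ℝ) ≤ (h:ℝ) := by exact_mod_cast hh
  have h2h0 : (2*(h:ℝ)) ≠ 0 := by intro hc; nlinarith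
  set E : Fin (cc*h*((2*h-1)*2)) ≃ Fin (cc*h) × Fin ((2*h-1)*2) := finProdFinEquiv.symm with hE
  set F : Fin ((2*h-1)*2) ≃ Fin (2*h-1) × Fin 2 := finProdFinEquiv.symm with hF
  set P : Fin (cc*h*((2*h-1)*2)) → List (LadderNode h (cc*h)) :=
    fun z => pathFor hL (E z).1 (((F (E z).2).1 : ℕ)) ((F (E z).2).2.val == 1) with hPdef
  refine ⟨cc*h*((2*h-1)*2), P, fun _ => (2*(h:ℝ))⁻¹, ?_, ?_, ?_, ?_⟩
  · intro z
    exact ⟨⟨pathFor_head hL _ _ _, pathFor_nodup hL _ _ _ (Fin.is_lt _)⟩,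
      pathFor_regret hh hL _ _ _ (Fin.is_lt _)⟩
  · intro z
    positivity
  · intro v hv
    rcases v with ⟨u⟩ | ⟨j, tt, b⟩
    · cases u; exact absurd rfl hv
    set cb : Bool → Fin 2 := fun s => if s then 1 else 0 with hcb
    have hsOf : ∀ s : Bool, ((cb s).val == 1) = s := by intro s; cases s <;> rfl
    set G : Fin (2*h) → Fin (cc*h*((2*h-1)*2)) := fun kk =>
      finProdFinEquiv (j, finProdFinEquiv (
        if hlt : (kk:ℕ) < 2*h-1 - (tt:ℕ)
        then ((⟨(tt:ℕ) + kk, by have := tt.isLt; omega⟩ : Fin (2*h-1)), cb b)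
        else ((⟨(kk:ℕ) - (2*h-1 - (tt:ℕ)),
          by have := tt.isLt; have := kk.isLt; omega⟩ : Fin (2*h-1)), cb (!b)))) with hG
    have hdecG : ∀ w : Fin (2*h-1) × Fin 2,
        P (finProdFinEquiv (j, finProdFinEquiv w))
          = pathFor hL j ((w.1 : ℕ)) (w.2.val == 1) := by
      intro w
      rw [hPdef]
      simp [hE, hF]
    have hGmem : ∀ kk, Sum.inr (j, tt, b) ∈ (P (G kk)).tail := by
      intro kk
      rw [hG]
      show Sum.inr (j, tt, b) ∈ (P (finProdFinEquiv (j, finProdFinEquiv _))).tail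
      rw [hdecG]
      split_ifs with hlt
      · rw [hsOf b]
        exact pathFor_mem1 hL j _ b tt
          (show (tt:ℕ) ≤ (tt:ℕ) + (kk:ℕ) from by omega)
      · rw [hsOf (!b)]
        have := pathFor_mem2 hL j ((⟨(kk:ℕ) - (2*h-1 - (tt:ℕ)),
          by have := tt.isLt; have := kk.isLt; omega⟩ : Fin (2*h-1)) : ℕ) (!b) tt
          (show (kk:ℕ) - (2*h-1 - (tt:ℕ)) ≤ (tt:ℕ) from by
            have := tt.isLt; have := kk.isLt; omega)
        rw [Bool.not_not] at this
        exact this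
    have hGinj : Set.InjOn G ↑(Finset.univ : Finset (Fin (2*h))) := by
      intro k1 _ k2 _ he
      rw [hG] at he
      have he2 := finProdFinEquiv.injective he
      have he3 := (Prod.ext_iff.mp he2).2
      have he4 := finProdFinEquiv.injective he3
      split_ifs at he4 with hl1 hl2 hl2
      · simp only [Prod.mk.injEq, Fin.mk.injEq] at he4
        exact Fin.ext (by omega)
      · simp only [Prod.mk.injEq, Fin.mk.injEq] at he4
        rcases he4 with ⟨-, hcbeq⟩
        cases b <;> simp [hcb] at hcbeq
      · simp only [Prod.mk.injEq, Fin.mk.injEq] at he4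
        rcases he4 with ⟨-, hcbeq⟩
        cases b <;> simp [hcb] at hcbeq
      · simp only [Prod.mk.injEq, Fin.mk.injEq] at he4
        exact Fin.ext (by omega)
    have hcard := Finset.card_le_card_of_injOn
      (t := Finset.univ.filter (fun z => Sum.inr (j, tt, b) ∈ (P z).tail)) G
      (fun kk _ => Finset.mem_filter.mpr ⟨Finset.mem_univ _, hGmem kk⟩) hGinj
    simp only [Finset.card_univ, Fintype.card_fin] at hcard
    simp only [Finset.sum_const, nsmul_eq_mul]
    have hcc : (2*(h:ℝ)) ≤ ((Finset.univ.filter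
        (fun z => Sum.inr (j, tt, b) ∈ (P z).tail)).card : ℝ) := by
      have : ((2*h : ℕ) : ℝ) ≤ _ := Nat.cast_le.mpr hcard
      calc (2*(h:ℝ)) = ((2*h : ℕ) : ℝ) := by push_cast; ring
        _ ≤ _ := this
    calc (1:ℝ) = (2*(h:ℝ)) * (2*(h:ℝ))⁻¹ := (mul_inv_cancel₀ h2h0).symm
      _ ≤ _ * (2*(h:ℝ))⁻¹ := mul_le_mul_of_nonneg_right hcc (by positivity)
  · simp only [Finset.sum_const, Finset.card_univ, Fintype.card_fin, nsmul_eq_mul]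
    have hmn : cc*h*((2*h-1)*2) = (cc*(2*h-1))*(2*h) := by
      generalize 2*h-1 = L'
      ring
    have hcast : ((cc*h*((2*h-1)*2) : ℕ) : ℝ) = ((cc*(2*h-1) : ℕ) : ℝ) * (2*(h:ℝ)) := by
      rw [hmn]
      push_cast
      ring
    rw [hcast, mul_assoc, mul_inv_cancel₀ h2h0, mul_one]


end KR

open scoped Classical in
/-- for integers `h, c ≥ 1` and `k = c·(2h−1)`, the RVRP instance given by the
shortest-path metric of `c·h` disjoint copies of `L_h` sharing the root satisfies:
(a) the configuration LP (P) with regret bound `R = 1` has a feasible fractional solution of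
value at most `k`; and (b) every collection of rooted paths, each of regret strictly less than
`2h−1`, covering all non-root nodes, contains at least `k + c = 2ch` paths. -/
theorem krvrp_lp_integrality_gap (h cc : ℕ) (hh : 1 ≤ h) (hcc : 1 ≤ cc) :
    (∃ (m : ℕ) (P : Fin m → List (LadderNode h (cc * h))) (x : Fin m → ℝ),
      (∀ i, IsRootedPath (Sum.inl () : LadderNode h (cc * h)) (P i) ∧
        pathRegret (ladderMetric h (cc * h)) (Sum.inl ()) (P i) ≤ 1) ∧
      (∀ i, 0 ≤ x i) ∧
      (∀ v : LadderNode h (cc * h), v ≠ Sum.inl () →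
        1 ≤ ∑ i ∈ Finset.univ.filter (fun i : Fin m => v ∈ (P i).tail), x i) ∧
      ∑ i, x i ≤ ((cc * (2 * h - 1) : ℕ) : ℝ)) ∧
    (∀ (n : ℕ) (Q : Fin n → List (LadderNode h (cc * h))),
      (∀ j, IsRootedPath (Sum.inl () : LadderNode h (cc * h)) (Q j) ∧
        pathRegret (ladderMetric h (cc * h)) (Sum.inl ()) (Q j) < 2 * (h : ℝ) - 1) →
      (∀ v : LadderNode h (cc * h), v ≠ Sum.inl () → ∃ j, v ∈ (Q j).tail) →
      2 * cc * h ≤ n) := by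
  constructor
  · exact KR.part_a h cc hh
  · intro n Q hQ hcov
    have := KR.part_b hh n Q (fun p => ⟨⟨(hQ p).1.1, (hQ p).1.2⟩, (hQ p).2⟩) hcov
    rw [mul_assoc]
    exact this
end
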